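/- arXiv:2502.12688 — 6 statements merged into one kernel-verified Lean document; each statement's English description precedes it below -/
import Mathlib

section
/- For any integer ℓ ≥ 2 and any real α ∈ (0,1) with αℓ > 1, every finite simple graph G with minimum degree δ(G) ≥ (2ℓ − 2)/(αℓ − 1) admits, for every list assignment L assigning to each edge a list of ℓ colours, an L-colouring that is an α-majority edge colouring. -/
open Finset

namespace AMEC

open scoped Classical

variable {ε κ : Type*}

section Kernel

variable [DecidableEq ε] [DecidableEq κ] (U : Finset ε) (A B : ε → κ) (φ : ε → ℕ)

/-- `e` is a "proposal" w.r.t. rejected set `R`: it is present and `φ`-minimal in its `A`-class. -/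
def IsProp (R : Finset ε) (e : ε) : Prop :=
  e ∈ U \ R ∧ ∀ f ∈ U \ R, A f = A e → φ e ≤ φ f

/-- newly rejected elements -/
noncomputable def rejs (R : Finset ε) : Finset ε :=
  (U \ R).filter fun f =>
    IsProp U A φ R f ∧ ∃ e ∈ U \ R, IsProp U A φ R e ∧ B e = B f ∧ φ f < φ e

noncomputable def gstep (R : Finset ε) : Finset ε := R ∪ rejs U A B φ R

theorem subset_gstep (R : Finset ε) : R ⊆ gstep U A B φ R := subset_union_left

theorem gstep_subset {R : Finset ε} (h : R ⊆ U) : gstep U A B φ R ⊆ U :=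
  union_subset h ((filter_subset _ _).trans ((sdiff_subset).trans (le_refl U)))

theorem isProp_gstep {R : Finset ε} {e : ε} (he : IsProp U A φ R e)
    (hmax : ∀ f, IsProp U A φ R f → B f = B e → φ f ≤ φ e) :
    IsProp U A φ (gstep U A B φ R) e := by
  obtain ⟨heU, hemin⟩ := he
  constructor
  · rw [mem_sdiff] at heU ⊢
    refine ⟨heU.1, ?_⟩
    intro hmem
    rw [gstep, mem_union] at hmem
    rcases hmem with h | h
    · exact heU.2 h
    · rw [rejs, mem_filter] at h
      obtain ⟨-, -, g, hg, hgprop, hBg, hlt⟩ := h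
      have := hmax g hgprop hBg
      omega
  · intro f hf hAf
    refine hemin f ?_ hAf
    rw [mem_sdiff] at hf ⊢
    exact ⟨hf.1, fun h => hf.2 (mem_union_left _ h)⟩

theorem exists_isProp_gstep {R : Finset ε} {e : ε} (he : IsProp U A φ R e) :
    ∃ e', IsProp U A φ (gstep U A B φ R) e' ∧ B e' = B e ∧ φ e ≤ φ e' := by
  have heP : e ∈ (U \ R).filter fun f => IsProp U A φ R f ∧ B f = B e := by
    rw [mem_filter]; exact ⟨he.1, he, rfl⟩
  obtain ⟨m, hm, hmax⟩ := exists_max_image _ φ ⟨e, heP⟩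
  rw [mem_filter] at hm
  refine ⟨m, isProp_gstep U A B φ hm.2.1 ?_, hm.2.2, hmax e heP⟩
  intro f hf hBf
  exact hmax f (by rw [mem_filter]; exact ⟨hf.1, hf, hBf.trans hm.2.2⟩)

theorem exists_isProp_iterate {R : Finset ε} {e : ε} (he : IsProp U A φ R e) (n : ℕ) :
    ∃ e', IsProp U A φ ((gstep U A B φ)^[n] R) e' ∧ B e' = B e ∧ φ e ≤ φ e' := by
  induction n generalizing R e with
  | zero => exact ⟨e, he, rfl, le_rfl⟩
  | succ n ih =>
    obtain ⟨e', he', hB', hφ'⟩ := exists_isProp_gstep U A B φ he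
    obtain ⟨e'', he'', hB'', hφ''⟩ := ih he'
    rw [Function.iterate_succ_apply]
    exact ⟨e'', he'', hB''.trans hB', hφ'.trans hφ''⟩

theorem iterate_subset (n : ℕ) : (gstep U A B φ)^[n] ∅ ⊆ U := by
  induction n with
  | zero => simp
  | succ n ih => rw [Function.iterate_succ_apply']; exact gstep_subset U A B φ ih

theorem gstep_fixed :
    gstep U A B φ ((gstep U A B φ)^[U.card + 1] ∅) = (gstep U A B φ)^[U.card + 1] ∅ := by
  have key : ∀ n : ℕ, gstep U A B φ ((gstep U A B φ)^[n] ∅) = (gstep U A B φ)^[n] ∅ ∨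
      n ≤ ((gstep U A B φ)^[n] ∅).card := by
    intro n
    induction n with
    | zero => exact Or.inr (Nat.zero_le _)
    | succ n ih =>
      by_cases hfix : gstep U A B φ ((gstep U A B φ)^[n] ∅) = (gstep U A B φ)^[n] ∅
      · left; rw [Function.iterate_succ_apply', hfix, hfix]
      · rcases ih with h | h
        · exact absurd h hfix
        · right
          rw [Function.iterate_succ_apply']
          have h1 : (gstep U A B φ)^[n] ∅ ⊂ gstep U A B φ ((gstep U A B φ)^[n] ∅) :=
            Finset.ssubset_iff_subset_ne.mpr ⟨subset_gstep _ _ _ _ _, Ne.symm hfix⟩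
          have := Finset.card_lt_card h1
          omega
  rcases key (U.card + 1) with h | h
  · exact h
  · have := Finset.card_le_card (iterate_subset U A B φ (U.card + 1))
    omega

theorem cause_of_mem {n : ℕ} {f : ε} (hf : f ∈ (gstep U A B φ)^[n] ∅) :
    ∃ m < n, f ∈ rejs U A B φ ((gstep U A B φ)^[m] ∅) := by
  induction n with
  | zero => simp at hf
  | succ n ih =>
    rw [Function.iterate_succ_apply', gstep, mem_union] at hf
    rcases hf with h | h
    · obtain ⟨m, hm, h⟩ := ih h; exact ⟨m, by omega, h⟩
    · exact ⟨n, by omega, h⟩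

theorem exists_kernel
    (hA : ∀ e ∈ U, ∀ f ∈ U, A e = A f → φ e = φ f → e = f)
    (hB : ∀ e ∈ U, ∀ f ∈ U, B e = B f → φ e = φ f → e = f) :
    ∃ K ⊆ U,
      (∀ e ∈ K, ∀ f ∈ K, e ≠ f → A e ≠ A f ∧ B e ≠ B f) ∧
      (∀ f ∈ U, f ∉ K → ∃ e ∈ K, (A e = A f ∧ φ e < φ f) ∨ (B e = B f ∧ φ f < φ e)) := by
  set R := (gstep U A B φ)^[U.card + 1] ∅ with hR
  have hfix : gstep U A B φ R = R := gstep_fixed U A B φ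
  have hRU : R ⊆ U := iterate_subset U A B φ _
  set K := U.filter (fun e => IsProp U A φ R e) with hK
  have hKmem : ∀ {e}, e ∈ K ↔ IsProp U A φ R e := by
    intro e
    rw [hK, mem_filter]
    exact ⟨fun h => h.2, fun h => ⟨(mem_sdiff.mp h.1).1, h⟩⟩
  have hnorej : ∀ {f}, f ∉ rejs U A B φ R := by
    intro f hf
    have h1 : f ∈ gstep U A B φ R := mem_union_right _ hf
    rw [hfix] at h1
    have h2 := (mem_sdiff.mp (mem_filter.mp hf).1).2
    exact h2 h1
  refine ⟨K, filter_subset _ _, ?_, ?_⟩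
  · intro e he f hfK hne
    rw [hKmem] at he hfK
    constructor
    · intro hAeq
      have h1 := he.2 f hfK.1 hAeq.symm
      have h2 := hfK.2 e he.1 hAeq
      exact hne (hA e (mem_sdiff.mp he.1).1 f (mem_sdiff.mp hfK.1).1 hAeq (le_antisymm h1 h2))
    · intro hBeq
      have hφne : φ e ≠ φ f := fun h =>
        hne (hB e (mem_sdiff.mp he.1).1 f (mem_sdiff.mp hfK.1).1 hBeq h)
      rcases lt_or_gt_of_ne hφne with hlt | hlt
      · refine hnorej (f := e) ?_
        rw [rejs, mem_filter]
        exact ⟨he.1, he, f, hfK.1, hfK, hBeq.symm, hlt⟩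
      · refine hnorej (f := f) ?_
        rw [rejs, mem_filter]
        exact ⟨hfK.1, hfK, e, he.1, he, hBeq, hlt⟩
  · intro f hfU hfK
    by_cases hfR : f ∈ R
    · obtain ⟨m, hm, hrej⟩ := cause_of_mem U A B φ hfR
      rw [rejs, mem_filter] at hrej
      obtain ⟨-, -, g, hg, hgprop, hBg, hlt⟩ := hrej
      have hpersist := exists_isProp_iterate U A B φ hgprop (U.card + 1 - m)
      rw [← Function.iterate_add_apply] at hpersist
      have hsum : U.card + 1 - m + m = U.card + 1 := by omega
      rw [hsum] at hpersist
      obtain ⟨e', hprop', hB', hφ'⟩ := hpersist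
      exact ⟨e', hKmem.mpr hprop', Or.inr ⟨hB'.trans hBg, lt_of_lt_of_le hlt hφ'⟩⟩
    · have hfQ : f ∈ (U \ R).filter (fun g => A g = A f) := by
        rw [mem_filter, mem_sdiff]; exact ⟨⟨hfU, hfR⟩, rfl⟩
      obtain ⟨g, hgQ, hgmin⟩ := exists_min_image _ φ ⟨f, hfQ⟩
      rw [mem_filter] at hgQ
      have hgprop : IsProp U A φ R g :=
        ⟨hgQ.1, fun h hh hAh => hgmin h (by rw [mem_filter]; exact ⟨hh, hAh.trans hgQ.2⟩)⟩
      have hgK : g ∈ K := hKmem.mpr hgprop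
      have hgf : g ≠ f := fun h => hfK (h ▸ hgK)
      have hle : φ g ≤ φ f := hgmin f hfQ
      have hneφ : φ g ≠ φ f := fun h =>
        hgf (hA g (mem_sdiff.mp hgQ.1).1 f hfU hgQ.2 h)
      exact ⟨g, hgK, Or.inl ⟨hgQ.2, lt_of_le_of_ne hle hneφ⟩⟩

end Kernel


section Galvin

variable [DecidableEq ε] [DecidableEq κ] {C : Type*} [Nonempty C]

theorem galvin (A B : ε → κ) (φ : ε → ℕ) (n : ℕ) :
    ∀ (s : Finset ε) (L : ε → Finset C),
      (∀ e ∈ s, ∀ f ∈ s, A e = A f → φ e = φ f → e = f) →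
      (∀ e ∈ s, ∀ f ∈ s, B e = B f → φ e = φ f → e = f) →
      (∀ e ∈ s, (s.filter (fun f => f ≠ e ∧ A f = A e ∧ φ f < φ e)).card
              + (s.filter (fun f => f ≠ e ∧ B f = B e ∧ φ e < φ f)).card < (L e).card) →
      (∑ e ∈ s, (L e).card ≤ n) →
      ∃ ω : ε → C, (∀ e ∈ s, ω e ∈ L e) ∧
        (∀ e ∈ s, ∀ f ∈ s, e ≠ f → A e = A f → ω e ≠ ω f) ∧
        (∀ e ∈ s, ∀ f ∈ s, e ≠ f → B e = B f → ω e ≠ ω f) := by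
  induction n using Nat.strong_induction_on with
  | _ n IH =>
  intro s L hφA hφB hinv hsum
  rcases s.eq_empty_or_nonempty with rfl | ⟨e₀, he₀⟩
  · exact ⟨fun _ => Classical.arbitrary C, by simp, by simp, by simp⟩
  have hLpos : 0 < (L e₀).card := lt_of_le_of_lt (Nat.zero_le _) (hinv e₀ he₀)
  obtain ⟨c, hc⟩ := Finset.card_pos.mp hLpos
  set U := s.filter (fun e => c ∈ L e) with hU
  have hUs : U ⊆ s := filter_subset _ _
  obtain ⟨K, hKU, hKmatch, hdom⟩ := exists_kernel U A B φ
      (fun e he f hf => hφA e (hUs he) f (hUs hf))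
      (fun e he f hf => hφB e (hUs he) f (hUs hf))
  have hKs : K ⊆ s := hKU.trans hUs
  have hcK : ∀ {e}, e ∈ K → c ∈ L e := fun he => (mem_filter.mp (hKU he)).2
  have hKne : K.Nonempty := by
    have he₀U : e₀ ∈ U := mem_filter.mpr ⟨he₀, hc⟩
    by_cases h : e₀ ∈ K
    · exact ⟨e₀, h⟩
    · obtain ⟨e, heK, -⟩ := hdom e₀ he₀U h
      exact ⟨e, heK⟩
  set s' := s \ K with hs'
  set L' := fun e => if c ∈ L e then (L e).erase c else L e with hL'
  have hs's : s' ⊆ s := sdiff_subset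
  -- invariant for the recursive call
  have hinv' : ∀ e ∈ s',
      (s'.filter (fun f => f ≠ e ∧ A f = A e ∧ φ f < φ e)).card
    + (s'.filter (fun f => f ≠ e ∧ B f = B e ∧ φ e < φ f)).card < (L' e).card := by
    intro e he'
    have he : e ∈ s := hs's he'
    have heK : e ∉ K := (mem_sdiff.mp he').2
    have h2A : (s'.filter (fun f => f ≠ e ∧ A f = A e ∧ φ f < φ e)).card
        ≤ (s.filter (fun f => f ≠ e ∧ A f = A e ∧ φ f < φ e)).card :=
      card_le_card (filter_subset_filter _ hs's)
    have h2B : (s'.filter (fun f => f ≠ e ∧ B f = B e ∧ φ e < φ f)).card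
        ≤ (s.filter (fun f => f ≠ e ∧ B f = B e ∧ φ e < φ f)).card :=
      card_le_card (filter_subset_filter _ hs's)
    have h3 := hinv e he
    by_cases hcL : c ∈ L e
    · have heU : e ∈ U := mem_filter.mpr ⟨he, hcL⟩
      obtain ⟨g, hgK, hcase⟩ := hdom e heU heK
      have hgs : g ∈ s := hKs hgK
      have hgne : g ≠ e := by rintro rfl; exact heK hgK
      have hL'e : (L' e).card = (L e).card - 1 := by
        simp only [hL', if_pos hcL, card_erase_of_mem hcL]
      have hLe1 : 1 ≤ (L e).card := card_pos.mpr ⟨c, hcL⟩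
      rcases hcase with ⟨hAg, hφg⟩ | ⟨hBg, hφg⟩
      · have hgFA : g ∈ s.filter (fun f => f ≠ e ∧ A f = A e ∧ φ f < φ e) :=
          mem_filter.mpr ⟨hgs, hgne, hAg, hφg⟩
        have hsubA' : s'.filter (fun f => f ≠ e ∧ A f = A e ∧ φ f < φ e)
            ⊆ (s.filter (fun f => f ≠ e ∧ A f = A e ∧ φ f < φ e)).erase g := by
          intro x hx
          rw [mem_erase]
          refine ⟨?_, filter_subset_filter _ hs's hx⟩
          rintro rfl
          exact (mem_sdiff.mp (mem_filter.mp hx).1).2 hgK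
        have h1 : (s'.filter (fun f => f ≠ e ∧ A f = A e ∧ φ f < φ e)).card
            ≤ (s.filter (fun f => f ≠ e ∧ A f = A e ∧ φ f < φ e)).card - 1 := by
          have := card_le_card hsubA'
          rwa [card_erase_of_mem hgFA] at this
        have h4 : 1 ≤ (s.filter (fun f => f ≠ e ∧ A f = A e ∧ φ f < φ e)).card :=
          card_pos.mpr ⟨g, hgFA⟩
        omega
      · have hgFB : g ∈ s.filter (fun f => f ≠ e ∧ B f = B e ∧ φ e < φ f) :=
          mem_filter.mpr ⟨hgs, hgne, hBg, hφg⟩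
        have hsubB' : s'.filter (fun f => f ≠ e ∧ B f = B e ∧ φ e < φ f)
            ⊆ (s.filter (fun f => f ≠ e ∧ B f = B e ∧ φ e < φ f)).erase g := by
          intro x hx
          rw [mem_erase]
          refine ⟨?_, filter_subset_filter _ hs's hx⟩
          rintro rfl
          exact (mem_sdiff.mp (mem_filter.mp hx).1).2 hgK
        have h1 : (s'.filter (fun f => f ≠ e ∧ B f = B e ∧ φ e < φ f)).card
            ≤ (s.filter (fun f => f ≠ e ∧ B f = B e ∧ φ e < φ f)).card - 1 := by
          have := card_le_card hsubB'
          rwa [card_erase_of_mem hgFB] at this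
        have h4 : 1 ≤ (s.filter (fun f => f ≠ e ∧ B f = B e ∧ φ e < φ f)).card :=
          card_pos.mpr ⟨g, hgFB⟩
        omega
    · have hL'e : L' e = L e := by simp only [hL', if_neg hcL]
      rw [hL'e]
      omega
  -- measure decreases
  have hmeas : ∑ e ∈ s', (L' e).card < n := by
    have hsum1 : ∑ e ∈ s', (L' e).card ≤ ∑ e ∈ s', (L e).card := by
      refine sum_le_sum fun e _ => ?_
      by_cases hcL : c ∈ L e
      · simp only [hL', if_pos hcL]
        exact card_erase_le
      · simp only [hL', if_neg hcL]
        exact le_rfl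
    have hsplit : ∑ e ∈ s', (L e).card + ∑ e ∈ K, (L e).card = ∑ e ∈ s, (L e).card :=
      Finset.sum_sdiff hKs
    have hKpos : 0 < ∑ e ∈ K, (L e).card := by
      obtain ⟨k, hk⟩ := hKne
      have h1 : 1 ≤ (L k).card := card_pos.mpr ⟨c, hcK hk⟩
      calc 0 < (L k).card := h1
        _ ≤ ∑ e ∈ K, (L e).card := single_le_sum (f := fun e => (L e).card) (fun _ _ => Nat.zero_le _) hk
    omega
  obtain ⟨ω', hmem', hA', hB'⟩ := IH _ hmeas s' L'
    (fun e he f hf => hφA e (hs's he) f (hs's hf))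
    (fun e he f hf => hφB e (hs's he) f (hs's hf))
    hinv' le_rfl
  refine ⟨fun e => if e ∈ K then c else ω' e, ?_, ?_, ?_⟩
  · intro e he
    by_cases h : e ∈ K
    · simp only [if_pos h]
      exact hcK h
    · simp only [if_neg h]
      have he' : e ∈ s' := mem_sdiff.mpr ⟨he, h⟩
      have := hmem' e he'
      by_cases hcL : c ∈ L e
      · simp only [hL', if_pos hcL] at this
        exact (erase_subset _ _) this
      · simpa only [hL', if_neg hcL] using this
  · intro e he f hf hne hAeq
    by_cases heK : e ∈ K <;> by_cases hfK : f ∈ K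
    · exact absurd hAeq ((hKmatch e heK f hfK hne).1)
    · simp only [if_pos heK, if_neg hfK]
      have hf' : f ∈ s' := mem_sdiff.mpr ⟨hf, hfK⟩
      have hmf := hmem' f hf'
      intro hEq
      by_cases hcL : c ∈ L f
      · simp only [hL', if_pos hcL] at hmf
        exact (notMem_erase c (L f)) (hEq ▸ hmf)
      · simp only [hL', if_neg hcL] at hmf
        exact hcL (hEq ▸ hmf)
    · simp only [if_neg heK, if_pos hfK]
      have he' : e ∈ s' := mem_sdiff.mpr ⟨he, heK⟩
      have hme := hmem' e he'
      intro hEq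
      by_cases hcL : c ∈ L e
      · simp only [hL', if_pos hcL] at hme
        exact (notMem_erase c (L e)) (hEq ▸ hme)
      · simp only [hL', if_neg hcL] at hme
        exact hcL (hEq ▸ hme)
    · simp only [if_neg heK, if_neg hfK]
      exact hA' e (mem_sdiff.mpr ⟨he, heK⟩) f (mem_sdiff.mpr ⟨hf, hfK⟩) hne hAeq
  · intro e he f hf hne hBeq
    by_cases heK : e ∈ K <;> by_cases hfK : f ∈ K
    · exact absurd hBeq ((hKmatch e heK f hfK hne).2)
    · simp only [if_pos heK, if_neg hfK]
      have hf' : f ∈ s' := mem_sdiff.mpr ⟨hf, hfK⟩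
      have hmf := hmem' f hf'
      intro hEq
      by_cases hcL : c ∈ L f
      · simp only [hL', if_pos hcL] at hmf
        exact (notMem_erase c (L f)) (hEq ▸ hmf)
      · simp only [hL', if_neg hcL] at hmf
        exact hcL (hEq ▸ hmf)
    · simp only [if_neg heK, if_pos hfK]
      have he' : e ∈ s' := mem_sdiff.mpr ⟨he, heK⟩
      have hme := hmem' e he'
      intro hEq
      by_cases hcL : c ∈ L e
      · simp only [hL', if_pos hcL] at hme
        exact (notMem_erase c (L e)) (hEq ▸ hme)
      · simp only [hL', if_neg hcL] at hme
        exact hcL (hEq ▸ hme)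
    · simp only [if_neg heK, if_neg hfK]
      exact hB' e (mem_sdiff.mpr ⟨he, heK⟩) f (mem_sdiff.mpr ⟨hf, hfK⟩) hne hBeq

end Galvin

section Konig

def mdegA (T : Finset (ℕ×ℕ×ℕ)) (a : ℕ) : ℕ := (T.filter (fun e => e.1 = a)).card
def mdegB (T : Finset (ℕ×ℕ×ℕ)) (b : ℕ) : ℕ := (T.filter (fun e => e.2.1 = b)).card

theorem sumA (N : ℕ) (T : Finset (ℕ×ℕ×ℕ)) (h : ∀ e ∈ T, e.1 < N) :
    ∑ a ∈ range N, mdegA T a = T.card :=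
  (Finset.card_eq_sum_card_fiberwise (f := fun e => e.1)
    (fun e he => mem_range.mpr (h e he))).symm

theorem sumB (N : ℕ) (T : Finset (ℕ×ℕ×ℕ)) (h : ∀ e ∈ T, e.2.1 < N) :
    ∑ b ∈ range N, mdegB T b = T.card :=
  (Finset.card_eq_sum_card_fiberwise (f := fun e => e.2.1)
    (fun e he => mem_range.mpr (h e he))).symm

theorem pad (N k : ℕ) :
    ∀ (d : ℕ) (T : Finset (ℕ×ℕ×ℕ)), (∀ e ∈ T, e.1 < N ∧ e.2.1 < N) →
      (∀ a, mdegA T a ≤ k) → (∀ b, mdegB T b ≤ k) → k * N = T.card + d →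
      ∃ T', T ⊆ T' ∧ (∀ e ∈ T', e.1 < N ∧ e.2.1 < N) ∧
        (∀ a < N, mdegA T' a = k) ∧ (∀ b < N, mdegB T' b = k) := by
  intro d
  induction d with
  | zero =>
    intro T hco hA hB hcard
    refine ⟨T, Subset.rfl, hco, ?_, ?_⟩
    · intro a ha
      by_contra hne
      have hlt : mdegA T a < k := lt_of_le_of_ne (hA a) hne
      have hsum : ∑ x ∈ range N, mdegA T x < ∑ _x ∈ range N, k :=
        Finset.sum_lt_sum (fun i _ => hA i) ⟨a, mem_range.mpr ha, hlt⟩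
      rw [sumA N T (fun e he => (hco e he).1), sum_const, card_range, smul_eq_mul] at hsum
      have : N * k = k * N := Nat.mul_comm _ _
      omega
    · intro b hb
      by_contra hne
      have hlt : mdegB T b < k := lt_of_le_of_ne (hB b) hne
      have hsum : ∑ x ∈ range N, mdegB T x < ∑ _x ∈ range N, k :=
        Finset.sum_lt_sum (fun i _ => hB i) ⟨b, mem_range.mpr hb, hlt⟩
      rw [sumB N T (fun e he => (hco e he).2), sum_const, card_range, smul_eq_mul] at hsum
      have : N * k = k * N := Nat.mul_comm _ _
      omega
  | succ d ih =>
    intro T hco hA hB hcard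
    have hexA : ∃ a < N, mdegA T a < k := by
      by_contra h
      push_neg at h
      have heq : ∑ a ∈ range N, mdegA T a = ∑ _a ∈ range N, k :=
        le_antisymm (sum_le_sum fun i _ => hA i) (sum_le_sum fun i hi => h i (mem_range.mp hi))
      rw [sumA N T (fun e he => (hco e he).1), sum_const, card_range, smul_eq_mul] at heq
      have : N * k = k * N := Nat.mul_comm _ _
      omega
    have hexB : ∃ b < N, mdegB T b < k := by
      by_contra h
      push_neg at h
      have heq : ∑ b ∈ range N, mdegB T b = ∑ _b ∈ range N, k :=
        le_antisymm (sum_le_sum fun i _ => hB i) (sum_le_sum fun i hi => h i (mem_range.mp hi))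
      rw [sumB N T (fun e he => (hco e he).2), sum_const, card_range, smul_eq_mul] at heq
      have : N * k = k * N := Nat.mul_comm _ _
      omega
    obtain ⟨a, haN, haD⟩ := hexA
    obtain ⟨b, hbN, hbD⟩ := hexB
    obtain ⟨i, hi⟩ := Infinite.exists_notMem_finset
      ((T.filter (fun e => e.1 = a ∧ e.2.1 = b)).image (fun e => e.2.2))
    have hnotmem : (a, b, i) ∉ T := by
      intro h
      exact hi (mem_image.mpr ⟨(a,b,i), mem_filter.mpr ⟨h, rfl, rfl⟩, rfl⟩)
    have hco' : ∀ e ∈ insert (a,b,i) T, e.1 < N ∧ e.2.1 < N := by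
      intro e he
      rcases mem_insert.mp he with rfl | he
      · exact ⟨haN, hbN⟩
      · exact hco e he
    have hA' : ∀ x, mdegA (insert (a,b,i) T) x ≤ k := by
      intro x
      unfold mdegA
      rw [filter_insert]
      by_cases hx : (a, b, i).1 = x
      · rw [if_pos hx, card_insert_of_notMem (fun h => hnotmem (mem_filter.mp h).1)]
        have h2 : mdegA T x < k := by
          simp only at hx
          exact hx ▸ haD
        unfold mdegA at h2
        omega
      · rw [if_neg hx]
        exact hA x
    have hB' : ∀ x, mdegB (insert (a,b,i) T) x ≤ k := by
      intro x
      unfold mdegB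
      rw [filter_insert]
      by_cases hx : (a, b, i).2.1 = x
      · rw [if_pos hx, card_insert_of_notMem (fun h => hnotmem (mem_filter.mp h).1)]
        have h2 : mdegB T x < k := by
          simp only at hx
          exact hx ▸ hbD
        unfold mdegB at h2
        omega
      · rw [if_neg hx]
        exact hB x
    have hcard' : k * N = (insert (a,b,i) T).card + d := by
      rw [card_insert_of_notMem hnotmem]
      omega
    obtain ⟨T', hsub, h1, h2, h3⟩ := ih (insert (a,b,i) T) hco' hA' hB' hcard'
    exact ⟨T', (subset_insert _ _).trans hsub, h1, h2, h3⟩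

theorem reg (N : ℕ) : ∀ (k : ℕ) (T : Finset (ℕ×ℕ×ℕ)), (∀ e ∈ T, e.1 < N ∧ e.2.1 < N) →
    (∀ a < N, mdegA T a = k) → (∀ b < N, mdegB T b = k) →
    ∃ φ : ℕ×ℕ×ℕ → ℕ, (∀ e ∈ T, φ e < k) ∧
      (∀ e ∈ T, ∀ f ∈ T, e ≠ f → e.1 = f.1 → φ e ≠ φ f) ∧
      (∀ e ∈ T, ∀ f ∈ T, e ≠ f → e.2.1 = f.2.1 → φ e ≠ φ f) := by
  intro k
  induction k with
  | zero =>
    intro T hco hA _hB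
    have hT : T = ∅ := by
      rw [eq_empty_iff_forall_notMem]
      intro e he
      have h1 : 0 < mdegA T e.1 := card_pos.mpr ⟨e, mem_filter.mpr ⟨he, rfl⟩⟩
      rw [hA e.1 (hco e he).1] at h1
      omega
    subst hT
    exact ⟨fun _ => 0, by simp, by simp, by simp⟩
  | succ k ih =>
    intro T hco hA hB
    set t : Fin N → Finset ℕ :=
      fun a => (T.filter (fun e => e.1 = (a:ℕ))).image (fun e => e.2.1) with ht
    have hall : ∀ S : Finset (Fin N), S.card ≤ (S.biUnion t).card := by
      intro S
      set SV := S.image (fun a : Fin N => (a : ℕ)) with hSV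
      have hSVcard : SV.card = S.card := card_image_of_injective _ Fin.val_injective
      set ES := T.filter (fun e => e.1 ∈ SV) with hES
      have hEScard : ES.card = S.card * (k+1) := by
        have h1 : ES.card = ∑ a ∈ SV, (ES.filter (fun e => e.1 = a)).card :=
          Finset.card_eq_sum_card_fiberwise (fun e he => (mem_filter.mp he).2)
        have h2 : ∀ a ∈ SV, (ES.filter (fun e => e.1 = a)).card = k+1 := by
          intro a haSV
          have haN : a < N := by
            obtain ⟨x, -, rfl⟩ := mem_image.mp haSV
            exact x.isLt
          have hEq : ES.filter (fun e => e.1 = a) = T.filter (fun e => e.1 = a) := by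
            ext e
            simp only [hES, mem_filter, and_assoc]
            constructor
            · rintro ⟨he, -, h⟩; exact ⟨he, h⟩
            · rintro ⟨he, h⟩; exact ⟨he, h ▸ haSV, h⟩
          rw [hEq]
          exact hA a haN
        rw [h1, sum_congr rfl h2, sum_const, smul_eq_mul, hSVcard]
      have hsub : ES ⊆ T.filter (fun e => e.2.1 ∈ S.biUnion t) := by
        intro e he
        rw [hES, mem_filter] at he
        obtain ⟨heT, heS⟩ := he
        obtain ⟨x, hxS, hxval⟩ := mem_image.mp heS
        rw [mem_filter]
        refine ⟨heT, mem_biUnion.mpr ⟨x, hxS, ?_⟩⟩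
        exact mem_image.mpr ⟨e, mem_filter.mpr ⟨heT, hxval.symm⟩, rfl⟩
      have hEBcard : (T.filter (fun e => e.2.1 ∈ S.biUnion t)).card
          = (S.biUnion t).card * (k+1) := by
        have h1 : (T.filter (fun e => e.2.1 ∈ S.biUnion t)).card
            = ∑ b ∈ S.biUnion t,
              ((T.filter (fun e => e.2.1 ∈ S.biUnion t)).filter (fun e => e.2.1 = b)).card :=
          Finset.card_eq_sum_card_fiberwise (fun e he => (mem_filter.mp he).2)
        have h2 : ∀ b ∈ S.biUnion t,
            ((T.filter (fun e => e.2.1 ∈ S.biUnion t)).filter (fun e => e.2.1 = b)).card = k+1 := by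
          intro b hb
          have hbN : b < N := by
            obtain ⟨x, -, hx⟩ := mem_biUnion.mp hb
            obtain ⟨e, heT, he2⟩ := mem_image.mp hx
            exact he2 ▸ (hco e (mem_filter.mp heT).1).2
          have hEq : (T.filter (fun e => e.2.1 ∈ S.biUnion t)).filter (fun e => e.2.1 = b)
              = T.filter (fun e => e.2.1 = b) := by
            ext e
            simp only [mem_filter, and_assoc]
            constructor
            · rintro ⟨he, -, h⟩; exact ⟨he, h⟩
            · rintro ⟨he, h⟩; exact ⟨he, h ▸ hb, h⟩
          rw [hEq]
          exact hB b hbN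
        rw [h1, sum_congr rfl h2, sum_const, smul_eq_mul]
      have hchain : S.card * (k+1) ≤ (S.biUnion t).card * (k+1) := by
        calc S.card * (k+1) = ES.card := hEScard.symm
          _ ≤ (T.filter (fun e => e.2.1 ∈ S.biUnion t)).card := card_le_card hsub
          _ = (S.biUnion t).card * (k+1) := hEBcard
      exact Nat.le_of_mul_le_mul_right hchain (Nat.succ_pos k)
    obtain ⟨fM, hfinj, hfmem⟩ := (Finset.all_card_le_biUnion_card_iff_exists_injective t).mp hall
    have hchoice : ∀ a : Fin N, ∃ e, e ∈ T ∧ e.1 = (a:ℕ) ∧ e.2.1 = fM a := by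
      intro a
      have hm := hfmem a
      obtain ⟨e, heT, he2⟩ := mem_image.mp hm
      exact ⟨e, (mem_filter.mp heT).1, (mem_filter.mp heT).2, he2⟩
    choose g hgT hg1 hg2 using hchoice
    set F := Finset.image g univ with hF
    have hginj : Function.Injective g := by
      intro x y h
      have hx := hg1 x
      rw [h, hg1 y] at hx
      exact Fin.val_injective hx.symm
    have hFT : F ⊆ T := by
      intro x hx
      obtain ⟨a, -, rfl⟩ := mem_image.mp hx
      exact hgT a
    have hmemF : ∀ {x}, x ∈ F ↔ ∃ a : Fin N, g a = x := by
      intro x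
      rw [hF]
      constructor
      · intro h; obtain ⟨a, -, ha⟩ := mem_image.mp h; exact ⟨a, ha⟩
      · rintro ⟨a, rfl⟩; exact mem_image.mpr ⟨a, mem_univ a, rfl⟩
    have hfvalN : ∀ a : Fin N, fM a < N := by
      intro a
      have := hg2 a
      rw [← this]
      exact (hco (g a) (hgT a)).2
    have hfsurj : ∀ b < N, ∃ a : Fin N, fM a = b := by
      have h1 : (univ.image fM) ⊆ range N := by
        intro b hb
        obtain ⟨a, -, rfl⟩ := mem_image.mp hb
        exact mem_range.mpr (hfvalN a)
      have h2 : (univ.image fM).card = N := by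
        rw [card_image_of_injective _ hfinj, card_univ, Fintype.card_fin]
      have h3 : univ.image fM = range N :=
        eq_of_subset_of_card_le h1 (by rw [h2, card_range])
      intro b hb
      have : b ∈ univ.image fM := h3 ▸ mem_range.mpr hb
      obtain ⟨a, -, ha⟩ := mem_image.mp this
      exact ⟨a, ha⟩
    have hFA : ∀ a : Fin N, F.filter (fun e => e.1 = (a:ℕ)) = {g a} := by
      intro a
      ext x
      rw [mem_filter, mem_singleton]
      constructor
      · rintro ⟨hxF, hx1⟩
        obtain ⟨y, rfl⟩ := hmemF.mp hxF
        have : (y : ℕ) = (a : ℕ) := by rw [← hg1 y, hx1]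
        rw [Fin.val_injective this]
      · rintro rfl
        exact ⟨hmemF.mpr ⟨a, rfl⟩, hg1 a⟩
    have hFB : ∀ a : Fin N, F.filter (fun e => e.2.1 = fM a) = {g a} := by
      intro a
      ext x
      rw [mem_filter, mem_singleton]
      constructor
      · rintro ⟨hxF, hx1⟩
        obtain ⟨y, rfl⟩ := hmemF.mp hxF
        have : fM y = fM a := by rw [← hg2 y, hx1]
        rw [hfinj this]
      · rintro rfl
        exact ⟨hmemF.mpr ⟨a, rfl⟩, hg2 a⟩
    set T' := T \ F with hT'
    have hT'co : ∀ e ∈ T', e.1 < N ∧ e.2.1 < N := fun e he => hco e (mem_sdiff.mp he).1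
    have hsplitA : ∀ a : ℕ, T'.filter (fun e => e.1 = a)
        = T.filter (fun e => e.1 = a) \ F.filter (fun e => e.1 = a) := by
      intro a
      ext x
      simp only [hT', mem_sdiff, mem_filter]
      tauto
    have hsplitB : ∀ b : ℕ, T'.filter (fun e => e.2.1 = b)
        = T.filter (fun e => e.2.1 = b) \ F.filter (fun e => e.2.1 = b) := by
      intro b
      ext x
      simp only [hT', mem_sdiff, mem_filter]
      tauto
    have hdA' : ∀ a < N, mdegA T' a = k := by
      intro a ha
      unfold mdegA
      rw [hsplitA, card_sdiff_of_subset (filter_subset_filter _ hFT), hFA ⟨a, ha⟩]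
      have := hA a ha
      unfold mdegA at this
      rw [this, card_singleton]
      omega
    have hdB' : ∀ b < N, mdegB T' b = k := by
      intro b hb
      obtain ⟨a, rfl⟩ := hfsurj b hb
      unfold mdegB
      rw [hsplitB, card_sdiff_of_subset (filter_subset_filter _ hFT), hFB a]
      have := hB (fM a) hb
      unfold mdegB at this
      rw [this, card_singleton]
      omega
    obtain ⟨φ', hv, hpa, hpb⟩ := ih T' hT'co hdA' hdB'
    refine ⟨fun e => if e ∈ F then k else φ' e, ?_, ?_, ?_⟩
    · intro e he
      by_cases h : e ∈ F
      · simp only [if_pos h]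
        omega
      · simp only [if_neg h]
        exact Nat.lt_succ_of_lt (hv e (mem_sdiff.mpr ⟨he, h⟩))
    · intro e he f hf hne heq
      by_cases heF : e ∈ F <;> by_cases hfF : f ∈ F
      · exfalso
        obtain ⟨x, rfl⟩ := hmemF.mp heF
        obtain ⟨y, rfl⟩ := hmemF.mp hfF
        have : (x : ℕ) = (y : ℕ) := by rw [← hg1 x, ← hg1 y, heq]
        exact hne (congrArg g (Fin.val_injective this))
      · simp only [if_pos heF, if_neg hfF]
        exact (Nat.ne_of_lt (hv f (mem_sdiff.mpr ⟨hf, hfF⟩))).symm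
      · simp only [if_neg heF, if_pos hfF]
        exact Nat.ne_of_lt (hv e (mem_sdiff.mpr ⟨he, heF⟩))
      · simp only [if_neg heF, if_neg hfF]
        exact hpa e (mem_sdiff.mpr ⟨he, heF⟩) f (mem_sdiff.mpr ⟨hf, hfF⟩) hne heq
    · intro e he f hf hne heq
      by_cases heF : e ∈ F <;> by_cases hfF : f ∈ F
      · exfalso
        obtain ⟨x, rfl⟩ := hmemF.mp heF
        obtain ⟨y, rfl⟩ := hmemF.mp hfF
        have : fM x = fM y := by rw [← hg2 x, ← hg2 y, heq]
        exact hne (congrArg g (hfinj this))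
      · simp only [if_pos heF, if_neg hfF]
        exact (Nat.ne_of_lt (hv f (mem_sdiff.mpr ⟨hf, hfF⟩))).symm
      · simp only [if_neg heF, if_pos hfF]
        exact Nat.ne_of_lt (hv e (mem_sdiff.mpr ⟨he, heF⟩))
      · simp only [if_neg heF, if_neg hfF]
        exact hpb e (mem_sdiff.mpr ⟨he, heF⟩) f (mem_sdiff.mpr ⟨hf, hfF⟩) hne heq

end Konig

section KonigAbstract

variable [DecidableEq ε] [DecidableEq κ]

theorem konig_abstract (s : Finset ε) (A B : ε → κ) (ℓ : ℕ)
    (hA : ∀ e ∈ s, (s.filter (fun f => A f = A e)).card ≤ ℓ)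
    (hB : ∀ e ∈ s, (s.filter (fun f => B f = B e)).card ≤ ℓ)
    (hsimple : ∀ e ∈ s, ∀ f ∈ s, A e = A f → B e = B f → e = f) :
    ∃ φ : ε → ℕ, (∀ e ∈ s, φ e < ℓ) ∧
      (∀ e ∈ s, ∀ f ∈ s, e ≠ f → A e = A f → φ e ≠ φ f) ∧
      (∀ e ∈ s, ∀ f ∈ s, e ≠ f → B e = B f → φ e ≠ φ f) := by
  rcases s.eq_empty_or_nonempty with rfl | ⟨e₁, he₁⟩
  · exact ⟨fun _ => 0, by simp, by simp, by simp⟩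
  have h00 : 0 < (s.filter (fun f => A f = A e₁)).card :=
    card_pos.mpr ⟨e₁, mem_filter.mpr ⟨he₁, rfl⟩⟩
  have hℓpos : 0 < ℓ := lt_of_lt_of_le h00 (hA e₁ he₁)
  set N := s.card with hN
  set Ka := s.image A with hKa
  set Kb := s.image B with hKb
  set ia : κ → ℕ := fun x => Ka.toList.idxOf x with hia
  set ib : κ → ℕ := fun x => Kb.toList.idxOf x with hib
  have hmemKa : ∀ e ∈ s, A e ∈ Ka.toList :=
    fun e he => (Finset.mem_toList).mpr (mem_image_of_mem A he)
  have hmemKb : ∀ e ∈ s, B e ∈ Kb.toList :=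
    fun e he => (Finset.mem_toList).mpr (mem_image_of_mem B he)
  have hiaN : ∀ e ∈ s, ia (A e) < N := by
    intro e he
    calc ia (A e) < Ka.toList.length := List.idxOf_lt_length_iff.mpr (hmemKa e he)
      _ = Ka.card := Finset.length_toList _
      _ ≤ N := card_image_le
  have hibN : ∀ e ∈ s, ib (B e) < N := by
    intro e he
    calc ib (B e) < Kb.toList.length := List.idxOf_lt_length_iff.mpr (hmemKb e he)
      _ = Kb.card := Finset.length_toList _
      _ ≤ N := card_image_le
  have hiainj : ∀ e ∈ s, ∀ f ∈ s, ia (A e) = ia (A f) → A e = A f := by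
    intro e he f hf h
    exact (List.idxOf_inj (hmemKa e he) (y := A f)).mp h
  have hibinj : ∀ e ∈ s, ∀ f ∈ s, ib (B e) = ib (B f) → B e = B f := by
    intro e he f hf h
    exact (List.idxOf_inj (hmemKb e he) (y := B f)).mp h
  set j : ε → ℕ×ℕ×ℕ := fun e => (ia (A e), ib (B e), 0) with hj
  have hjinj : ∀ e ∈ s, ∀ f ∈ s, j e = j f → e = f := by
    intro e he f hf h
    have h1 : ia (A e) = ia (A f) := congrArg Prod.fst h
    have h2 : ib (B e) = ib (B f) := congrArg (fun x => x.2.1) h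
    exact hsimple e he f hf (hiainj e he f hf h1) (hibinj e he f hf h2)
  set T := s.image j with hT
  have hmemT : ∀ {x}, x ∈ T ↔ ∃ e ∈ s, j e = x := by
    intro x
    rw [hT, mem_image]
  have hTco : ∀ x ∈ T, x.1 < N ∧ x.2.1 < N := by
    intro x hx
    obtain ⟨e, he, rfl⟩ := hmemT.mp hx
    exact ⟨hiaN e he, hibN e he⟩
  have hTA : ∀ a, mdegA T a ≤ ℓ := by
    intro a
    unfold mdegA
    by_cases h : ∃ e ∈ s, ia (A e) = a
    · obtain ⟨e₀, he₀, ha₀⟩ := h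
      have hEq : T.filter (fun x => x.1 = a) = (s.filter (fun f => A f = A e₀)).image j := by
        ext x
        simp only [hT, mem_filter, mem_image]
        constructor
        · rintro ⟨⟨f, hf, rfl⟩, hx1⟩
          have hia2 : ia (A f) = ia (A e₀) := by
            rw [ha₀]
            exact hx1
          exact ⟨f, ⟨hf, hiainj f hf e₀ he₀ hia2⟩, rfl⟩
        · rintro ⟨f, ⟨hf, hAf⟩, rfl⟩
          refine ⟨⟨f, hf, rfl⟩, ?_⟩
          show ia (A f) = a
          rw [hAf, ha₀]
      rw [hEq]
      exact le_trans card_image_le (hA e₀ he₀)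
    · push_neg at h
      have hEq : T.filter (fun x => x.1 = a) = ∅ := by
        rw [eq_empty_iff_forall_notMem]
        intro x hx
        rw [mem_filter] at hx
        obtain ⟨f, hf, rfl⟩ := hmemT.mp hx.1
        exact h f hf hx.2
      rw [hEq, card_empty]
      exact Nat.zero_le _
  have hTB : ∀ b, mdegB T b ≤ ℓ := by
    intro b
    unfold mdegB
    by_cases h : ∃ e ∈ s, ib (B e) = b
    · obtain ⟨e₀, he₀, hb₀⟩ := h
      have hEq : T.filter (fun x => x.2.1 = b) = (s.filter (fun f => B f = B e₀)).image j := by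
        ext x
        simp only [hT, mem_filter, mem_image]
        constructor
        · rintro ⟨⟨f, hf, rfl⟩, hx1⟩
          have hib2 : ib (B f) = ib (B e₀) := by
            rw [hb₀]
            exact hx1
          exact ⟨f, ⟨hf, hibinj f hf e₀ he₀ hib2⟩, rfl⟩
        · rintro ⟨f, ⟨hf, hBf⟩, rfl⟩
          refine ⟨⟨f, hf, rfl⟩, ?_⟩
          show ib (B f) = b
          rw [hBf, hb₀]
      rw [hEq]
      exact le_trans card_image_le (hB e₀ he₀)
    · push_neg at h
      have hEq : T.filter (fun x => x.2.1 = b) = ∅ := by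
        rw [eq_empty_iff_forall_notMem]
        intro x hx
        rw [mem_filter] at hx
        obtain ⟨f, hf, rfl⟩ := hmemT.mp hx.1
        exact h f hf hx.2
      rw [hEq, card_empty]
      exact Nat.zero_le _
  have hTcard : T.card ≤ ℓ * N := by
    calc T.card ≤ s.card := card_image_le
      _ = N := rfl
      _ ≤ ℓ * N := Nat.le_mul_of_pos_left N hℓpos
  obtain ⟨T', hTT', hT'co, hT'A, hT'B⟩ :=
    pad N ℓ (ℓ * N - T.card) T hTco hTA hTB (by omega)
  obtain ⟨φm, hφv, hφA, hφB⟩ := reg N ℓ T' hT'co hT'A hT'B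
  refine ⟨fun e => φm (j e), ?_, ?_, ?_⟩
  · intro e he
    exact hφv (j e) (hTT' (hmemT.mpr ⟨e, he, rfl⟩))
  · intro e he f hf hne hAeq
    have hneq : j e ≠ j f := fun h => hne (hjinj e he f hf h)
    have h1 : (j e).1 = (j f).1 := by
      show ia (A e) = ia (A f)
      rw [hAeq]
    exact hφA (j e) (hTT' (hmemT.mpr ⟨e, he, rfl⟩)) (j f) (hTT' (hmemT.mpr ⟨f, hf, rfl⟩)) hneq h1
  · intro e he f hf hne hBeq
    have hneq : j e ≠ j f := fun h => hne (hjinj e he f hf h)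
    have h1 : (j e).2.1 = (j f).2.1 := by
      show ib (B e) = ib (B f)
      rw [hBeq]
    exact hφB (j e) (hTT' (hmemT.mpr ⟨e, he, rfl⟩)) (j f) (hTT' (hmemT.mpr ⟨f, hf, rfl⟩)) hneq h1

end KonigAbstract

end AMEC

open SimpleGraph in
/-- For any integer `ℓ ≥ 2` and real `α ∈ (0,1)` with `αℓ > 1`, every
finite simple graph `G` with minimum degree at least `(2ℓ−2)/(αℓ−1)` admits, for every
list assignment with lists of size `ℓ`, an `L`-colouring that is an `α`-majority edge
colouring. -/
theorem alpha_majority_list_edge_colouring_of_minDegree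
    (ℓ : ℕ) (hℓ : 2 ≤ ℓ) (α : ℝ) (hα : α ∈ Set.Ioo (0 : ℝ) 1) (hαℓ : 1 < α * ℓ)
    {V : Type*} [Fintype V] [DecidableEq V] (G : SimpleGraph V) [DecidableRel G.Adj]
    (hδ : ∀ v : V, (2 * ℓ - 2 : ℝ) / (α * ℓ - 1) ≤ (G.degree v : ℝ))
    {C : Type*} (L : Sym2 V → Finset C)
    (hL : ∀ e ∈ G.edgeSet, (L e).card = ℓ) :
    ∃ ω : Sym2 V → C,
      (∀ e ∈ G.edgeSet, ω e ∈ L e) ∧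
      ∀ (v : V) (c : C),
        ((G.incidenceSet v ∩ {e | ω e = c}).ncard : ℝ) ≤ α * (G.degree v : ℝ) := by
  classical
  -- basic positivity
  have hα0 : 0 < α := hα.1
  have hαℓ1 : (0:ℝ) < α * ℓ - 1 := by linarith
  have hl2 : (2:ℝ) ≤ (ℓ:ℝ) := by exact_mod_cast hℓ
  have hlpos : (0:ℝ) < (ℓ:ℝ) := by linarith
  have hlpos' : 0 < ℓ := by omega
  have hnum : (0:ℝ) < 2 * ℓ - 2 := by nlinarith [hα.2]
  rcases isEmpty_or_nonempty V with hV | hV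
  · haveI : IsEmpty (Sym2 V) := by
      constructor
      intro e
      induction e using Sym2.ind with
      | _ a b => exact isEmptyElim a
    exact ⟨isEmptyElim, fun e he => isEmptyElim e, fun v => isEmptyElim v⟩
  -- every vertex has positive degree
  have hdegpos : ∀ v : V, 0 < G.degree v := by
    intro v
    by_contra h
    push_neg at h
    have h0 : G.degree v = 0 := by omega
    have h1 := hδ v
    rw [h0] at h1
    have hpos : 0 < (2 * ℓ - 2 : ℝ) / (α * ℓ - 1) := div_pos hnum hαℓ1
    simp only [Nat.cast_zero] at h1
    linarith
  -- C is nonempty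
  obtain ⟨v₀⟩ := hV
  have hCne : Nonempty C := by
    have h1 := hdegpos v₀
    rw [← card_neighborFinset_eq_degree] at h1
    obtain ⟨w, hw⟩ := card_pos.mp h1
    have hadj : G.Adj v₀ w := by rwa [mem_neighborFinset] at hw
    have hedge : s(v₀, w) ∈ G.edgeSet := hadj
    have hcard := hL _ hedge
    have h2 : 0 < (L s(v₀,w)).card := by omega
    obtain ⟨c, hc⟩ := card_pos.mp h2
    exact ⟨c⟩
  haveI := hCne
  -- linear orders
  letI : LinearOrder V := LinearOrder.lift' (Fintype.equivFin V) (Equiv.injective _)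
  letI : LinearOrder (Sym2 V) := LinearOrder.lift' (Fintype.equivFin (Sym2 V)) (Equiv.injective _)
  letI : PartialOrder (Sym2 V) := this.toPartialOrder
  -- endpoints
  set lo : Sym2 V → V := Sym2.lift ⟨fun a b => min a b, fun a b => min_comm a b⟩ with hlo
  set hi : Sym2 V → V := Sym2.lift ⟨fun a b => max a b, fun a b => max_comm a b⟩ with hhi
  set Es : Finset (Sym2 V) := G.edgeFinset with hEs
  have hkey : ∀ e ∈ Es, lo e ≠ hi e ∧ s(lo e, hi e) = e := by
    intro e he
    induction e using Sym2.ind with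
    | _ a b =>
      have hadj : G.Adj a b := by rwa [hEs, mem_edgeFinset, mem_edgeSet] at he
      have hab : a ≠ b := hadj.ne
      have h1 : lo s(a,b) = min a b := by simp [hlo]
      have h2 : hi s(a,b) = max a b := by simp [hhi]
      rw [h1, h2]
      rcases lt_or_gt_of_ne hab with h | h
      · rw [min_eq_left h.le, max_eq_right h.le]
        exact ⟨hab, rfl⟩
      · rw [min_eq_right h.le, max_eq_left h.le]
        exact ⟨fun hh => hab hh.symm, Sym2.eq_swap⟩
  have hmemlohi : ∀ (e : Sym2 V) (v : V), v ∈ e ↔ v = lo e ∨ v = hi e := by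
    intro e v
    induction e using Sym2.ind with
    | _ a b =>
      have h1 : lo s(a,b) = min a b := by simp [hlo]
      have h2 : hi s(a,b) = max a b := by simp [hhi]
      rw [Sym2.mem_iff, h1, h2]
      rcases le_total a b with h | h
      · rw [min_eq_left h, max_eq_right h]
      · rw [min_eq_right h, max_eq_left h]
        exact or_comm
  -- out/in edge sets
  set Ov : V → Finset (Sym2 V) := fun v => Es.filter (fun e => lo e = v) with hOv
  set Iv : V → Finset (Sym2 V) := fun v => Es.filter (fun e => hi e = v) with hIv
  have hinc : ∀ v : V, G.incidenceFinset v = Ov v ∪ Iv v := by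
    intro v
    ext e
    rw [mem_incidenceFinset, hOv, hIv, mem_union, mem_filter, mem_filter]
    constructor
    · rintro ⟨heE, hve⟩
      have heE' : e ∈ Es := by rwa [hEs, mem_edgeFinset]
      rcases (hmemlohi e v).mp hve with h | h
      · exact Or.inl ⟨heE', h.symm⟩
      · exact Or.inr ⟨heE', h.symm⟩
    · rintro (⟨heE, hl⟩ | ⟨heE, hl⟩)
      · exact ⟨by rwa [hEs, mem_edgeFinset] at heE, (hmemlohi e v).mpr (Or.inl hl.symm)⟩
      · exact ⟨by rwa [hEs, mem_edgeFinset] at heE, (hmemlohi e v).mpr (Or.inr hl.symm)⟩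
  have hdisj : ∀ v : V, Disjoint (Ov v) (Iv v) := by
    intro v
    rw [Finset.disjoint_left]
    intro e he1 he2
    rw [hOv, mem_filter] at he1
    rw [hIv, mem_filter] at he2
    exact (hkey e he1.1).1 (he1.2.trans he2.2.symm)
  have hdegsplit : ∀ v : V, (Ov v).card + (Iv v).card = G.degree v := by
    intro v
    rw [← card_incidenceFinset_eq_degree, hinc v, card_union_of_disjoint (hdisj v)]
  -- ranks
  set rA : Sym2 V → ℕ := fun e => ((Ov (lo e)).filter (fun f => f < e)).card with hrA
  set rB : Sym2 V → ℕ := fun e => ((Iv (hi e)).filter (fun f => f < e)).card with hrB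
  -- generic: rank is injective on each Ov v / Iv v
  have hrank_mono : ∀ (S : Finset (Sym2 V)) (x y : Sym2 V), x ∈ S → y ∈ S → x < y →
      (S.filter (fun f => f < x)).card < (S.filter (fun f => f < y)).card := by
    intro S x y hx hy hxy
    apply card_lt_card
    have hsub : S.filter (fun f => f < x) ⊆ S.filter (fun f => f < y) := by
      intro g hg
      rw [mem_filter] at hg ⊢
      exact ⟨hg.1, hg.2.trans hxy⟩
    exact (Finset.ssubset_iff_of_subset hsub).mpr
      ⟨x, mem_filter.mpr ⟨hx, hxy⟩, fun hmem => lt_irrefl x (mem_filter.mp hmem).2⟩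
  have hrAinj : ∀ v : V, ∀ e ∈ Ov v, ∀ f ∈ Ov v, rA e = rA f → e = f := by
    intro v e he f hf hr
    by_contra hne
    have hloe : lo e = v := (mem_filter.mp he).2
    have hlof : lo f = v := (mem_filter.mp hf).2
    rcases lt_or_gt_of_ne hne with h | h
    · have := hrank_mono (Ov v) e f he hf h
      simp only [hrA] at hr
      rw [hloe, hlof] at hr
      omega
    · have := hrank_mono (Ov v) f e hf he h
      simp only [hrA] at hr
      rw [hloe, hlof] at hr
      omega
  have hrBinj : ∀ v : V, ∀ e ∈ Iv v, ∀ f ∈ Iv v, rB e = rB f → e = f := by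
    intro v e he f hf hr
    by_contra hne
    have hloe : hi e = v := (mem_filter.mp he).2
    have hlof : hi f = v := (mem_filter.mp hf).2
    rcases lt_or_gt_of_ne hne with h | h
    · have := hrank_mono (Iv v) e f he hf h
      simp only [hrB] at hr
      rw [hloe, hlof] at hr
      omega
    · have := hrank_mono (Iv v) f e hf he h
      simp only [hrB] at hr
      rw [hloe, hlof] at hr
      omega
  have hrAlt : ∀ v : V, ∀ e ∈ Ov v, rA e < (Ov v).card := by
    intro v e he
    have hloe : lo e = v := (mem_filter.mp he).2
    have hsub : (Ov v).filter (fun f => f < e) ⊆ (Ov v).erase e := by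
      intro x hx
      rw [mem_erase]
      exact ⟨ne_of_lt (mem_filter.mp hx).2, (mem_filter.mp hx).1⟩
    have h1 := card_le_card hsub
    rw [card_erase_of_mem he] at h1
    have h2 : 0 < (Ov v).card := card_pos.mpr ⟨e, he⟩
    simp only [hrA]
    rw [hloe]
    omega
  have hrBlt : ∀ v : V, ∀ e ∈ Iv v, rB e < (Iv v).card := by
    intro v e he
    have hloe : hi e = v := (mem_filter.mp he).2
    have hsub : (Iv v).filter (fun f => f < e) ⊆ (Iv v).erase e := by
      intro x hx
      rw [mem_erase]
      exact ⟨ne_of_lt (mem_filter.mp hx).2, (mem_filter.mp hx).1⟩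
    have h1 := card_le_card hsub
    rw [card_erase_of_mem he] at h1
    have h2 : 0 < (Iv v).card := card_pos.mpr ⟨e, he⟩
    simp only [hrB]
    rw [hloe]
    omega
  -- class maps
  set Aid : Sym2 V → (V × ℕ) ⊕ (V × ℕ) := fun e => Sum.inl (lo e, rA e / ℓ) with hAid
  set Bid : Sym2 V → (V × ℕ) ⊕ (V × ℕ) := fun e => Sum.inr (hi e, rB e / ℓ) with hBid
  have hAid_iff : ∀ e f : Sym2 V, Aid f = Aid e ↔ lo f = lo e ∧ rA f / ℓ = rA e / ℓ := by
    intro e f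
    rw [hAid]
    simp only [Sum.inl.injEq, Prod.mk.injEq]
  have hBid_iff : ∀ e f : Sym2 V, Bid f = Bid e ↔ hi f = hi e ∧ rB f / ℓ = rB e / ℓ := by
    intro e f
    rw [hBid]
    simp only [Sum.inr.injEq, Prod.mk.injEq]
  -- class size bounds
  have hclassA : ∀ e ∈ Es, (Es.filter (fun f => Aid f = Aid e)).card ≤ ℓ := by
    intro e he
    have hsub : Es.filter (fun f => Aid f = Aid e)
        ⊆ (Ov (lo e)).filter (fun f => rA f / ℓ = rA e / ℓ) := by
      intro f hf
      rw [mem_filter] at hf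
      obtain ⟨hfl, hfr⟩ := (hAid_iff e f).mp hf.2
      exact mem_filter.mpr ⟨mem_filter.mpr ⟨hf.1, hfl⟩, hfr⟩
    refine le_trans (card_le_card hsub) ?_
    have hinj : ∀ x ∈ (Ov (lo e)).filter (fun f => rA f / ℓ = rA e / ℓ),
        ∀ y ∈ (Ov (lo e)).filter (fun f => rA f / ℓ = rA e / ℓ), rA x = rA y → x = y := by
      intro x hx y hy hxy
      exact hrAinj (lo e) x (mem_filter.mp hx).1 y (mem_filter.mp hy).1 hxy
    have hmaps : ∀ x ∈ (Ov (lo e)).filter (fun f => rA f / ℓ = rA e / ℓ),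
        rA x ∈ Finset.Ico ((rA e / ℓ) * ℓ) ((rA e / ℓ) * ℓ + ℓ) := by
      intro x hx
      have hq : rA x / ℓ = rA e / ℓ := (mem_filter.mp hx).2
      rw [mem_Ico, ← hq]
      constructor
      · exact Nat.div_mul_le_self _ _
      · calc rA x = ℓ * (rA x / ℓ) + rA x % ℓ := (Nat.div_add_mod _ _).symm
          _ < ℓ * (rA x / ℓ) + ℓ := Nat.add_lt_add_left (Nat.mod_lt _ hlpos') _
          _ = rA x / ℓ * ℓ + ℓ := by rw [Nat.mul_comm]
    have := Finset.card_le_card_of_injOn rA hmaps hinj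
    rwa [Nat.card_Ico, Nat.add_sub_cancel_left] at this
  have hclassB : ∀ e ∈ Es, (Es.filter (fun f => Bid f = Bid e)).card ≤ ℓ := by
    intro e he
    have hsub : Es.filter (fun f => Bid f = Bid e)
        ⊆ (Iv (hi e)).filter (fun f => rB f / ℓ = rB e / ℓ) := by
      intro f hf
      rw [mem_filter] at hf
      obtain ⟨hfl, hfr⟩ := (hBid_iff e f).mp hf.2
      exact mem_filter.mpr ⟨mem_filter.mpr ⟨hf.1, hfl⟩, hfr⟩
    refine le_trans (card_le_card hsub) ?_
    have hinj : ∀ x ∈ (Iv (hi e)).filter (fun f => rB f / ℓ = rB e / ℓ),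
        ∀ y ∈ (Iv (hi e)).filter (fun f => rB f / ℓ = rB e / ℓ), rB x = rB y → x = y := by
      intro x hx y hy hxy
      exact hrBinj (hi e) x (mem_filter.mp hx).1 y (mem_filter.mp hy).1 hxy
    have hmaps : ∀ x ∈ (Iv (hi e)).filter (fun f => rB f / ℓ = rB e / ℓ),
        rB x ∈ Finset.Ico ((rB e / ℓ) * ℓ) ((rB e / ℓ) * ℓ + ℓ) := by
      intro x hx
      have hq : rB x / ℓ = rB e / ℓ := (mem_filter.mp hx).2
      rw [mem_Ico, ← hq]
      constructor
      · exact Nat.div_mul_le_self _ _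
      · calc rB x = ℓ * (rB x / ℓ) + rB x % ℓ := (Nat.div_add_mod _ _).symm
          _ < ℓ * (rB x / ℓ) + ℓ := Nat.add_lt_add_left (Nat.mod_lt _ hlpos') _
          _ = rB x / ℓ * ℓ + ℓ := by rw [Nat.mul_comm]
    have := Finset.card_le_card_of_injOn rB hmaps hinj
    rwa [Nat.card_Ico, Nat.add_sub_cancel_left] at this
  have hsimple : ∀ e ∈ Es, ∀ f ∈ Es, Aid e = Aid f → Bid e = Bid f → e = f := by
    intro e he f hf hA hB
    obtain ⟨hl, -⟩ := (hAid_iff f e).mp hA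
    obtain ⟨hh, -⟩ := (hBid_iff f e).mp hB
    have h1 := (hkey e he).2
    have h2 := (hkey f hf).2
    rw [← h1, ← h2, hl, hh]
  -- a proper colouring via König
  obtain ⟨φ, hφv, hφA, hφB⟩ := AMEC.konig_abstract Es Aid Bid ℓ hclassA hclassB hsimple
  -- Galvin invariant
  have hinvA : ∀ e ∈ Es, (Es.filter (fun f => f ≠ e ∧ Aid f = Aid e ∧ φ f < φ e)).card ≤ φ e := by
    intro e he
    have hmaps : ∀ x ∈ Es.filter (fun f => f ≠ e ∧ Aid f = Aid e ∧ φ f < φ e),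
        φ x ∈ Finset.range (φ e) := by
      intro x hx
      exact mem_range.mpr (mem_filter.mp hx).2.2.2
    have hinj : ∀ x ∈ Es.filter (fun f => f ≠ e ∧ Aid f = Aid e ∧ φ f < φ e),
        ∀ y ∈ Es.filter (fun f => f ≠ e ∧ Aid f = Aid e ∧ φ f < φ e), φ x = φ y → x = y := by
      intro x hx y hy hxy
      rw [mem_filter] at hx hy
      by_contra hne
      exact hφA x hx.1 y hy.1 hne (hx.2.2.1.trans hy.2.2.1.symm) hxy
    have := Finset.card_le_card_of_injOn φ hmaps hinj
    rwa [card_range] at this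
  have hinvB : ∀ e ∈ Es,
      (Es.filter (fun f => f ≠ e ∧ Bid f = Bid e ∧ φ e < φ f)).card ≤ ℓ - 1 - φ e := by
    intro e he
    have hmaps : ∀ x ∈ Es.filter (fun f => f ≠ e ∧ Bid f = Bid e ∧ φ e < φ f),
        φ x ∈ Finset.Ico (φ e + 1) ℓ := by
      intro x hx
      rw [mem_filter] at hx
      rw [mem_Ico]
      exact ⟨hx.2.2.2, hφv x hx.1⟩
    have hinj : ∀ x ∈ Es.filter (fun f => f ≠ e ∧ Bid f = Bid e ∧ φ e < φ f),
        ∀ y ∈ Es.filter (fun f => f ≠ e ∧ Bid f = Bid e ∧ φ e < φ f), φ x = φ y → x = y := by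
      intro x hx y hy hxy
      rw [mem_filter] at hx hy
      by_contra hne
      exact hφB x hx.1 y hy.1 hne (hx.2.2.1.trans hy.2.2.1.symm) hxy
    have := Finset.card_le_card_of_injOn φ hmaps hinj
    rw [Nat.card_Ico] at this
    omega
  have hinv : ∀ e ∈ Es,
      (Es.filter (fun f => f ≠ e ∧ Aid f = Aid e ∧ φ f < φ e)).card
    + (Es.filter (fun f => f ≠ e ∧ Bid f = Bid e ∧ φ e < φ f)).card < (L e).card := by
    intro e he
    have h1 := hinvA e he
    have h2 := hinvB e he
    have h3 := hφv e he
    have h4 : (L e).card = ℓ := hL e (by rwa [hEs, mem_edgeFinset] at he)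
    omega
  -- Galvin
  obtain ⟨ω, hωmem, hωA, hωB⟩ := AMEC.galvin Aid Bid φ (∑ e ∈ Es, (L e).card) Es L
    (fun e he f hf hAe hφe => by
      by_contra hne
      exact hφA e he f hf hne hAe hφe)
    (fun e he f hf hBe hφe => by
      by_contra hne
      exact hφB e he f hf hne hBe hφe)
    hinv le_rfl
  refine ⟨ω, ?_, ?_⟩
  · intro e he
    exact hωmem e (by rwa [hEs, mem_edgeFinset])
  · intro v c
    -- identify the set with a finset
    have hset : G.incidenceSet v ∩ {e | ω e = c} = ↑((G.incidenceFinset v).filter (fun e => ω e = c)) := by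
      ext e
      simp only [Set.mem_inter_iff, Set.mem_setOf_eq, coe_filter, mem_incidenceFinset]
    rw [hset, Set.ncard_coe_finset]
    -- counting
    set So := (Ov v).filter (fun e => ω e = c) with hSo
    set Si := (Iv v).filter (fun e => ω e = c) with hSi
    have hcount : ((G.incidenceFinset v).filter (fun e => ω e = c)).card ≤ So.card + Si.card := by
      rw [hinc v, filter_union]
      exact card_union_le _ _
    -- So bound
    have hSobound : So.card * ℓ + 1 ≤ (Ov v).card + ℓ := by
      rcases So.eq_empty_or_nonempty with hemp | ⟨e₀, he₀⟩
      · rw [hemp, card_empty]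
        omega
      · have hp : 0 < (Ov v).card := card_pos.mpr ⟨e₀, (mem_filter.mp he₀).1⟩
        have hmaps : ∀ x ∈ So, rA x / ℓ ∈ Finset.range (((Ov v).card - 1) / ℓ + 1) := by
          intro x hx
          have hxO : x ∈ Ov v := (mem_filter.mp hx).1
          have h1 := hrAlt v x hxO
          rw [mem_range]
          have h2 : rA x ≤ (Ov v).card - 1 := by omega
          have := Nat.div_le_div_right (c := ℓ) h2
          omega
        have hinj : ∀ x ∈ So, ∀ y ∈ So, rA x / ℓ = rA y / ℓ → x = y := by
          intro x hx y hy hxy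
          rw [hSo, mem_filter] at hx hy
          by_contra hne
          have hAxy : Aid x = Aid y := by
            rw [hAid_iff]
            constructor
            · rw [(mem_filter.mp hx.1).2, (mem_filter.mp hy.1).2]
            · exact hxy
          have hωxy : ω x = ω y := by rw [hx.2, hy.2]
          exact hωA x (mem_filter.mp hx.1).1 y (mem_filter.mp hy.1).1 hne hAxy hωxy
        have h3 := Finset.card_le_card_of_injOn (fun x => rA x / ℓ) hmaps hinj
        rw [card_range] at h3
        have h4 : (((Ov v).card - 1) / ℓ) * ℓ ≤ (Ov v).card - 1 := Nat.div_mul_le_self _ _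
        have h5 : So.card * ℓ ≤ (((Ov v).card - 1) / ℓ + 1) * ℓ := Nat.mul_le_mul_right ℓ h3
        rw [add_mul, one_mul] at h5
        omega
    -- Si bound
    have hSibound : Si.card * ℓ + 1 ≤ (Iv v).card + ℓ := by
      rcases Si.eq_empty_or_nonempty with hemp | ⟨e₀, he₀⟩
      · rw [hemp, card_empty]
        omega
      · have hp : 0 < (Iv v).card := card_pos.mpr ⟨e₀, (mem_filter.mp he₀).1⟩
        have hmaps : ∀ x ∈ Si, rB x / ℓ ∈ Finset.range (((Iv v).card - 1) / ℓ + 1) := by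
          intro x hx
          have hxO : x ∈ Iv v := (mem_filter.mp hx).1
          have h1 := hrBlt v x hxO
          rw [mem_range]
          have h2 : rB x ≤ (Iv v).card - 1 := by omega
          have := Nat.div_le_div_right (c := ℓ) h2
          omega
        have hinj : ∀ x ∈ Si, ∀ y ∈ Si, rB x / ℓ = rB y / ℓ → x = y := by
          intro x hx y hy hxy
          rw [hSi, mem_filter] at hx hy
          by_contra hne
          have hBxy : Bid x = Bid y := by
            rw [hBid_iff]
            constructor
            · rw [(mem_filter.mp hx.1).2, (mem_filter.mp hy.1).2]
            · exact hxy
          have hωxy : ω x = ω y := by rw [hx.2, hy.2]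
          exact hωB x (mem_filter.mp hx.1).1 y (mem_filter.mp hy.1).1 hne hBxy hωxy
        have h3 := Finset.card_le_card_of_injOn (fun x => rB x / ℓ) hmaps hinj
        rw [card_range] at h3
        have h4 : (((Iv v).card - 1) / ℓ) * ℓ ≤ (Iv v).card - 1 := Nat.div_mul_le_self _ _
        have h5 : Si.card * ℓ ≤ (((Iv v).card - 1) / ℓ + 1) * ℓ := Nat.mul_le_mul_right ℓ h3
        rw [add_mul, one_mul] at h5
        omega
    -- combine in ℕ
    have hnat : ((G.incidenceFinset v).filter (fun e => ω e = c)).card * ℓ + 2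
        ≤ G.degree v + 2 * ℓ := by
      have h1 : ((G.incidenceFinset v).filter (fun e => ω e = c)).card * ℓ
          ≤ (So.card + Si.card) * ℓ := Nat.mul_le_mul_right ℓ hcount
      rw [add_mul] at h1
      have h2 := hdegsplit v
      omega
    -- pass to ℝ
    set m := ((G.incidenceFinset v).filter (fun e => ω e = c)).card with hm
    have hreal : (m : ℝ) * ℓ + 2 ≤ (G.degree v : ℝ) + 2 * ℓ := by
      have := hnat
      push_cast
      exact_mod_cast this
    have hdd : (2 * ℓ - 2 : ℝ) ≤ (G.degree v : ℝ) * (α * ℓ - 1) :=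
      (div_le_iff₀ hαℓ1).mp (hδ v)
    have hfin : (m : ℝ) * ℓ ≤ (α * (G.degree v : ℝ)) * ℓ := by nlinarith
    exact le_of_mul_le_mul_right hfin hlpos
end

section
/- Fix a real ε > 0, a real a ∈ (0,1) and a positive integer δ₀. Suppose that every finite simple graph in which every vertex degree lies in the interval [δ₀, 2δ₀ − 1] admits, for every ε-excessive list assignment L with tolerance function α satisfying min(α) ≥ a, an α-majority L-colouring. Then every finite simple graph with minimum degree at least δ₀ admits, for every ε-excessive list assignment L with tolerance function α satisfying min(α) ≥ a, an α-majority L-colouring. -/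
set_option linter.unusedSectionVars false
set_option maxHeartbeats 1000000

namespace MajoritySplitAux

/-- Bound on the `ncard` of a finite indexed union. -/
lemma ncard_iUnion_le_sum {ι α : Type*} [Fintype ι] [Finite α] (T : ι → Set α) :
    (⋃ i, T i).ncard ≤ ∑ i, (T i).ncard := by
  classical
  have key : ∀ s : Finset ι, (⋃ i ∈ s, T i).ncard ≤ ∑ i ∈ s, (T i).ncard := by
    intro s
    induction s using Finset.induction with
    | empty => simp
    | @insert a s ha ih =>
      rw [Finset.sum_insert ha, Finset.set_biUnion_insert]
      exact (Set.ncard_union_le _ _).trans (Nat.add_le_add_left ih _)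
  simpa using key Finset.univ

/-- Cardinality of the fibers of `m ↦ min (m / δ₀) (d/δ₀ - 1)` on `Fin d`. -/
lemma card_fiber (d δ₀ i : ℕ) (hδ₀ : 0 < δ₀) (hd : δ₀ ≤ d) (hi : i < d / δ₀) :
    (Finset.univ.filter (fun m : Fin d => min ((m : ℕ) / δ₀) (d / δ₀ - 1) = i)).card
      = if i + 1 = d / δ₀ then d - i * δ₀ else δ₀ := by
  set k := d / δ₀ with hk
  have hk1 : 1 ≤ k := (Nat.one_le_div_iff hδ₀).mpr hd
  have hkd : k * δ₀ ≤ d := Nat.div_mul_le_self d δ₀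
  set B : ℕ := if i + 1 = k then d else (i + 1) * δ₀ with hB
  have hBd : B ≤ d := by
    by_cases h : i + 1 = k
    · simp [hB, h]
    · have h1 : i + 1 < k := lt_of_le_of_ne hi h
      calc B = (i+1) * δ₀ := by simp [hB, h]
        _ ≤ k * δ₀ := Nat.mul_le_mul_right _ (le_of_lt h1)
        _ ≤ d := hkd
  have hmem : ∀ m ∈ Finset.Ico (i * δ₀) B, m < d := fun m hm =>
    lt_of_lt_of_le (Finset.mem_Ico.mp hm).2 hBd
  have : Finset.univ.filter (fun m : Fin d => min ((m : ℕ) / δ₀) (k - 1) = i)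
      = (Finset.Ico (i * δ₀) B).attachFin hmem := by
    ext m
    simp only [Finset.mem_filter, Finset.mem_univ, true_and, Finset.mem_attachFin,
      Finset.mem_Ico]
    by_cases h : i + 1 = k
    · have hik : i = k - 1 := by omega
      subst hik
      have : B = d := by simp [hB, h]
      rw [this]
      constructor
      · intro hmin
        refine ⟨?_, m.2⟩
        have : k - 1 ≤ (m : ℕ) / δ₀ := by
          rcases le_total ((m : ℕ) / δ₀) (k-1) with h' | h'
          · omega
          · exact h'
        rw [Nat.le_div_iff_mul_le hδ₀] at this
        omega
      · rintro ⟨h1, _⟩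
        have : k - 1 ≤ (m : ℕ) / δ₀ := (Nat.le_div_iff_mul_le hδ₀).mpr (by omega)
        omega
    · have h1 : i + 1 < k := lt_of_le_of_ne hi h
      have hBe : B = (i + 1) * δ₀ := by simp [hB, h]
      rw [hBe]
      have key : min ((m : ℕ) / δ₀) (k - 1) = i ↔ (m : ℕ) / δ₀ = i := by
        constructor
        · intro hmin
          rcases le_total ((m : ℕ) / δ₀) (k - 1) with h' | h'
          · omega
          · omega
        · intro h'; omega
      rw [key]
      constructor
      · intro h'
        constructor
        · exact (Nat.le_div_iff_mul_le hδ₀).mp (by omega)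
        · have : (m : ℕ) / δ₀ < i + 1 := by omega
          exact (Nat.div_lt_iff_lt_mul hδ₀).mp this
      · rintro ⟨h1', h2'⟩
        have ha : i ≤ (m : ℕ) / δ₀ := (Nat.le_div_iff_mul_le hδ₀).mpr h1'
        have hb : (m : ℕ) / δ₀ < i + 1 := (Nat.div_lt_iff_lt_mul hδ₀).mpr h2'
        omega
  rw [this, Finset.card_attachFin, Nat.card_Ico]
  by_cases h : i + 1 = k
  · simp [hB, h]
  · simp only [hB, if_neg h]
    rw [Nat.succ_mul]
    omega

section Graph

variable {V : Type} [Fintype V] [DecidableEq V] (G : SimpleGraph V) [DecidableRel G.Adj]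
  (δ₀ : ℕ)

/-- The number of copies of a vertex in the split graph. -/
def k (v : V) : ℕ := G.degree v / δ₀

lemma ncard_neighborSet_eq_degree (v : V) : (G.neighborSet v).ncard = G.degree v := by
  rw [← SimpleGraph.card_neighborSet_eq_degree, ← Nat.card_eq_fintype_card,
    Nat.card_coe_set_eq]

variable (hδ₀ : 0 < δ₀) (hδ : ∀ v, δ₀ ≤ G.degree v)

include hδ₀ hδ

lemma k_pos (v : V) : 0 < k G δ₀ v := (Nat.one_le_div_iff hδ₀).mpr (hδ v)

noncomputable def idx (v : V) : G.neighborSet v ≃ Fin (G.degree v) :=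
  Fintype.equivFinOfCardEq (G.card_neighborSet_eq_degree v)

/-- The index of the copy of `v` to which the edge towards `u` is assigned. -/
noncomputable def fnat (v u : V) : ℕ :=
  if h : u ∈ G.neighborSet v then min ((idx G v ⟨u, h⟩ : ℕ) / δ₀) (k G δ₀ v - 1) else 0

lemma fnat_lt (v u : V) : fnat G δ₀ v u < k G δ₀ v := by
  have hk := k_pos G δ₀ hδ₀ hδ v
  unfold fnat
  split
  · exact lt_of_le_of_lt (min_le_right _ _) (by omega)
  · exact hk

noncomputable def F (v u : V) : Fin (k G δ₀ v) := ⟨fnat G δ₀ v u, fnat_lt G δ₀ hδ₀ hδ v u⟩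

/-- The split graph obtained by splitting each vertex `v` into `k v` copies. -/
noncomputable def Gs : SimpleGraph (Σ v, Fin (k G δ₀ v)) where
  Adj a b := G.Adj a.1 b.1 ∧ F G δ₀ hδ₀ hδ a.1 b.1 = a.2 ∧ F G δ₀ hδ₀ hδ b.1 a.1 = b.2
  symm := ⟨by rintro ⟨v, i⟩ ⟨u, j⟩ ⟨h1, h2, h3⟩; exact ⟨h1.symm, h3, h2⟩⟩
  loopless := ⟨by rintro ⟨v, i⟩ ⟨h1, _, _⟩; exact G.irrefl h1⟩

lemma Gs_adj (a b : Σ v, Fin (k G δ₀ v)) :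
    (Gs G δ₀ hδ₀ hδ).Adj a b ↔
      G.Adj a.1 b.1 ∧ F G δ₀ hδ₀ hδ a.1 b.1 = a.2 ∧ F G δ₀ hδ₀ hδ b.1 a.1 = b.2 :=
  Iff.rfl

/-- The fiber of the splitting of `v` at index `i`. -/
noncomputable def Sfin (v : V) (i : Fin (k G δ₀ v)) : Finset V :=
  (G.neighborFinset v).filter (fun u => F G δ₀ hδ₀ hδ v u = i)

lemma neighborSet_Gs (a : Σ v, Fin (k G δ₀ v)) :
    (Gs G δ₀ hδ₀ hδ).neighborSet a =
      (fun u => (⟨u, F G δ₀ hδ₀ hδ u a.1⟩ : Σ v, Fin (k G δ₀ v))) ''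
        ↑(Sfin G δ₀ hδ₀ hδ a.1 a.2) := by
  ext b
  simp only [SimpleGraph.mem_neighborSet, Gs_adj, Set.mem_image, Finset.mem_coe, Sfin,
    Finset.mem_filter, SimpleGraph.mem_neighborFinset]
  constructor
  · rintro ⟨h1, h2, h3⟩
    exact ⟨b.1, ⟨h1, h2⟩, by rw [h3]⟩
  · rintro ⟨u, ⟨h1, h2⟩, rfl⟩
    exact ⟨h1, h2, rfl⟩

lemma ncard_neighborSet_Gs (a : Σ v, Fin (k G δ₀ v)) :
    ((Gs G δ₀ hδ₀ hδ).neighborSet a).ncard = (Sfin G δ₀ hδ₀ hδ a.1 a.2).card := by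
  rw [neighborSet_Gs, Set.ncard_image_of_injective _
    (fun x y hxy => congrArg Sigma.fst hxy), Set.ncard_coe_finset]

lemma card_Sfin (v : V) (i : Fin (k G δ₀ v)) :
    (Sfin G δ₀ hδ₀ hδ v i).card
      = if (i : ℕ) + 1 = G.degree v / δ₀ then G.degree v - (i : ℕ) * δ₀ else δ₀ := by
  rw [← card_fiber (G.degree v) δ₀ (i : ℕ) hδ₀ (hδ v) i.2]
  refine Finset.card_bij' (fun u hu => idx G v ⟨u, ?_⟩)
    (fun m _ => ((idx G v).symm m).1) ?_ ?_ ?_ ?_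
  · rw [Sfin, Finset.mem_filter, SimpleGraph.mem_neighborFinset] at hu
    exact hu.1
  · intro u hu
    rw [Sfin, Finset.mem_filter, SimpleGraph.mem_neighborFinset] at hu
    obtain ⟨h1, h2⟩ := hu
    simp only [Finset.mem_filter, Finset.mem_univ, true_and]
    have h3 : fnat G δ₀ v u = (i : ℕ) := congrArg Fin.val h2
    rw [fnat, dif_pos (show u ∈ G.neighborSet v from h1)] at h3
    exact h3
  · intro m hm
    simp only [Finset.mem_filter, Finset.mem_univ, true_and] at hm
    rw [Sfin, Finset.mem_filter, SimpleGraph.mem_neighborFinset]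
    have h1 : (((idx G v).symm m).1 : V) ∈ G.neighborSet v := ((idx G v).symm m).2
    refine ⟨h1, ?_⟩
    apply Fin.ext
    show fnat G δ₀ v _ = (i : ℕ)
    rw [fnat, dif_pos h1]
    have : (⟨((idx G v).symm m).1, h1⟩ : G.neighborSet v) = (idx G v).symm m := rfl
    rw [this, Equiv.apply_symm_apply]
    exact hm
  · intro u hu
    simp
  · intro m hm
    exact (idx G v).apply_symm_apply m

lemma card_Sfin_bounds (v : V) (i : Fin (k G δ₀ v)) :
    δ₀ ≤ (Sfin G δ₀ hδ₀ hδ v i).card ∧ (Sfin G δ₀ hδ₀ hδ v i).card ≤ 2 * δ₀ - 1 := by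
  rw [card_Sfin]
  have h1 : G.degree v / δ₀ * δ₀ ≤ G.degree v := Nat.div_mul_le_self _ _
  have h2 : G.degree v < (G.degree v / δ₀ + 1) * δ₀ :=
    (Nat.div_lt_iff_lt_mul hδ₀).mp (Nat.lt_succ_self _)
  have hik : (i : ℕ) < G.degree v / δ₀ := i.2
  by_cases h : (i : ℕ) + 1 = G.degree v / δ₀
  · rw [if_pos h]
    rw [← h, Nat.succ_mul] at h1
    rw [← h] at h2
    rw [show ((i:ℕ) + 1 + 1) * δ₀ = (i:ℕ) * δ₀ + δ₀ + δ₀ by ring] at h2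
    omega
  · rw [if_neg h]
    omega

lemma sum_card_Sfin (v : V) :
    ∑ i, (Sfin G δ₀ hδ₀ hδ v i).card = G.degree v := by
  rw [SimpleGraph.degree]
  exact (Finset.card_eq_sum_card_fiberwise
    (f := F G δ₀ hδ₀ hδ v) (t := Finset.univ) (fun u _ => Finset.mem_univ _)).symm

/-- The lift of an edge of `G` to an edge of the split graph. -/
noncomputable def Phi : Sym2 V → Sym2 (Σ v, Fin (k G δ₀ v)) :=
  Sym2.lift ⟨fun u w => s(⟨u, F G δ₀ hδ₀ hδ u w⟩, ⟨w, F G δ₀ hδ₀ hδ w u⟩),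
    fun u w => Sym2.eq_swap⟩

lemma Phi_mk (u w : V) :
    Phi G δ₀ hδ₀ hδ s(u, w)
      = s((⟨u, F G δ₀ hδ₀ hδ u w⟩ : Σ v, Fin (k G δ₀ v)), ⟨w, F G δ₀ hδ₀ hδ w u⟩) :=
  Sym2.lift_mk _ _ _

lemma map_fst_Phi (e : Sym2 V) : Sym2.map Sigma.fst (Phi G δ₀ hδ₀ hδ e) = e := by
  induction e using Sym2.ind with
  | _ u w => rw [Phi_mk, Sym2.map_pair_eq]

lemma Phi_injective : Function.Injective (Phi G δ₀ hδ₀ hδ) := by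
  intro e1 e2 h
  rw [← map_fst_Phi G δ₀ hδ₀ hδ e1, ← map_fst_Phi G δ₀ hδ₀ hδ e2, h]

lemma Phi_mem_edgeSet (u w : V) (h : G.Adj u w) :
    Phi G δ₀ hδ₀ hδ s(u, w) ∈ (Gs G δ₀ hδ₀ hδ).edgeSet := by
  rw [Phi_mk, SimpleGraph.mem_edgeSet, Gs_adj]
  exact ⟨h, rfl, rfl⟩

lemma incidence_subset {C : Type} (ω' : Sym2 (Σ v, Fin (k G δ₀ v)) → C) (v : V) (c : C) :
    Phi G δ₀ hδ₀ hδ '' (G.incidenceSet v ∩ {e | ω' (Phi G δ₀ hδ₀ hδ e) = c})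
      ⊆ ⋃ i : Fin (k G δ₀ v),
          ((Gs G δ₀ hδ₀ hδ).incidenceSet ⟨v, i⟩ ∩ {e' | ω' e' = c}) := by
  have key : ∀ u : V, G.Adj v u → ω' (Phi G δ₀ hδ₀ hδ s(v, u)) = c →
      Phi G δ₀ hδ₀ hδ s(v, u) ∈ ⋃ i : Fin (k G δ₀ v),
        ((Gs G δ₀ hδ₀ hδ).incidenceSet ⟨v, i⟩ ∩ {e' | ω' e' = c}) := by
    intro u hadj hc
    refine Set.mem_iUnion.mpr
      ⟨F G δ₀ hδ₀ hδ v u, ⟨⟨Phi_mem_edgeSet G δ₀ hδ₀ hδ v u hadj, ?_⟩, hc⟩⟩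
    rw [Phi_mk]
    exact Sym2.mem_mk_left _ _
  rintro e' ⟨e, he, rfl⟩
  induction e using Sym2.ind with
  | _ x y =>
    obtain ⟨⟨hedge, hv⟩, hc⟩ := he
    rw [SimpleGraph.mem_edgeSet] at hedge
    rcases Sym2.mem_iff.mp hv with rfl | rfl
    · exact key y hedge hc
    · rw [Sym2.eq_swap] at hc ⊢
      exact key x hedge.symm hc

end Graph

end MajoritySplitAux

/-- `G` admits an `α`-majority `L`-colouring for every `ε`-excessive list assignment `L`
with tolerance function `α` satisfying `min(α) ≥ a`. -/
def MajorityChoosable (ε a : ℝ) {V : Type} [Fintype V] (G : SimpleGraph V) : Prop :=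
  ∀ (C : Type) (α : C → ℝ) (L : Sym2 V → Finset C),
    (∀ c, α c ∈ Set.Ioo (0 : ℝ) 1) →
    (∀ c, a ≤ α c) →
    (∀ e ∈ G.edgeSet, 1 + ε ≤ ∑ c ∈ L e, α c) →
    ∃ ω : Sym2 V → C,
      (∀ e ∈ G.edgeSet, ω e ∈ L e) ∧
      ∀ (v : V) (c : C),
        ((G.incidenceSet v ∩ {e | ω e = c}).ncard : ℝ) ≤
          α c * ((G.neighborSet v).ncard : ℝ)

/-- (Vertex splitting reduction.) If every finite simple graph with all
degrees in `[δ₀, 2δ₀ − 1]` admits an `α`-majority `L`-colouring for every `ε`-excessive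
list assignment with `min(α) ≥ a`, then so does every finite simple graph with minimum
degree at least `δ₀`. -/
theorem majorityChoosable_of_degrees_in_interval
    (ε a : ℝ) (hε : 0 < ε) (ha : a ∈ Set.Ioo (0 : ℝ) 1) (δ₀ : ℕ) (hδ₀ : 0 < δ₀)
    (H : ∀ (W : Type) (_ : Fintype W) (G : SimpleGraph W),
      (∀ w, δ₀ ≤ (G.neighborSet w).ncard ∧ (G.neighborSet w).ncard ≤ 2 * δ₀ - 1) →
      MajorityChoosable ε a G)
    (V : Type) [Fintype V] (G : SimpleGraph V)
    (hδ : ∀ v, δ₀ ≤ (G.neighborSet v).ncard) :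
    MajorityChoosable ε a G := by
  classical
  open MajoritySplitAux in
  intro C α L hα hαa hL
  have hδ' : ∀ v, δ₀ ≤ G.degree v := fun v => by
    rw [← ncard_neighborSet_eq_degree]; exact hδ v
  set W := (Σ v : V, Fin (k G δ₀ v)) with hW
  set G' := Gs G δ₀ hδ₀ hδ' with hG'
  -- degree bounds for the split graph
  have hdeg : ∀ w : W, δ₀ ≤ (G'.neighborSet w).ncard ∧ (G'.neighborSet w).ncard ≤ 2 * δ₀ - 1 := by
    intro w
    rw [hG', ncard_neighborSet_Gs]
    exact card_Sfin_bounds G δ₀ hδ₀ hδ' w.1 w.2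
  -- the pulled-back list assignment is `ε`-excessive
  have hexc : ∀ e' ∈ G'.edgeSet, 1 + ε ≤ ∑ c ∈ L (Sym2.map Sigma.fst e'), α c := by
    intro e' he'
    induction e' using Sym2.ind with
    | _ x y =>
      rw [SimpleGraph.mem_edgeSet, hG', Gs_adj] at he'
      rw [Sym2.map_pair_eq]
      exact hL _ ((SimpleGraph.mem_edgeSet G).mpr he'.1)
  obtain ⟨ω', hω'1, hω'2⟩ :=
    H W inferInstance G' hdeg C α (fun e' => L (Sym2.map Sigma.fst e')) hα hαa hexc
  refine ⟨fun e => ω' (Phi G δ₀ hδ₀ hδ' e), ?_, ?_⟩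
  · intro e he
    induction e using Sym2.ind with
    | _ u w =>
      have h := hω'1 _ (Phi_mem_edgeSet G δ₀ hδ₀ hδ' u w ((SimpleGraph.mem_edgeSet G).mp he))
      rwa [map_fst_Phi] at h
  · intro v c
    set T : Fin (k G δ₀ v) → Set (Sym2 W) :=
      fun i => G'.incidenceSet ⟨v, i⟩ ∩ {e' | ω' e' = c} with hT
    set A : Set (Sym2 V) := G.incidenceSet v ∩ {e | ω' (Phi G δ₀ hδ₀ hδ' e) = c} with hA
    have h1 : A.ncard ≤ ∑ i, (T i).ncard := by
      calc A.ncard = (Phi G δ₀ hδ₀ hδ' '' A).ncard :=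
            (Set.ncard_image_of_injective _ (Phi_injective G δ₀ hδ₀ hδ')).symm
        _ ≤ (⋃ i, T i).ncard :=
            Set.ncard_le_ncard (incidence_subset G δ₀ hδ₀ hδ' ω' v c) (Set.toFinite _)
        _ ≤ ∑ i, (T i).ncard := ncard_iUnion_le_sum T
    have h2 : ∀ i : Fin (k G δ₀ v),
        ((T i).ncard : ℝ) ≤ α c * ((Sfin G δ₀ hδ₀ hδ' v i).card : ℝ) := by
      intro i
      have h := hω'2 ⟨v, i⟩ c
      rwa [hG', ncard_neighborSet_Gs] at h
    have h3 : ∑ i, ((Sfin G δ₀ hδ₀ hδ' v i).card : ℝ) = (G.degree v : ℝ) := by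
      rw [← Nat.cast_sum, sum_card_Sfin]
    calc (A.ncard : ℝ) ≤ ((∑ i, (T i).ncard : ℕ) : ℝ) := by exact_mod_cast h1
      _ = ∑ i, ((T i).ncard : ℝ) := by push_cast; ring
      _ ≤ ∑ i, α c * ((Sfin G δ₀ hδ₀ hδ' v i).card : ℝ) :=
          Finset.sum_le_sum (fun i _ => h2 i)
      _ = α c * (G.degree v : ℝ) := by rw [← Finset.mul_sum, h3]
      _ = α c * ((G.neighborSet v).ncard : ℝ) := by rw [ncard_neighborSet_eq_degree]
end

section
/- For every fixed ε ∈ (0, 0.9] and a ∈ (0,1), every finite simple graph G with minimum degree δ(G) ≥ ⌈626·a⁻¹·ε⁻²·ln((aε)⁻¹)⌉ admits, for every ε-excessive list assignment L of G with tolerance function α satisfying min(α) ≥ a, an α-majority L-colouring. -/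
open Finset

private lemma sum_eq_card_ones {I : Type*} (s : Finset I) (x : I → ℝ)
    (h : ∀ j ∈ s, x j = 0 ∨ x j = 1) :
    ∑ j ∈ s, x j = ((s.filter (fun j => x j = 1)).card : ℝ) := by
  classical
  rw [← Finset.sum_boole]
  refine Finset.sum_congr rfl fun j hj => ?_
  rcases h j hj with h0 | h0 <;> simp [h0]

private lemma bf_kernel {I R E : Type*} [Fintype I] [DecidableEq I] [Fintype R] [Fintype E]
    (row : R → Finset I) (evar : E → Finset I) (F : Finset I)
    (M : Finset E) (A : Finset R) (hMA : M.card + A.card < F.card) :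
    ∃ z : (↥F → ℝ), z ≠ 0 ∧
      (∀ e : ↥M, ∑ i ∈ F.attach.filter (fun i : ↥F => (i:I) ∈ evar e.1), z i = 0) ∧
      (∀ r : ↥A, ∑ i ∈ F.attach.filter (fun i : ↥F => (i:I) ∈ row r.1), z i = 0) := by
  classical
  set φ : (↥F → ℝ) →ₗ[ℝ] (↥M → ℝ) × (↥A → ℝ) :=
    LinearMap.prod
      (LinearMap.pi (fun e => ∑ i ∈ F.attach.filter (fun i : ↥F => (i:I) ∈ evar e.1),
        LinearMap.proj i))
      (LinearMap.pi (fun r => ∑ i ∈ F.attach.filter (fun i : ↥F => (i:I) ∈ row r.1),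
        LinearMap.proj i)) with hφ
  have hninj : ¬ Function.Injective φ := by
    intro hinj
    have h1 := LinearMap.finrank_le_finrank_of_injective hinj
    rw [Module.finrank_pi, Module.finrank_prod, Module.finrank_pi, Module.finrank_pi] at h1
    simp only [Fintype.card_coe] at h1
    omega
  rw [← LinearMap.ker_eq_bot] at hninj
  obtain ⟨z, hz0, hzne⟩ := Submodule.ne_bot_iff _ |>.mp hninj
  have hz := LinearMap.mem_ker.mp hz0
  rw [hφ] at hz
  have h1 := congrArg Prod.fst hz
  have h2 := congrArg Prod.snd hz
  refine ⟨z, hzne, fun e => ?_, fun r => ?_⟩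
  · have := congrFun h1 e
    simpa [LinearMap.pi_apply, LinearMap.sum_apply, LinearMap.proj_apply] using this
  · have := congrFun h2 r
    simpa [LinearMap.pi_apply, LinearMap.sum_apply, LinearMap.proj_apply] using this

private lemma bf_transfer {I : Type*} [DecidableEq I] (F S : Finset I) (z : ↥F → ℝ) :
    ∑ i ∈ S, (if h : i ∈ F then z ⟨i, h⟩ else 0) =
      ∑ i ∈ F.attach.filter (fun i : ↥F => (i:I) ∈ S), z i := by
  classical
  have h1 : ∑ i ∈ S, (if h : i ∈ F then z ⟨i, h⟩ else 0)
      = ∑ i ∈ S.filter (· ∈ F), (if h : i ∈ F then z ⟨i, h⟩ else 0) := by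
    refine (Finset.sum_filter_of_ne fun i _ hne => ?_).symm
    by_contra h
    simp [h] at hne
  have h2 : S.filter (· ∈ F) = F.filter (· ∈ S) := by
    ext i; simp [and_comm]
  have h3 : ∑ i ∈ F.attach.filter (fun i : ↥F => (i:I) ∈ S), z i
      = ∑ i ∈ F.filter (· ∈ S), (if h : i ∈ F then z ⟨i, h⟩ else 0) := by
    rw [Finset.sum_filter, Finset.sum_filter,
      ← Finset.sum_attach F (fun j => if j ∈ S then (if h : j ∈ F then z ⟨j, h⟩ else 0) else 0)]
    refine Finset.sum_congr rfl fun i _ => ?_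
    by_cases h : (i:I) ∈ S <;> simp [h, i.prop]
  rw [h1, h2, h3]

section BF
variable {I R E : Type*} [Fintype I] [DecidableEq I] [Fintype R] [Fintype E]
    (row : R → Finset I) (evar : E → Finset I)

/-- Beck–Fiala style iterated rounding. -/
private lemma bf_round
    (hrow : ∀ i : I, ((Finset.univ : Finset R).filter (fun r => i ∈ row r)).card ≤ 2)
    (hdisj : ∀ e e' : E, e ≠ e' → Disjoint (evar e) (evar e')) :
    ∀ (n : ℕ) (x : I → ℝ),
      ((Finset.univ : Finset I).filter (fun i => x i ≠ 0 ∧ x i ≠ 1)).card ≤ n →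
      (∀ i, 0 ≤ x i) → (∀ i, x i ≤ 1) →
      (∀ e : E, ∃ k : ℤ, ∑ i ∈ evar e, x i = (k : ℝ)) →
      ∃ y : I → ℝ, (∀ i, y i = 0 ∨ y i = 1) ∧
        (∀ e : E, ∑ i ∈ evar e, y i = ∑ i ∈ evar e, x i) ∧
        (∀ r : R,
          (((row r).filter (fun i => x i ≠ 0 ∧ x i ≠ 1)).card ≤ 4 →
            ∑ i ∈ row r, y i ≤ (((row r).filter (fun i => x i = 1)).card : ℝ)
              + (((row r).filter (fun i => x i ≠ 0 ∧ x i ≠ 1)).card : ℝ)) ∧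
          (5 ≤ ((row r).filter (fun i => x i ≠ 0 ∧ x i ≠ 1)).card →
            ∑ i ∈ row r, y i ≤ (∑ i ∈ row r, x i) + 4)) := by
  classical
  intro n
  induction n with
  | zero =>
    intro x hF hx0 hx1 _
    have hint : ∀ i, x i = 0 ∨ x i = 1 := by
      intro i
      by_contra h
      push_neg at h
      have hmem : i ∈ (Finset.univ : Finset I).filter (fun i => x i ≠ 0 ∧ x i ≠ 1) := by
        simp [h.1, h.2]
      have := Finset.card_pos.mpr ⟨i, hmem⟩
      omega
    refine ⟨x, hint, fun e => rfl, fun r => ⟨fun _ => ?_, fun h5 => ?_⟩⟩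
    · have he : (row r).filter (fun i => x i ≠ 0 ∧ x i ≠ 1) = ∅ := by
        refine Finset.filter_false_of_mem fun i _ => ?_
        rcases hint i with h | h <;> simp [h]
      rw [sum_eq_card_ones (row r) x (fun j _ => hint j)]
      simp [he]
    · exfalso
      have he : (row r).filter (fun i => x i ≠ 0 ∧ x i ≠ 1) = ∅ := by
        refine Finset.filter_false_of_mem fun i _ => ?_
        rcases hint i with h | h <;> simp [h]
      rw [he] at h5; simp at h5
  | succ n ih =>
    intro x hF hx0 hx1 hint
    set F : Finset I := (Finset.univ : Finset I).filter (fun i => x i ≠ 0 ∧ x i ≠ 1) with hFdef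
    rcases F.eq_empty_or_nonempty with hFe | hFne
    · -- no fractional variables: x is already integral
      have hint' : ∀ i, x i = 0 ∨ x i = 1 := by
        intro i
        by_contra h
        push_neg at h
        have hmem : i ∈ F := by rw [hFdef]; simp [h.1, h.2]
        simp [hFe] at hmem
      refine ⟨x, hint', fun e => rfl, fun r => ⟨fun _ => ?_, fun h5 => ?_⟩⟩
      · have he : (row r).filter (fun i => x i ≠ 0 ∧ x i ≠ 1) = ∅ := by
          refine Finset.filter_false_of_mem fun i _ => ?_
          rcases hint' i with h | h <;> simp [h]
        rw [sum_eq_card_ones (row r) x (fun j _ => hint' j)]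
        simp [he]
      · exfalso
        have he : (row r).filter (fun i => x i ≠ 0 ∧ x i ≠ 1) = ∅ := by
          refine Finset.filter_false_of_mem fun i _ => ?_
          rcases hint' i with h | h <;> simp [h]
        rw [he] at h5; simp at h5
    · -- main case
      have hfilt : ∀ s : Finset I,
          s.filter (fun i => x i ≠ 0 ∧ x i ≠ 1) = s.filter (· ∈ F) := by
        intro s; ext i; simp [hFdef]
      have hxlt : ∀ i ∈ F, 0 < x i ∧ x i < 1 := by
        intro i hi
        have h := (Finset.mem_filter.mp hi).2
        exact ⟨lt_of_le_of_ne (hx0 i) (Ne.symm h.1), lt_of_le_of_ne (hx1 i) h.2⟩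
      -- every edge-constraint containing a fractional variable contains at least two
      have hF2 : ∀ e : E, ((evar e).filter (· ∈ F)).Nonempty →
          2 ≤ ((evar e).filter (· ∈ F)).card := by
        intro e hne
        by_contra hlt
        push_neg at hlt
        have h1 : ((evar e).filter (· ∈ F)).card = 1 :=
          le_antisymm (by omega) (Finset.card_pos.mpr hne)
        obtain ⟨i, hi⟩ := Finset.card_eq_one.mp h1
        have hsplit := Finset.sum_filter_add_sum_filter_not (evar e) (· ∈ F) x
        obtain ⟨k, hk⟩ := hint e
        rw [hi, Finset.sum_singleton] at hsplit
        have hones : ∑ j ∈ (evar e).filter (fun i => ¬ i ∈ F), x j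
            = ((((evar e).filter (fun i => ¬ i ∈ F)).filter (fun j => x j = 1)).card : ℝ) := by
          apply sum_eq_card_ones
          intro j hj
          have hjF := (Finset.mem_filter.mp hj).2
          by_contra hc
          push_neg at hc
          exact hjF (by rw [hFdef]; simp [hc.1, hc.2])
        have hiF : i ∈ F := by
          have : i ∈ (evar e).filter (· ∈ F) := by rw [hi]; exact Finset.mem_singleton_self i
          exact (Finset.mem_filter.mp this).2
        have hx := hxlt i hiF
        set m : ℕ := (((evar e).filter (fun i => ¬ i ∈ F)).filter (fun j => x j = 1)).card
        have hxi : x i = ((k - (m:ℤ) : ℤ) : ℝ) := by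
          push_cast
          rw [hones] at hsplit
          rw [hk] at hsplit
          linarith
        have h0 : (0:ℝ) < ((k - (m:ℤ) : ℤ) : ℝ) := hxi ▸ hx.1
        have h1' : ((k - (m:ℤ) : ℤ) : ℝ) < 1 := hxi ▸ hx.2
        have h0' : (0:ℤ) < k - m := by exact_mod_cast h0
        have h1'' : (k - m : ℤ) < 1 := by exact_mod_cast h1'
        omega
      -- the active constraint sets
      set M : Finset E := (Finset.univ : Finset E).filter
        (fun e => ((evar e).filter (· ∈ F)).Nonempty) with hMdef
      set A : Finset R := (Finset.univ : Finset R).filter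
        (fun r => 5 ≤ ((row r).filter (· ∈ F)).card) with hAdef
      have hMcard : 2 * M.card ≤ F.card := by
        have hdisj' : ∀ e ∈ M, ∀ e' ∈ M, e ≠ e' →
            Disjoint ((evar e).filter (· ∈ F)) ((evar e').filter (· ∈ F)) := fun e _ e' _ hne =>
          Disjoint.mono (Finset.filter_subset _ _) (Finset.filter_subset _ _) (hdisj e e' hne)
        calc 2 * M.card = ∑ _e ∈ M, 2 := by rw [Finset.sum_const, smul_eq_mul, mul_comm]
          _ ≤ ∑ e ∈ M, ((evar e).filter (· ∈ F)).card :=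
              Finset.sum_le_sum (fun e he => hF2 e (Finset.mem_filter.mp he).2)
          _ = (M.biUnion (fun e => (evar e).filter (· ∈ F))).card :=
              (Finset.card_biUnion hdisj').symm
          _ ≤ F.card := Finset.card_le_card (by
              intro i hi
              simp only [Finset.mem_biUnion] at hi
              obtain ⟨e, _, hie⟩ := hi
              exact (Finset.mem_filter.mp hie).2)
      have hAcard : 5 * A.card ≤ 2 * F.card := by
        have hsum : ∑ r : R, ((row r).filter (· ∈ F)).card ≤ 2 * F.card := by
          have h1 : ∀ r : R, ((row r).filter (· ∈ F)).card
              = ∑ i ∈ F, if i ∈ row r then 1 else 0 := by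
            intro r
            rw [show (row r).filter (· ∈ F) = F.filter (· ∈ row r) by ext i; simp [and_comm],
              Finset.card_filter]
          calc ∑ r : R, ((row r).filter (· ∈ F)).card
              = ∑ r : R, ∑ i ∈ F, (if i ∈ row r then 1 else 0) := Finset.sum_congr rfl fun r _ => h1 r
            _ = ∑ i ∈ F, ∑ r : R, (if i ∈ row r then 1 else 0) := Finset.sum_comm
            _ = ∑ i ∈ F, ((Finset.univ : Finset R).filter (fun r => i ∈ row r)).card := by
                refine Finset.sum_congr rfl fun i _ => ?_
                rw [Finset.card_filter]
            _ ≤ ∑ _i ∈ F, 2 := Finset.sum_le_sum fun i _ => hrow i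
            _ = 2 * F.card := by rw [Finset.sum_const, smul_eq_mul, mul_comm]
        calc 5 * A.card = ∑ _r ∈ A, 5 := by rw [Finset.sum_const, smul_eq_mul, mul_comm]
          _ ≤ ∑ r ∈ A, ((row r).filter (· ∈ F)).card :=
              Finset.sum_le_sum fun r hr => (Finset.mem_filter.mp hr).2
          _ ≤ ∑ r : R, ((row r).filter (· ∈ F)).card :=
              Finset.sum_le_sum_of_subset (Finset.subset_univ A)
          _ ≤ 2 * F.card := hsum
      have hFpos : 0 < F.card := Finset.card_pos.mpr hFne
      have hMA : M.card + A.card < F.card := by omega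
      obtain ⟨z, hzne, hker1, hker2⟩ := bf_kernel row evar F M A hMA
      set zz : I → ℝ := fun i => if h : i ∈ F then z ⟨i, h⟩ else 0 with hzzdef
      have hzzapp : ∀ i, zz i = if h : i ∈ F then z ⟨i, h⟩ else 0 := fun i => rfl
      have hzzF : ∀ i : ↥F, zz (i:I) = z i := by
        intro i; simp [hzzapp, i.prop]
      have hz_edge : ∀ e : E, ∑ i ∈ evar e, zz i = 0 := by
        intro e
        by_cases he : ((evar e).filter (· ∈ F)).Nonempty
        · have heM : e ∈ M := by rw [hMdef]; exact Finset.mem_filter.mpr ⟨Finset.mem_univ _, he⟩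
          have h0 : ∑ i ∈ evar e, zz i = ∑ i ∈ evar e, (if h : i ∈ F then z ⟨i, h⟩ else 0) :=
            Finset.sum_congr rfl fun i _ => hzzapp i
          rw [h0, bf_transfer F (evar e) z]
          exact hker1 ⟨e, heM⟩
        · refine Finset.sum_eq_zero fun i hi => ?_
          have hiF : i ∉ F := fun hiF => he ⟨i, Finset.mem_filter.mpr ⟨hi, hiF⟩⟩
          simp [hzzapp, hiF]
      have hz_row : ∀ r : R, 5 ≤ ((row r).filter (· ∈ F)).card → ∑ i ∈ row r, zz i = 0 := by
        intro r hr
        have hrA : r ∈ A := by rw [hAdef]; exact Finset.mem_filter.mpr ⟨Finset.mem_univ _, hr⟩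
        have h0 : ∑ i ∈ row r, zz i = ∑ i ∈ row r, (if h : i ∈ F then z ⟨i, h⟩ else 0) :=
          Finset.sum_congr rfl fun i _ => hzzapp i
        rw [h0, bf_transfer F (row r) z]
        exact hker2 ⟨r, hrA⟩
      -- pick the step length
      set P : Finset I := F.filter (fun i => zz i ≠ 0) with hPdef
      have hPne : P.Nonempty := by
        obtain ⟨i0, hi0⟩ := Function.ne_iff.mp hzne
        have hi0' : z i0 ≠ 0 := by simpa using hi0
        exact ⟨(i0:I), Finset.mem_filter.mpr ⟨i0.prop, by rw [hzzF i0]; exact hi0'⟩⟩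
      have hznP : ∀ i, i ∉ P → zz i = 0 := by
        intro i hiP
        by_contra h
        have hiF : i ∈ F := by
          by_contra hF'
          rw [hzzapp i, dif_neg hF'] at h
          exact h rfl
        exact hiP (Finset.mem_filter.mpr ⟨hiF, h⟩)
      set tfun : I → ℝ := fun i => if 0 < zz i then (1 - x i) / zz i else x i / (-zz i) with htdef
      have htfapp : ∀ i, tfun i = if 0 < zz i then (1 - x i) / zz i else x i / (-zz i) :=
        fun i => rfl
      have htf : ∀ i ∈ P, 0 < tfun i := by
        intro i hiP
        obtain ⟨hiF, hzi⟩ := Finset.mem_filter.mp hiP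
        have hx := hxlt i hiF
        rw [htfapp i]
        rcases lt_or_gt_of_ne hzi with hneg | hpos
        · rw [if_neg (not_lt.mpr hneg.le)]
          exact div_pos hx.1 (by linarith)
        · rw [if_pos hpos]
          exact div_pos (by linarith) hpos
      obtain ⟨j, hjP, hjmin⟩ := P.exists_min_image tfun hPne
      set t : ℝ := tfun j with htdef2
      have ht : 0 < t := htf j hjP
      set x' : I → ℝ := fun i => x i + t * zz i with hx'def
      have hx'app : ∀ i, x' i = x i + t * zz i := fun i => rfl
      have hchg : ∀ i, i ∉ P → x' i = x i := by
        intro i hiP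
        rw [hx'app i, hznP i hiP, mul_zero, add_zero]
      have hbnd : ∀ i, 0 ≤ x' i ∧ x' i ≤ 1 := by
        intro i
        by_cases hiP : i ∈ P
        · obtain ⟨hiF, hzi⟩ := Finset.mem_filter.mp hiP
          have hx := hxlt i hiF
          have htle : t ≤ tfun i := hjmin i hiP
          rw [hx'app i]
          rcases lt_or_gt_of_ne hzi with hneg | hpos
          · have h1 : tfun i * zz i = - x i := by
              rw [htfapp i, if_neg (not_lt.mpr hneg.le), div_mul_eq_mul_div,
                div_eq_iff (show -zz i ≠ 0 by linarith)]
              ring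
            have h2 : tfun i * zz i ≤ t * zz i := mul_le_mul_of_nonpos_right htle hneg.le
            constructor
            · linarith
            · have : t * zz i ≤ 0 := mul_nonpos_of_nonneg_of_nonpos ht.le hneg.le
              linarith
          · have h1 : tfun i * zz i = 1 - x i := by
              rw [htfapp i, if_pos hpos]
              field_simp
            have h2 : t * zz i ≤ tfun i * zz i := mul_le_mul_of_nonneg_right htle hpos.le
            constructor
            · have : 0 ≤ t * zz i := mul_nonneg ht.le hpos.le
              linarith
            · linarith
        · rw [hchg i hiP]; exact ⟨hx0 i, hx1 i⟩
      have hj01 : x' j = 0 ∨ x' j = 1 := by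
        obtain ⟨hjF, hzj⟩ := Finset.mem_filter.mp hjP
        rw [hx'app j]
        rcases lt_or_gt_of_ne hzj with hneg | hpos
        · left
          have h1 : t * zz j = - x j := by
            rw [htdef2, htfapp j, if_neg (not_lt.mpr hneg.le), div_mul_eq_mul_div,
              div_eq_iff (show -zz j ≠ 0 by linarith)]
            ring
          linarith
        · right
          have h1 : t * zz j = 1 - x j := by
            rw [htdef2, htfapp j, if_pos hpos]
            field_simp
          linarith
      have hF'sub : ∀ i, (x' i ≠ 0 ∧ x' i ≠ 1) → i ∈ F.erase j := by
        intro i hi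
        have hiF : i ∈ F := by
          by_contra hiF
          have hiP : i ∉ P := fun h => hiF (Finset.mem_filter.mp h).1
          have hxx : x' i = x i := hchg i hiP
          have hfr : ¬ (x i ≠ 0 ∧ x i ≠ 1) := by
            intro h
            exact hiF (by rw [hFdef]; simp [h.1, h.2])
          rw [hxx] at hi
          exact hfr hi
        have hij : i ≠ j := by
          rintro rfl
          rcases hj01 with h | h
          · exact hi.1 h
          · exact hi.2 h
        exact Finset.mem_erase.mpr ⟨hij, hiF⟩
      have hcard' : ((Finset.univ : Finset I).filter (fun i => x' i ≠ 0 ∧ x' i ≠ 1)).card ≤ n := by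
        have hsub : (Finset.univ : Finset I).filter (fun i => x' i ≠ 0 ∧ x' i ≠ 1) ⊆ F.erase j :=
          fun i hi => hF'sub i (Finset.mem_filter.mp hi).2
        have h1 := Finset.card_le_card hsub
        have h2 : (F.erase j).card = F.card - 1 :=
          Finset.card_erase_of_mem (Finset.mem_filter.mp hjP).1
        have h3 : F.card ≤ n + 1 := hF
        omega
      have hshift : ∀ S : Finset I, ∑ i ∈ S, x' i = (∑ i ∈ S, x i) + t * ∑ i ∈ S, zz i := by
        intro S
        simp only [hx'app]
        rw [Finset.sum_add_distrib, Finset.mul_sum]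
      have hint' : ∀ e : E, ∃ k : ℤ, ∑ i ∈ evar e, x' i = (k:ℝ) := by
        intro e
        obtain ⟨k, hk⟩ := hint e
        exact ⟨k, by rw [hshift, hz_edge e, mul_zero, add_zero, hk]⟩
      obtain ⟨y, hy01, hyE, hyR⟩ := ih x' hcard' (fun i => (hbnd i).1) (fun i => (hbnd i).2) hint'
      refine ⟨y, hy01, fun e => ?_, fun r => ⟨?_, ?_⟩⟩
      · rw [hyE e, hshift, hz_edge e, mul_zero, add_zero]
      · -- part 1 : few fractional variables in this row originally
        intro hc
        have hsubf : (row r).filter (fun i => x' i ≠ 0 ∧ x' i ≠ 1)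
            ⊆ (row r).filter (fun i => x i ≠ 0 ∧ x i ≠ 1) := by
          intro i hi
          obtain ⟨hir, hfr⟩ := Finset.mem_filter.mp hi
          have hiF := (Finset.mem_erase.mp (hF'sub i hfr)).2
          refine Finset.mem_filter.mpr ⟨hir, ?_⟩
          rw [hFdef] at hiF
          simpa using hiF
        have hc' : ((row r).filter (fun i => x' i ≠ 0 ∧ x' i ≠ 1)).card ≤ 4 :=
          le_trans (Finset.card_le_card hsubf) hc
        have h1 := (hyR r).1 hc'
        have f2 : ((row r).filter (fun i => x' i = 1)).card
              + ((row r).filter (fun i => x' i ≠ 0 ∧ x' i ≠ 1)).card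
            ≤ ((row r).filter (fun i => x i = 1)).card
              + ((row r).filter (fun i => x i ≠ 0 ∧ x i ≠ 1)).card := by
          rw [Finset.card_filter, Finset.card_filter, Finset.card_filter, Finset.card_filter,
            ← Finset.sum_add_distrib, ← Finset.sum_add_distrib]
          refine Finset.sum_le_sum fun i _ => ?_
          by_cases hiF : i ∈ F
          · have hfx : x i ≠ 0 ∧ x i ≠ 1 := by
              have := (Finset.mem_filter.mp hiF).2
              exact this
            have hR : ((if x i = 1 then 1 else 0) + (if x i ≠ 0 ∧ x i ≠ 1 then 1 else 0) : ℕ) = 1 := by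
              rw [if_neg hfx.2, if_pos hfx]
            rw [hR]
            by_cases h : x' i = 1
            · have : ¬ (x' i ≠ 0 ∧ x' i ≠ 1) := fun hh => hh.2 h
              rw [if_pos h, if_neg this]
            · rw [if_neg h]
              split_ifs <;> omega
          · have hiP : i ∉ P := fun h => hiF (Finset.mem_filter.mp h).1
            rw [hchg i hiP]
        calc ∑ i ∈ row r, y i
            ≤ (((row r).filter (fun i => x' i = 1)).card : ℝ)
              + (((row r).filter (fun i => x' i ≠ 0 ∧ x' i ≠ 1)).card : ℝ) := h1
          _ ≤ (((row r).filter (fun i => x i = 1)).card : ℝ)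
              + (((row r).filter (fun i => x i ≠ 0 ∧ x i ≠ 1)).card : ℝ) := by
              push_cast
              exact_mod_cast f2
      · -- part 2 : many fractional variables, row sum was preserved
        intro hc
        have hrF : 5 ≤ ((row r).filter (· ∈ F)).card := by
          rw [← hfilt]; exact hc
        have hrowsum : ∑ i ∈ row r, x' i = ∑ i ∈ row r, x i := by
          rw [hshift, hz_row r hrF, mul_zero, add_zero]
        by_cases hc' : ((row r).filter (fun i => x' i ≠ 0 ∧ x' i ≠ 1)).card ≤ 4
        · have h1 := (hyR r).1 hc'
          have hones : ((((row r).filter (fun i => x' i = 1)).card : ℝ)) ≤ ∑ i ∈ row r, x' i := by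
            have h2 : ((((row r).filter (fun i => x' i = 1)).card : ℝ))
                = ∑ i ∈ (row r).filter (fun i => x' i = 1), x' i := by
              rw [Finset.sum_congr rfl (fun i hi => (Finset.mem_filter.mp hi).2)]
              simp
            rw [h2]
            exact Finset.sum_le_sum_of_subset_of_nonneg (Finset.filter_subset _ _)
              (fun i _ _ => (hbnd i).1)
          have h3 : ∑ i ∈ row r, y i ≤ ∑ i ∈ row r, x' i + 4 := by
            refine h1.trans ?_
            have h4 : ((((row r).filter (fun i => x' i ≠ 0 ∧ x' i ≠ 1)).card : ℝ)) ≤ 4 := by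
              exact_mod_cast hc'
            linarith
          rw [hrowsum] at h3
          exact h3
        · have h2 := (hyR r).2 (by omega)
          rw [hrowsum] at h2
          exact h2
private lemma bf_round'
    (hrow : ∀ i : I, ((Finset.univ : Finset R).filter (fun r => i ∈ row r)).card ≤ 2)
    (hdisj : ∀ e e' : E, e ≠ e' → Disjoint (evar e) (evar e'))
    (x : I → ℝ) (hx0 : ∀ i, 0 ≤ x i) (hx1 : ∀ i, x i ≤ 1)
    (hint : ∀ e : E, ∃ k : ℤ, ∑ i ∈ evar e, x i = (k : ℝ)) :
    ∃ y : I → ℝ, (∀ i, y i = 0 ∨ y i = 1) ∧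
      (∀ e : E, ∑ i ∈ evar e, y i = ∑ i ∈ evar e, x i) ∧
      (∀ r : R, ∑ i ∈ row r, y i ≤ (∑ i ∈ row r, x i) + 4) := by
  classical
  obtain ⟨y, h1, h2, h3⟩ := bf_round row evar hrow hdisj (Fintype.card I) x
    ((Finset.card_filter_le _ _).trans (le_of_eq Finset.card_univ)) hx0 hx1 hint
  refine ⟨y, h1, h2, fun r => ?_⟩
  by_cases hc : ((row r).filter (fun i => x i ≠ 0 ∧ x i ≠ 1)).card ≤ 4
  · have h4 := (h3 r).1 hc
    have h5 : (((row r).filter (fun i => x i = 1)).card : ℝ) ≤ ∑ i ∈ row r, x i := by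
      have h6 : ∑ i ∈ (row r).filter (fun i => x i = 1), x i
          = (((row r).filter (fun i => x i = 1)).card : ℝ) := by
        rw [Finset.sum_congr rfl (fun i hi => (Finset.mem_filter.mp hi).2)]
        simp
      rw [← h6]
      exact Finset.sum_le_sum_of_subset_of_nonneg (Finset.filter_subset _ _) fun i _ _ => hx0 i
    have h7 : (((row r).filter (fun i => x i ≠ 0 ∧ x i ≠ 1)).card : ℝ) ≤ 4 := by
      exact_mod_cast hc
    linarith
  · exact (h3 r).2 (by omega)

end BF

/-- For fixed `ε ∈ (0, 0.9]` and `a ∈ (0,1)`, every finite simple graph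
with minimum degree at least `⌈626·a⁻¹·ε⁻²·ln((aε)⁻¹)⌉` admits, for every `ε`-excessive
list assignment `L` with tolerance function `α` satisfying `min(α) ≥ a`, an `α`-majority
`L`-colouring. -/
theorem alpha_majority_colouring_general_tolerances
    (ε a : ℝ) (hε : ε ∈ Set.Ioc (0 : ℝ) 0.9) (ha : a ∈ Set.Ioo (0 : ℝ) 1)
    {V : Type*} [Fintype V] [DecidableEq V] (G : SimpleGraph V) [DecidableRel G.Adj]
    (hδ : ∀ v : V, ⌈626 * a⁻¹ * (ε ^ 2)⁻¹ * Real.log (a * ε)⁻¹⌉₊ ≤ G.degree v)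
    (C : Type*) (α : C → ℝ)
    (hα : ∀ c, α c ∈ Set.Ioo (0 : ℝ) 1) (hmin : ∀ c, a ≤ α c)
    (L : Sym2 V → Finset C)
    (hL : ∀ e ∈ G.edgeSet, 1 + ε ≤ ∑ c ∈ L e, α c) :
    ∃ ω : Sym2 V → C,
      (∀ e ∈ G.edgeSet, ω e ∈ L e) ∧
      ∀ (v : V) (c : C),
        ((G.incidenceSet v ∩ {e | ω e = c}).ncard : ℝ) ≤ α c * (G.degree v : ℝ) := by
  classical
  obtain ⟨hε0, hε9⟩ := hε
  obtain ⟨ha0, ha1⟩ := ha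
  -- trivial case : no vertices
  cases isEmpty_or_nonempty V with
  | inl hV => exact ⟨fun e => isEmptyElim e, fun e _ => isEmptyElim e, fun v _ => isEmptyElim v⟩
  | inr hV =>
  -- basic numeric facts
  have haε : a * ε < 0.9 := by nlinarith
  have hlog : (0.1 : ℝ) ≤ Real.log (a * ε)⁻¹ := by
    have h1 : Real.log (a * ε) ≤ a * ε - 1 := Real.log_le_sub_one_of_pos (by positivity)
    rw [Real.log_inv]
    linarith
  have hXpos : (0:ℝ) < 626 * a⁻¹ * (ε ^ 2)⁻¹ * Real.log (a * ε)⁻¹ := by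
    have : (0:ℝ) < 626 * a⁻¹ * (ε ^ 2)⁻¹ := by positivity
    nlinarith
  have hdegX : ∀ v : V, (626 * a⁻¹ * (ε ^ 2)⁻¹ * Real.log (a * ε)⁻¹ : ℝ) ≤ G.degree v := by
    intro v
    refine le_trans (Nat.le_ceil _) ?_
    exact_mod_cast hδ v
  have hdeg : ∀ v : V, (62.6 : ℝ) ≤ a * ε ^ 2 * G.degree v := by
    intro v
    have h1 : (626 * a⁻¹ * (ε ^ 2)⁻¹ * (0.1:ℝ)) ≤ (G.degree v : ℝ) := by
      refine le_trans ?_ (hdegX v)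
      gcongr
    have h2 : a * ε ^ 2 * (626 * a⁻¹ * (ε ^ 2)⁻¹ * (0.1:ℝ)) = 62.6 := by
      field_simp
      ring
    calc (62.6 : ℝ) = a * ε ^ 2 * (626 * a⁻¹ * (ε ^ 2)⁻¹ * (0.1:ℝ)) := h2.symm
      _ ≤ a * ε ^ 2 * G.degree v := by gcongr
  have hdeg1 : ∀ v : V, 0 < G.degree v := by
    intro v
    have := hδ v
    have h1 : 0 < ⌈626 * a⁻¹ * (ε ^ 2)⁻¹ * Real.log (a * ε)⁻¹⌉₊ := Nat.ceil_pos.mpr hXpos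
    omega
  -- get a default colour
  obtain ⟨v₀⟩ := hV
  obtain ⟨u₀, hadj⟩ := (G.degree_pos_iff_exists_adj v₀).mp (hdeg1 v₀)
  have he₀ : s(v₀, u₀) ∈ G.edgeSet := hadj
  have hLne : (L s(v₀, u₀)).Nonempty := by
    rcases (L s(v₀, u₀)).eq_empty_or_nonempty with h | h
    · exfalso
      have := hL _ he₀
      rw [h] at this
      simp at this
      linarith
    · exact h
  obtain ⟨c₀, hc₀⟩ := hLne
  -- the index set of (edge, colour) variables
  set T : Finset C := G.edgeFinset.biUnion L with hTdef
  set J : Finset (Sym2 V × C) :=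
    G.edgeFinset.biUnion (fun e => (L e).image (fun c => (e, c))) with hJdef
  have hJmem : ∀ p : Sym2 V × C, p ∈ J ↔ p.1 ∈ G.edgeFinset ∧ p.2 ∈ L p.1 := by
    intro p
    rw [hJdef]
    simp only [Finset.mem_biUnion, Finset.mem_image]
    constructor
    · rintro ⟨e, he, c, hc, rfl⟩
      exact ⟨he, hc⟩
    · rintro ⟨h1, h2⟩
      exact ⟨p.1, h1, p.2, h2, Prod.mk.eta⟩
  have hp₀ : ((s(v₀, u₀), c₀) : Sym2 V × C) ∈ J :=
    (hJmem _).mpr ⟨SimpleGraph.mem_edgeFinset.mpr he₀, hc₀⟩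
  -- rows and edge-constraints
  set row : V × ↥T → Finset ↥J := fun vc =>
    Finset.univ.filter (fun p : ↥J => vc.1 ∈ (p : Sym2 V × C).1 ∧ (p : Sym2 V × C).2 = (vc.2 : C))
    with hrowdef
  set evar : ↥G.edgeFinset → Finset ↥J := fun e =>
    Finset.univ.filter (fun p : ↥J => (p : Sym2 V × C).1 = (e : Sym2 V)) with hevardef
  have hrow2 : ∀ i : ↥J,
      ((Finset.univ : Finset (V × ↥T)).filter (fun r => i ∈ row r)).card ≤ 2 := by
    rintro ⟨⟨e, c⟩, hi⟩
    obtain ⟨⟨uu, ww⟩, rfl⟩ := Quot.exists_rep e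
    obtain ⟨he, hc⟩ := (hJmem _).mp hi
    have hcT : c ∈ T := by rw [hTdef]; exact Finset.mem_biUnion.mpr ⟨_, he, hc⟩
    refine le_trans (Finset.card_le_card
      (show _ ⊆ ({(uu, ⟨c, hcT⟩), (ww, ⟨c, hcT⟩)} : Finset (V × ↥T)) from ?_))
      (le_trans (Finset.card_insert_le _ _) (by simp))
    intro r hr
    have hcond := (Finset.mem_filter.mp hr).2
    rw [hrowdef] at hcond
    obtain ⟨hv, hcc⟩ := (Finset.mem_filter.mp hcond).2
    have hr2 : r.2 = ⟨c, hcT⟩ := Subtype.ext hcc.symm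
    have hv' : r.1 ∈ s(uu, ww) := hv
    rw [Sym2.mem_iff] at hv'
    rcases hv' with h | h
    · exact Finset.mem_insert.mpr (Or.inl (Prod.ext h hr2))
    · refine Finset.mem_insert.mpr (Or.inr ?_)
      rw [Finset.mem_singleton]
      exact Prod.ext h hr2
  have hdisj : ∀ e e' : ↥G.edgeFinset, e ≠ e' → Disjoint (evar e) (evar e') := by
    intro e e' hne
    rw [Finset.disjoint_left]
    intro p hp hp'
    rw [hevardef] at hp hp'
    have h1 := (Finset.mem_filter.mp hp).2
    have h2 := (Finset.mem_filter.mp hp').2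
    exact hne (Subtype.ext (h1 ▸ h2))
  -- the fractional solution
  set x : ↥J → ℝ := fun p => α (p : Sym2 V × C).2 / ∑ c ∈ L (p : Sym2 V × C).1, α c with hxdef
  have hS : ∀ e ∈ G.edgeFinset, (0:ℝ) < ∑ c ∈ L e, α c := by
    intro e he
    have := hL e (SimpleGraph.mem_edgeFinset.mp he)
    linarith
  have hx0 : ∀ p : ↥J, 0 ≤ x p := by
    intro p
    have h1 := (hJmem _).mp p.prop
    exact div_nonneg (hα _).1.le (hS _ h1.1).le
  have hx1 : ∀ p : ↥J, x p ≤ 1 := by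
    intro p
    have h1 := (hJmem _).mp p.prop
    rw [hxdef, div_le_one (hS _ h1.1)]
    exact Finset.single_le_sum (f := α) (fun c _ => (hα c).1.le) h1.2
  have hxsum : ∀ e : ↥G.edgeFinset, ∑ p ∈ evar e, x p = 1 := by
    intro e
    have h1 : ∑ c ∈ L (e : Sym2 V), (α c / ∑ c' ∈ L (e : Sym2 V), α c') = ∑ p ∈ evar e, x p := by
      refine Finset.sum_bij
        (fun c hc => (⟨((e : Sym2 V), c), (hJmem _).mpr ⟨e.prop, hc⟩⟩ : ↥J)) ?_ ?_ ?_ ?_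
      · intro c hc
        rw [hevardef]
        exact Finset.mem_filter.mpr ⟨Finset.mem_univ _, rfl⟩
      · intro c hc c' hc' h
        simpa using congrArg (fun p : ↥J => (p : Sym2 V × C).2) h
      · intro p hp
        rw [hevardef] at hp
        have h1 := (Finset.mem_filter.mp hp).2
        have h2 := ((hJmem _).mp p.prop).2
        refine ⟨(p : Sym2 V × C).2, by rw [← h1]; exact h2, ?_⟩
        exact Subtype.ext (Prod.ext h1.symm rfl)
      · intro c hc
        rfl
    rw [← h1, ← Finset.sum_div, div_self (ne_of_gt (hS _ e.prop))]
  obtain ⟨y, hy01, hyE, hyR⟩ := bf_round' row evar hrow2 hdisj x hx0 hx1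
    (fun e => ⟨1, by rw [hxsum e]; norm_num⟩)
  -- extract the colouring
  have hone : ∀ e (he : e ∈ G.edgeFinset),
      ∃ p : ↥J, (evar ⟨e, he⟩).filter (fun p => y p = 1) = {p} := by
    intro e he
    apply Finset.card_eq_one.mp
    have h1 : ∑ p ∈ evar ⟨e, he⟩, y p = 1 := by rw [hyE ⟨e, he⟩, hxsum ⟨e, he⟩]
    rw [sum_eq_card_ones _ y (fun p _ => hy01 p)] at h1
    have h2 : ((1:ℕ):ℝ) = (((evar ⟨e, he⟩).filter (fun p => y p = 1)).card : ℝ) := by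
      exact_mod_cast h1.symm
    exact_mod_cast h2.symm
  set ω : Sym2 V → C := fun e =>
    if h : e ∈ G.edgeFinset then (((hone e h).choose : ↥J) : Sym2 V × C).2 else c₀ with hωdef
  have hωspec : ∀ e (he : e ∈ G.edgeFinset),
      ω e ∈ L e ∧ ∃ p : ↥J, (p : Sym2 V × C) = (e, ω e) ∧ y p = 1 := by
    intro e he
    have hch := (hone e he).choose_spec
    set p := (hone e he).choose with hpdef
    have hpmem : p ∈ (evar ⟨e, he⟩).filter (fun p => y p = 1) :=
      (Finset.eq_singleton_iff_unique_mem.mp hch).1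
    obtain ⟨hpe, hpy⟩ := Finset.mem_filter.mp hpmem
    have hpe1 : (p : Sym2 V × C).1 = e := by
      rw [hevardef] at hpe
      exact (Finset.mem_filter.mp hpe).2
    have hωe : ω e = (p : Sym2 V × C).2 := by rw [hωdef]; simp [he]; rfl
    constructor
    · rw [hωe, ← hpe1]
      exact ((hJmem _).mp p.prop).2
    · exact ⟨p, by rw [hωe, ← hpe1], hpy⟩
  -- properties of the chosen variable itself
  have hchoose : ∀ e (he : e ∈ G.edgeFinset),
      (((hone e he).choose : ↥J) : Sym2 V × C).1 = e ∧ y (hone e he).choose = 1 ∧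
        ω e = (((hone e he).choose : ↥J) : Sym2 V × C).2 := by
    intro e he
    have hch := (hone e he).choose_spec
    have hpmem : (hone e he).choose ∈ (evar ⟨e, he⟩).filter (fun p => y p = 1) :=
      (Finset.eq_singleton_iff_unique_mem.mp hch).1
    obtain ⟨hpe, hpy⟩ := Finset.mem_filter.mp hpmem
    have hpe1 : (((hone e he).choose : ↥J) : Sym2 V × C).1 = e := by
      simp only [hevardef, Finset.mem_filter] at hpe
      exact hpe.2
    exact ⟨hpe1, hpy, by rw [hωdef]; simp [he]⟩
  refine ⟨ω, fun e he => (hωspec e (SimpleGraph.mem_edgeFinset.mpr he)).1, ?_⟩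
  intro v c
  by_cases hcT : c ∈ T
  · -- main case
    set r₀ : V × ↥T := (v, ⟨c, hcT⟩) with hr₀def
    set Fe : Finset (Sym2 V) := (G.incidenceFinset v).filter (fun e => ω e = c) with hFedef
    have hset : G.incidenceSet v ∩ {e | ω e = c} = ↑Fe := by
      rw [hFedef]
      ext e
      simp only [Set.mem_inter_iff, Set.mem_setOf_eq, Finset.coe_filter,
        SimpleGraph.mem_incidenceFinset]
    have hd0 : (0:ℝ) ≤ (G.degree v : ℝ) := Nat.cast_nonneg _
    have h1ε : (0:ℝ) < 1 + ε := by linarith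
    -- counting edges at v coloured c against row r₀
    have hcount : (Fe.card : ℝ) ≤ ((row r₀).filter (fun p => y p = 1)).card := by
      have hinj : Fe.card ≤ ((row r₀).filter (fun p => y p = 1)).card := by
        refine Finset.card_le_card_of_injOn
          (fun e => if h : e ∈ G.edgeFinset then (hone e h).choose else ⟨(s(v₀, u₀), c₀), hp₀⟩)
          ?_ ?_
        · intro e he
          rw [hFedef] at he
          obtain ⟨hei, heω⟩ := Finset.mem_filter.mp he
          rw [SimpleGraph.mem_incidenceFinset] at hei
          have heE : e ∈ G.edgeFinset :=
            SimpleGraph.mem_edgeFinset.mpr (G.incidenceSet_subset v hei)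
          have hvmem : v ∈ e := hei.2
          obtain ⟨hc1, hc2, hc3⟩ := hchoose e heE
          simp only [dif_pos heE]
          refine Finset.mem_filter.mpr ⟨?_, hc2⟩
          rw [hrowdef]
          refine Finset.mem_filter.mpr ⟨Finset.mem_univ _, ?_, ?_⟩
          · rw [hc1]; exact hvmem
          · rw [← hc3, heω]
        · intro e he e' he' hee
          rw [hFedef] at he he'
          have heE : e ∈ G.edgeFinset := by
            have := (Finset.mem_filter.mp he).1
            rw [SimpleGraph.mem_incidenceFinset] at this
            exact SimpleGraph.mem_edgeFinset.mpr (G.incidenceSet_subset v this)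
          have heE' : e' ∈ G.edgeFinset := by
            have := (Finset.mem_filter.mp he').1
            rw [SimpleGraph.mem_incidenceFinset] at this
            exact SimpleGraph.mem_edgeFinset.mpr (G.incidenceSet_subset v this)
          simp only [dif_pos heE, dif_pos heE'] at hee
          have h1 := (hchoose e heE).1
          have h2 := (hchoose e' heE').1
          rw [← h1, ← h2, hee]
      exact_mod_cast hinj
    -- the row sum of x is small
    have hrowx : ∑ p ∈ row r₀, x p ≤ α c / (1 + ε) * (G.degree v : ℝ) := by
      have hterm : ∀ p ∈ row r₀, x p ≤ α c / (1 + ε) := by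
        intro p hp
        rw [hrowdef] at hp
        obtain ⟨hv, hcc⟩ := (Finset.mem_filter.mp hp).2
        have hpE := ((hJmem _).mp p.prop).1
        have hSe : 1 + ε ≤ ∑ c' ∈ L (p : Sym2 V × C).1, α c' :=
          hL _ (SimpleGraph.mem_edgeFinset.mp hpE)
        have : x p = α c / ∑ c' ∈ L (p : Sym2 V × C).1, α c' := by
          rw [hxdef]
          simp only []
          rw [hcc]
        rw [this]
        gcongr
        exact (hα c).1.le
      have hcardrow : (row r₀).card ≤ G.degree v := by
        rw [← SimpleGraph.card_incidenceFinset_eq_degree]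
        refine Finset.card_le_card_of_injOn (fun p => (p : Sym2 V × C).1) ?_ ?_
        · intro p hp
          rw [hrowdef] at hp
          obtain ⟨hv, hcc⟩ := (Finset.mem_filter.mp hp).2
          have hpE := ((hJmem _).mp p.prop).1
          show (p : Sym2 V × C).1 ∈ (G.incidenceFinset v : Set (Sym2 V))
          rw [Finset.mem_coe, SimpleGraph.mem_incidenceFinset]
          exact ⟨SimpleGraph.mem_edgeFinset.mp hpE, hv⟩
        · intro p hp q hq hpq
          rw [hrowdef] at hp hq
          have hp2 := ((Finset.mem_filter.mp hp).2).2
          have hq2 := ((Finset.mem_filter.mp hq).2).2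
          exact Subtype.ext (Prod.ext hpq (by rw [hp2, hq2]))
      calc ∑ p ∈ row r₀, x p ≤ (row r₀).card • (α c / (1 + ε)) :=
            Finset.sum_le_card_nsmul _ _ _ hterm
        _ = ((row r₀).card : ℝ) * (α c / (1 + ε)) := nsmul_eq_mul _ _
        _ ≤ (G.degree v : ℝ) * (α c / (1 + ε)) := by
            have h0 : (0:ℝ) ≤ α c / (1 + ε) := div_nonneg (hα c).1.le h1ε.le
            have hcc : ((row r₀).card : ℝ) ≤ (G.degree v : ℝ) := by exact_mod_cast hcardrow
            exact mul_le_mul_of_nonneg_right hcc h0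
        _ = α c / (1 + ε) * (G.degree v : ℝ) := mul_comm _ _
    -- final arithmetic
    have key : 4 * (1 + ε) ≤ α c * (G.degree v : ℝ) * ε := by
      have t1 : 0 ≤ a * ε * (G.degree v : ℝ) * (0.9 - ε) := by
        have : (0:ℝ) ≤ 0.9 - ε := by linarith
        positivity
      have t2 : 0 ≤ (α c - a) * ε * (G.degree v : ℝ) := by
        have : (0:ℝ) ≤ α c - a := by linarith [hmin c]
        positivity
      nlinarith [hdeg v]
    have final : α c / (1 + ε) * (G.degree v : ℝ) + 4 ≤ α c * (G.degree v : ℝ) := by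
      have expand : α c * (G.degree v : ℝ)
          = α c / (1 + ε) * (G.degree v : ℝ) + α c * (G.degree v : ℝ) * ε / (1 + ε) := by
        field_simp
      rw [expand]
      have h4 : (4:ℝ) ≤ α c * (G.degree v : ℝ) * ε / (1 + ε) := by
        rw [le_div_iff₀ h1ε]
        linarith [key]
      linarith
    calc ((G.incidenceSet v ∩ {e | ω e = c}).ncard : ℝ)
        = (Fe.card : ℝ) := by rw [hset, Set.ncard_coe_finset]
      _ ≤ (((row r₀).filter (fun p => y p = 1)).card : ℝ) := hcount
      _ = ∑ p ∈ row r₀, y p := (sum_eq_card_ones _ y (fun p _ => hy01 p)).symm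
      _ ≤ (∑ p ∈ row r₀, x p) + 4 := hyR r₀
      _ ≤ α c / (1 + ε) * (G.degree v : ℝ) + 4 := by linarith [hrowx]
      _ ≤ α c * (G.degree v : ℝ) := final
  · -- colour not on any list : no edge gets it
    have hempty : G.incidenceSet v ∩ {e | ω e = c} = ∅ := by
      ext e
      simp only [Set.mem_inter_iff, Set.mem_setOf_eq, Set.mem_empty_iff_false, iff_false,
        not_and]
      intro h1 h2
      have he : e ∈ G.edgeFinset := SimpleGraph.mem_edgeFinset.mpr (G.incidenceSet_subset v h1)
      have := (hωspec e he).1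
      rw [h2] at this
      exact hcT (by rw [hTdef]; exact Finset.mem_biUnion.mpr ⟨e, he, this⟩)
    rw [hempty]
    simp only [Set.ncard_empty, Nat.cast_zero]
    exact mul_nonneg (hα c).1.le (Nat.cast_nonneg _)
end

section
/- For any positive integer z and any integers a, b, c, d with b − a = d − c ≥ 0 and |(a+b)/2 − z/2| ≥ |(c+d)/2 − z/2|, it holds that ∑_{i=a}^{b} C(z,i) ≤ ∑_{i=c}^{d} C(z,i), where the binomial coefficient C(z,i) is taken to be 0 whenever i < 0 or i > z. -/
/-- The binomial coefficient `C(z,i)` for an integer index `i`, extended by `0` whenever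
`i < 0` or `i > z`. -/
def extChoose (z : ℕ) (i : ℤ) : ℕ :=
  if 0 ≤ i ∧ i ≤ (z : ℤ) then z.choose i.toNat else 0

lemma choose_mono_half {z r s : ℕ} (hrs : r ≤ s) (h : 2 * s ≤ z) :
    z.choose r ≤ z.choose s := by
  induction s with
  | zero => simp [Nat.le_zero.mp hrs]
  | succ n ih =>
    rcases Nat.lt_or_ge r (n+1) with h' | h'
    · exact (ih (by omega) (by omega)).trans
        (Nat.choose_le_succ_of_lt_half_left (by omega))
    · have : r = n + 1 := by omega
      simp [this]

lemma choose_le_of_central {z r m : ℕ} (hr : r ≤ m) (hr2 : r ≤ z - m) (hm : m ≤ z) :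
    z.choose r ≤ z.choose m := by
  rcases le_or_gt (2 * m) z with h | h
  · exact choose_mono_half hr h
  · rw [← Nat.choose_symm hm]
    exact choose_mono_half hr2 (by omega)

lemma extChoose_symm (z : ℕ) (i : ℤ) : extChoose z ((z : ℤ) - i) = extChoose z i := by
  unfold extChoose
  by_cases h : 0 ≤ i ∧ i ≤ (z : ℤ)
  · rw [if_pos (by omega), if_pos h]
    have h1 : ((z:ℤ) - i).toNat = z - i.toNat := by omega
    rw [h1, Nat.choose_symm (by omega)]
  · rw [if_neg (by omega), if_neg h]

/-- key step: moving a window left by one when its center is > z/2 increases extChoose. -/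
lemma extChoose_step {z : ℕ} {a b : ℤ} (hab : a ≤ b) (h : (z : ℤ) + 2 ≤ a + b) :
    extChoose z b ≤ extChoose z (a - 1) := by
  by_cases hb : b ≤ (z : ℤ)
  · have hb0 : 0 ≤ b := by omega
    have ha0 : 0 ≤ a - 1 := by omega
    have ha1 : a - 1 ≤ (z : ℤ) := by omega
    unfold extChoose
    rw [if_pos ⟨hb0, hb⟩, if_pos ⟨ha0, ha1⟩,
      ← Nat.choose_symm (show b.toNat ≤ z by omega)]
    exact choose_le_of_central (by omega) (by omega) (by omega)
  · unfold extChoose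
    rw [if_neg (by omega)]
    exact Nat.zero_le _

lemma sum_shift_left (z : ℕ) : ∀ (k : ℕ) (a b : ℤ), a ≤ b → (z : ℤ) + 2 * k ≤ a + b →
    ∑ i ∈ Finset.Icc a b, extChoose z i ≤
      ∑ i ∈ Finset.Icc (a - k) (b - k), extChoose z i := by
  intro k
  induction k with
  | zero => intro a b _ _; simp
  | succ n ih =>
    intro a b hab h
    have step : ∑ i ∈ Finset.Icc a b, extChoose z i ≤
        ∑ i ∈ Finset.Icc (a - 1) (b - 1), extChoose z i := by
      have e0 : Finset.Ico a b = Finset.Ioc (a - 1) (b - 1) := by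
        ext x; simp
      have e1 : Finset.Icc a b = insert b (Finset.Ico a b) :=
        (Finset.Ico_insert_right hab).symm
      have e2 : Finset.Icc (a - 1) (b - 1) = insert (a - 1) (Finset.Ico a b) := by
        rw [e0]; exact (Finset.Ioc_insert_left (by omega)).symm
      rw [e1, e2, Finset.sum_insert (by simp), Finset.sum_insert (by simp)]
      exact Nat.add_le_add_right (extChoose_step hab (by omega)) _
    refine step.trans ?_
    have := ih (a - 1) (b - 1) (by omega) (by push_cast; push_cast at h; omega)
    have e : ∀ x : ℤ, x - 1 - n = x - (n + 1 : ℕ) := by intro x; push_cast; ring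
    rwa [e a, e b] at this

lemma sum_reflect (z : ℕ) (a b : ℤ) :
    ∑ i ∈ Finset.Icc a b, extChoose z i =
      ∑ i ∈ Finset.Icc ((z : ℤ) - b) ((z : ℤ) - a), extChoose z i := by
  refine Finset.sum_nbij' (fun i => (z : ℤ) - i) (fun i => (z : ℤ) - i) ?_ ?_ ?_ ?_ ?_
  · intro i hi; simp at hi ⊢; omega
  · intro i hi; simp at hi ⊢; omega
  · intro i _; ring
  · intro i _; ring
  · intro i _; exact (extChoose_symm z i).symm

lemma main_aux (z : ℕ) (a b c d : ℤ) (hab : a ≤ b) (h1 : b - a = d - c)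
    (hv : (z : ℤ) ≤ c + d) (huv : c + d ≤ a + b) :
    ∑ i ∈ Finset.Icc a b, extChoose z i ≤ ∑ i ∈ Finset.Icc c d, extChoose z i := by
  have hk : c = a - ((a - c).toNat : ℤ) ∧ d = b - ((a - c).toNat : ℤ) := by
    constructor <;> omega
  obtain ⟨hc, hd⟩ := hk
  rw [hc, hd]
  exact sum_shift_left z (a - c).toNat a b hab (by omega)

/-- A run of consecutive binomial coefficients in row `z` of Pascal's
triangle has a sum which is larger the more centrally it is located. -/
theorem sum_extChoose_le_of_more_central
    (z : ℕ) (hz : 0 < z) (a b c d : ℤ)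
    (h1 : b - a = d - c) (h2 : 0 ≤ b - a)
    (h3 : |((c : ℚ) + d) / 2 - (z : ℚ) / 2| ≤ |((a : ℚ) + b) / 2 - (z : ℚ) / 2|) :
    ∑ i ∈ Finset.Icc a b, extChoose z i ≤ ∑ i ∈ Finset.Icc c d, extChoose z i := by
  have hZ : |c + d - (z : ℤ)| ≤ |a + b - (z : ℤ)| := by
    have e : ∀ x y : ℤ, ((x : ℚ) + y) / 2 - (z : ℚ) / 2 = ((x + y - (z : ℤ) : ℤ) : ℚ) / 2 := by
      intro x y; push_cast; ring
    rw [e c d, e a b, abs_div, abs_div] at h3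
    have h4 : |((c + d - (z:ℤ) : ℤ) : ℚ)| ≤ |((a + b - (z:ℤ) : ℤ) : ℚ)| := by
      have h2 : (0:ℚ) < |(2:ℚ)| := by norm_num
      exact (div_le_div_iff_of_pos_right h2).mp h3
    rw [← Int.cast_abs, ← Int.cast_abs] at h4
    exact_mod_cast h4
  rcases le_or_gt 0 (a + b - (z : ℤ)) with hu | hu <;>
    rcases le_or_gt 0 (c + d - (z : ℤ)) with hv | hv
  · exact main_aux z a b c d (by omega) h1 (by omega)
      (by rw [abs_of_nonneg hu, abs_of_nonneg hv] at hZ; omega)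
  · rw [sum_reflect z c d]
    exact main_aux z a b ((z:ℤ)-d) ((z:ℤ)-c) (by omega) (by omega) (by omega)
      (by rw [abs_of_nonneg hu, abs_of_neg hv] at hZ; omega)
  · rw [sum_reflect z a b]
    exact main_aux z ((z:ℤ)-b) ((z:ℤ)-a) c d (by omega) (by omega) (by omega)
      (by rw [abs_of_neg hu, abs_of_nonneg hv] at hZ; omega)
  · rw [sum_reflect z a b, sum_reflect z c d]
    exact main_aux z ((z:ℤ)-b) ((z:ℤ)-a) ((z:ℤ)-d) ((z:ℤ)-c) (by omega) (by omega) (by omega)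
      (by rw [abs_of_neg hu, abs_of_neg hv] at hZ; omega)
end

section
/- Let r, x, y, z be nonnegative integers satisfying x + y + z ≥ r, x + y ≤ r − 1, x + y + z ≤ 2r − 2, y + z ≥ r and x + z ≥ r. Then ∑_{i=r−y}^{r−1} C(z,i) ≤ ∑_{i=r−x−y}^{r−x−1} C(z,i), where the binomial coefficient C(z,i) is taken to be 0 whenever i < 0 or i > z. -/
/-- Step: binomial coefficients increase up to the middle. -/
lemma choose_step_aux (z m : ℕ) (h : 2 * m + 1 ≤ z) : z.choose m ≤ z.choose (m + 1) := by
  have e := Nat.choose_succ_right_eq z m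
  have h1 : z.choose m * (m + 1) ≤ z.choose (m + 1) * (m + 1) := by
    calc z.choose m * (m + 1) ≤ z.choose m * (z - m) :=
          Nat.mul_le_mul_left _ (by omega)
      _ = z.choose (m + 1) * (m + 1) := e.symm
  exact Nat.le_of_mul_le_mul_right h1 (Nat.succ_pos m)

lemma choose_le_half (z k l : ℕ) (hkl : k ≤ l) (hl : 2 * l ≤ z + 1) :
    z.choose k ≤ z.choose l := by
  induction l with
  | zero => simp [Nat.le_zero.mp hkl]
  | succ l ih =>
    rcases Nat.eq_or_lt_of_le hkl with h1 | h1
    · subst h1; exact le_rfl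
    · exact (ih (by omega) (by omega)).trans (choose_step_aux z l (by omega))

lemma choose_mono' (z k l : ℕ) (hkl : k ≤ l) (h : k + l ≤ z) :
    z.choose k ≤ z.choose l := by
  by_cases hc : 2 * l ≤ z + 1
  · exact choose_le_half z k l hkl hc
  · have hlz : l ≤ z := by omega
    rw [← Nat.choose_symm hlz]
    exact choose_le_half z k (z - l) (by omega) (by omega)

lemma choose_dec (z a b : ℕ) (hab : a ≤ b) (h : z ≤ a + b) :
    z.choose b ≤ z.choose a := by
  by_cases hbz : b ≤ z
  · rw [← Nat.choose_symm hbz]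
    exact choose_mono' z (z - b) a (by omega) (by omega)
  · simp [Nat.choose_eq_zero_of_lt (by omega : z < b)]

/-- Binomial coefficient extended to integer lower index by zero. -/
def gchoose (z : ℕ) (n : ℤ) : ℕ := if 0 ≤ n then z.choose n.toNat else 0

lemma gchoose_symm (z : ℕ) (n : ℤ) : gchoose z n = gchoose z ((z : ℤ) - n) := by
  unfold gchoose
  split_ifs with h1 h2 h2
  · by_cases hn : n.toNat ≤ z
    · rw [← Nat.choose_symm hn]
      congr 1
      omega
    · rw [Nat.choose_eq_zero_of_lt (by omega : z < n.toNat),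
        Nat.choose_eq_zero_of_lt (by omega : z < ((z:ℤ) - n).toNat)]
  · rw [Nat.choose_eq_zero_of_lt (by omega : z < n.toNat)]
  · rw [Nat.choose_eq_zero_of_lt (by omega : z < ((z:ℤ) - n).toNat)]
  · rfl

lemma gchoose_mono (z : ℕ) (a b : ℤ) (hab : a ≤ b) (h : a + b ≤ (z : ℤ)) :
    gchoose z a ≤ gchoose z b := by
  unfold gchoose
  split_ifs with h1 h2 h2
  · exact choose_mono' z a.toNat b.toNat (by omega) (by omega)
  · omega
  · exact Nat.zero_le _
  · exact le_rfl

lemma gchoose_dec (z : ℕ) (a b : ℤ) (hab : a ≤ b) (h : (z : ℤ) ≤ a + b) :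
    gchoose z b ≤ gchoose z a := by
  unfold gchoose
  have hb : 0 ≤ b := by omega
  rw [if_pos hb]
  split_ifs with h1
  · exact choose_dec z a.toNat b.toNat (by omega) (by omega)
  · rw [Nat.choose_eq_zero_of_lt (by omega : z < b.toNat)]

/-- Window sum of length `y` starting at integer position `s`. -/
def Fsum (z y : ℕ) (s : ℤ) : ℕ := ∑ k ∈ Finset.range y, gchoose z (s + k)

lemma Fsum_symm (z y : ℕ) (s : ℤ) : Fsum z y s = Fsum z y ((z : ℤ) - y + 1 - s) := by
  unfold Fsum
  conv_rhs => rw [← Finset.sum_range_reflect]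
  apply Finset.sum_congr rfl
  intro k hk
  simp only [Finset.mem_range] at hk
  rw [gchoose_symm]
  congr 1
  omega

lemma Fsum_step_up (z y : ℕ) (s : ℤ) (h : 2 * s + y ≤ (z : ℤ)) :
    Fsum z y s ≤ Fsum z y (s + 1) := by
  cases y with
  | zero => simp [Fsum]
  | succ m =>
    unfold Fsum
    rw [Finset.sum_range_succ', Finset.sum_range_succ]
    have e : ∀ k ∈ Finset.range m, gchoose z (s + (↑(k + 1) : ℤ)) = gchoose z (s + 1 + k) := by
      intro k _
      congr 1
      push_cast
      ring
    rw [Finset.sum_congr rfl e]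
    have : gchoose z (s + (0 : ℕ)) ≤ gchoose z (s + 1 + m) := by
      apply gchoose_mono
      · push_cast; omega
      · push_cast at h ⊢; omega
    omega
  
lemma Fsum_step_down (z y : ℕ) (s : ℤ) (h : (z : ℤ) ≤ 2 * s + y) :
    Fsum z y (s + 1) ≤ Fsum z y s := by
  cases y with
  | zero => simp [Fsum]
  | succ m =>
    unfold Fsum
    rw [Finset.sum_range_succ, Finset.sum_range_succ']
    have e : ∀ k ∈ Finset.range m, gchoose z (s + (↑(k + 1) : ℤ)) = gchoose z (s + 1 + k) := by
      intro k _
      congr 1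
      push_cast
      ring
    rw [Finset.sum_congr rfl e]
    have : gchoose z (s + 1 + m) ≤ gchoose z (s + (0 : ℕ)) := by
      apply gchoose_dec
      · push_cast; omega
      · push_cast at h ⊢; omega
    omega

lemma Fsum_mono_n (z y : ℕ) (n : ℕ) (s : ℤ) (h : 2 * (s + n) + y ≤ (z : ℤ) + 2) :
    Fsum z y s ≤ Fsum z y (s + n) := by
  induction n with
  | zero => simp
  | succ n ih =>
    have h1 : Fsum z y s ≤ Fsum z y (s + n) := ih (by push_cast at h ⊢; omega)
    have h2 : Fsum z y (s + n) ≤ Fsum z y (s + n + 1) := by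
      apply Fsum_step_up
      push_cast at h ⊢
      omega
    have e : s + (↑(n + 1) : ℤ) = s + n + 1 := by push_cast; ring
    rw [e]
    exact h1.trans h2

lemma Fsum_anti_n (z y : ℕ) (n : ℕ) (s : ℤ) (h : (z : ℤ) ≤ 2 * s + y) :
    Fsum z y (s + n) ≤ Fsum z y s := by
  induction n with
  | zero => simp
  | succ n ih =>
    have h2 : Fsum z y (s + n + 1) ≤ Fsum z y (s + n) := by
      apply Fsum_step_down
      push_cast at h ⊢
      omega
    have e : s + (↑(n + 1) : ℤ) = s + n + 1 := by push_cast; ring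
    rw [e]
    exact h2.trans ih

/-- For nonnegative integers `r, x, y, z` with `x+y+z ≥ r`,
`x+y ≤ r−1`, `x+y+z ≤ 2r−2`, `y+z ≥ r` and `x+z ≥ r`, we have
`∑_{i=r−y}^{r−1} C(z,i) ≤ ∑_{i=r−x−y}^{r−x−1} C(z,i)` (note `Nat.choose z i = 0` for
`i > z`, and all the index bounds here are nonnegative). -/
theorem sum_choose_shift_le
    (r x y z : ℕ)
    (h1 : r ≤ x + y + z) (h2 : x + y + 1 ≤ r) (h3 : x + y + z + 2 ≤ 2 * r)
    (h4 : r ≤ y + z) (h5 : r ≤ x + z) :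
    ∑ i ∈ Finset.Icc (r - y) (r - 1), z.choose i ≤
      ∑ i ∈ Finset.Icc (r - x - y) (r - x - 1), z.choose i := by
  have hL : ∑ i ∈ Finset.Icc (r - y) (r - 1), z.choose i = Fsum z y ((r : ℤ) - y) := by
    rw [← Finset.Ico_add_one_right_eq_Icc, Finset.sum_Ico_eq_sum_range]
    have hy : r - 1 + 1 - (r - y) = y := by omega
    rw [hy]
    unfold Fsum
    apply Finset.sum_congr rfl
    intro k hk
    simp only [Finset.mem_range] at hk
    unfold gchoose
    rw [if_pos (by push_cast; omega : (0:ℤ) ≤ (r : ℤ) - y + k)]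
    congr 1
    omega
  have hR : ∑ i ∈ Finset.Icc (r - x - y) (r - x - 1), z.choose i
      = Fsum z y ((r : ℤ) - x - y) := by
    rw [← Finset.Ico_add_one_right_eq_Icc, Finset.sum_Ico_eq_sum_range]
    have hy : r - x - 1 + 1 - (r - x - y) = y := by omega
    rw [hy]
    unfold Fsum
    apply Finset.sum_congr rfl
    intro k hk
    simp only [Finset.mem_range] at hk
    unfold gchoose
    rw [if_pos (by push_cast; omega : (0:ℤ) ≤ (r : ℤ) - x - y + k)]
    congr 1
    omega
  rw [hL, hR]
  by_cases hc : (z : ℤ) ≤ 2 * ((r : ℤ) - x - y) + y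
  · have h := Fsum_anti_n z y x ((r : ℤ) - x - y) hc
    have e : (r : ℤ) - x - y + x = (r : ℤ) - y := by ring
    rw [e] at h
    exact h
  · rw [Fsum_symm z y ((r : ℤ) - y)]
    have hn : 1 ≤ 2 * r - x - y - z - 1 + 1 := by omega
    set n : ℕ := 2 * r - x - y - z - 1 with hndef
    have h := Fsum_mono_n z y n ((z : ℤ) - y + 1 - ((r : ℤ) - y))
      (by push_cast; omega)
    have e : (z : ℤ) - y + 1 - ((r : ℤ) - y) + n = (r : ℤ) - x - y := by
      push_cast
      omega
    rw [e] at h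
    exact h
end

section
/- Let ℓ and d be positive integers, C a finite set of colours, Λ = (α₁,…,α_ℓ) a vector with each α_i ∈ (0,1), and α:C→(0,1) a function. Call an injective map M:{1,…,ℓ}→C a Λ-list if α(M(i)) = α_i for each i. Let p₁,…,p_ℓ ≥ 0 be reals with ∑_{i=1}^{ℓ} p_i = 1, p_i < α_i for each i, and p_i = p_j whenever α_i = α_j. Given Λ-lists L₁,…,L_d, consider the product probability measure on colour choices (X₁,…,X_d) in which independently for each edge index e ∈ {1,…,d}, X_e equals L_e(i) with probability p_i. Then for every Λ-family (L₁,…,L_d) and every single Λ-list L, the probability of the event 'there exists a colour c ∈ C such that #{e : X_e = c} > α(c)·d' under the family (L₁,…,L_d) is at most the probability of the same event under the constant family (L,…,L). -/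
open Finset

private lemma choose_mono_of_le_half {w x y : ℕ} (hxy : x ≤ y) (h : 2 * y ≤ w) :
    w.choose x ≤ w.choose y := by
  induction y with
  | zero => simp_all
  | succ n ih =>
    rcases Nat.eq_or_lt_of_le hxy with rfl | h'
    · exact le_rfl
    · exact (ih (by omega) (by omega)).trans
        (Nat.choose_le_succ_of_lt_half_left (by omega))

private lemma choose_mono_sym {w x y : ℕ} (hxy : x ≤ y) (hsum : x + y ≤ w) :
    w.choose x ≤ w.choose y := by
  rcases le_or_gt (2 * y) w with h | h
  · exact choose_mono_of_le_half hxy h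
  · have hyw : y ≤ w := by omega
    rw [← Nat.choose_symm hyw]
    exact choose_mono_of_le_half (by omega) (by omega)

/-- binomial coefficient extended to `ℤ` argument -/
private def cZ (w : ℕ) (j : ℤ) : ℕ := if 0 ≤ j then w.choose j.toNat else 0

private lemma cZ_eq_zero {w : ℕ} {j : ℤ} (h : j < 0 ∨ (w : ℤ) < j) : cZ w j = 0 := by
  rcases h with h | h
  · simp [cZ, not_le.mpr h]
  · have h0 : (0:ℤ) ≤ j := le_trans (by positivity) h.le
    simp only [cZ, if_pos h0]
    exact Nat.choose_eq_zero_of_lt (by omega)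

private lemma cZ_symm (w : ℕ) (j : ℤ) : cZ w ((w : ℤ) - j) = cZ w j := by
  rcases lt_or_ge j 0 with h | h
  · rw [cZ_eq_zero (Or.inl h), cZ_eq_zero (Or.inr (by omega))]
  · rcases le_or_gt j (w : ℤ) with h2 | h2
    · have h3 : (0:ℤ) ≤ (w:ℤ) - j := by omega
      simp only [cZ, if_pos h, if_pos h3]
      have e : ((w:ℤ) - j).toNat = w - j.toNat := by omega
      rw [e, Nat.choose_symm (by omega)]
    · rw [cZ_eq_zero (Or.inl (by omega)), cZ_eq_zero (Or.inr h2)]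

private lemma cZ_sub_le {w t : ℕ} {j : ℤ} (h2 : 2 * j ≤ (w : ℤ) + t) :
    cZ w (j - t) ≤ cZ w j := by
  rcases lt_or_ge (j - t) 0 with h | h
  · rw [cZ_eq_zero (Or.inl h)]; exact Nat.zero_le _
  · have h0 : (0:ℤ) ≤ j := by omega
    rcases lt_or_ge (w:ℤ) j with hw | hw
    · omega
    · simp only [cZ, if_pos h, if_pos h0]
      exact choose_mono_sym (by omega) (by omega)

private lemma window_int (w t : ℕ) (l u : ℤ) (hlu : l + u ≤ (w : ℤ) + t) :
    ∑ j ∈ Finset.Icc l u, (cZ w (j - t) : ℝ) ≤ ∑ j ∈ Finset.Icc l u, (cZ w j : ℝ) := by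
  rw [← sub_nonneg, ← Finset.sum_sub_distrib]
  set H : ℤ → ℝ := fun j => (cZ w j : ℝ) - (cZ w (j - t) : ℝ) with hH
  have hanti : ∀ j : ℤ, H ((w : ℤ) + t - j) = -H j := by
    intro j
    have e1 : (w : ℤ) + t - j = (w : ℤ) - (j - t) := by ring
    have e2 : (w : ℤ) + t - j - t = (w : ℤ) - j := by ring
    have h1 : cZ w ((w:ℤ) + t - j) = cZ w (j - t) := by rw [e1, cZ_symm]
    have h2 : cZ w ((w:ℤ) + t - j - t) = cZ w j := by rw [e2, cZ_symm]
    simp only [hH]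
    rw [h1, h2]
    ring
  have hsplit := Finset.sum_filter_add_sum_filter_not (Finset.Icc l u)
    (fun j => (w : ℤ) + t - j ∈ Finset.Icc l u) H
  rw [← hsplit]
  have h1 : ∑ j ∈ (Finset.Icc l u).filter (fun j => (w : ℤ) + t - j ∈ Finset.Icc l u), H j = 0 := by
    apply Finset.sum_involution (g := fun j _ => (w : ℤ) + t - j)
    · intro a _; rw [hanti]; ring
    · intro a _ hHa hga
      apply hHa
      have h := hanti a
      rw [hga] at h
      linarith
    · intro a ha
      simp only [Finset.mem_filter] at ha ⊢
      refine ⟨ha.2, ?_⟩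
      simpa using ha.1
    · intro a _; ring
  rw [h1, zero_add]
  apply Finset.sum_nonneg
  intro j hj
  simp only [Finset.mem_filter, Finset.mem_Icc, not_and, not_le] at hj
  have h2j : 2 * j ≤ (w : ℤ) + t := by
    rcases hj with ⟨⟨hjl, hju⟩, hnot⟩
    by_contra hcon
    push_neg at hcon
    have h3 : l ≤ (w:ℤ) + t - j := by omega
    have h4 : (w:ℤ) + t - j ≤ u := by omega
    exact absurd h4 (not_le.mpr (hnot h3))
  simp only [hH, sub_nonneg]
  exact_mod_cast cZ_sub_le h2j

private lemma sum_Icc_eq_sum_range (w : ℕ) (o l u : ℤ) (G : ℤ → ℝ)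
    (hG : ∀ j : ℤ, G j ≠ 0 → o ≤ j ∧ j ≤ (w : ℤ) + o) :
    ∑ j ∈ Finset.Icc l u, G j
      = ∑ j ∈ Finset.range (w + 1),
          (if l ≤ (j : ℤ) + o ∧ (j : ℤ) + o ≤ u then G ((j : ℤ) + o) else 0) := by
  rw [← Finset.sum_filter]
  rw [← Finset.sum_filter_of_ne (s := Finset.Icc l u) (f := G)
    (p := fun j => o ≤ j ∧ j ≤ (w : ℤ) + o) (fun x _ hne => hG x hne)]
  refine Finset.sum_nbij' (fun j => (j - o).toNat) (fun n => (n : ℤ) + o) ?_ ?_ ?_ ?_ ?_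
  · intro a ha
    simp only [Finset.mem_filter, Finset.mem_Icc, Finset.mem_range] at ha ⊢
    omega
  · intro a ha
    simp only [Finset.mem_filter, Finset.mem_Icc, Finset.mem_range] at ha ⊢
    omega
  · intro a ha
    simp only [Finset.mem_filter, Finset.mem_Icc] at ha
    omega
  · intro a ha
    simp only [Finset.mem_filter, Finset.mem_range] at ha
    omega
  · intro a ha
    simp only [Finset.mem_filter, Finset.mem_Icc] at ha
    congr 1
    omega
private lemma window_real (w t v : ℕ) (τ : ℝ) :
    ∑ j ∈ Finset.range (w + 1),
        (if (v : ℝ) + t + j ≤ τ ∧ (w : ℝ) - j ≤ τ then (w.choose j : ℝ) else 0)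
      ≤ ∑ j ∈ Finset.range (w + 1),
        (if (v : ℝ) + j ≤ τ ∧ (t : ℝ) + ((w : ℝ) - j) ≤ τ then (w.choose j : ℝ) else 0) := by
  set A : ℝ := (w : ℝ) + t - τ with hA
  set B : ℝ := τ - v with hB
  set l : ℤ := ⌈A⌉ with hl
  set u : ℤ := ⌊B⌋ with hu
  have key : l + u ≤ (w : ℤ) + t := by
    have h1 : (l : ℝ) < A + 1 := Int.ceil_lt_add_one A
    have h2 : (u : ℝ) ≤ B := Int.floor_le B
    have h3 : ((l + u : ℤ) : ℝ) < ((w : ℤ) + t : ℤ) + 1 := by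
      push_cast
      have hv : (0:ℝ) ≤ v := Nat.cast_nonneg v
      rw [hA] at h1; rw [hB] at h2
      linarith
    have h4 : (l + u : ℤ) < (w : ℤ) + t + 1 := by exact_mod_cast h3
    omega
  have hG1 : ∀ j : ℤ, ((cZ w (j - t) : ℝ)) ≠ 0 → (t : ℤ) ≤ j ∧ j ≤ (w : ℤ) + t := by
    intro j h
    by_contra hc
    push_neg at hc
    apply h
    rcases le_or_gt ((t : ℤ)) j with h2 | h2
    · rw [cZ_eq_zero (Or.inr (by omega : (w:ℤ) < j - t))]; norm_num
    · rw [cZ_eq_zero (Or.inl (by omega : j - (t:ℤ) < 0))]; norm_num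
  have hG0 : ∀ j : ℤ, ((cZ w j : ℝ)) ≠ 0 → (0 : ℤ) ≤ j ∧ j ≤ (w : ℤ) + 0 := by
    intro j h
    by_contra hc
    push_neg at hc
    apply h
    rcases le_or_gt 0 j with h2 | h2
    · rw [cZ_eq_zero (Or.inr (by omega))]; norm_num
    · rw [cZ_eq_zero (Or.inl h2)]; norm_num
  have hL : ∑ j ∈ Finset.range (w + 1),
        (if (v : ℝ) + t + j ≤ τ ∧ (w : ℝ) - j ≤ τ then (w.choose j : ℝ) else 0)
      = ∑ j ∈ Finset.Icc l u, (cZ w (j - t) : ℝ) := by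
    rw [sum_Icc_eq_sum_range w (t : ℤ) l u _ hG1]
    refine Finset.sum_congr rfl fun j hj => ?_
    simp only [Finset.mem_range] at hj
    have hcond : (l ≤ (j : ℤ) + t ∧ (j : ℤ) + t ≤ u) ↔
        ((v : ℝ) + t + j ≤ τ ∧ (w : ℝ) - j ≤ τ) := by
      rw [hl, hu, Int.ceil_le, Int.le_floor, hA, hB]
      push_cast
      constructor <;> (rintro ⟨h1, h2⟩; constructor <;> linarith)
    rw [if_congr hcond rfl rfl]
    have hval : (cZ w ((j : ℤ) + t - t) : ℝ) = (w.choose j : ℝ) := by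
      have e : (j : ℤ) + t - t = (j : ℤ) := by ring
      rw [e]
      simp [cZ]
    by_cases hc : (v : ℝ) + t + j ≤ τ ∧ (w : ℝ) - j ≤ τ
    · rw [if_pos hc, if_pos hc, hval]
    · rw [if_neg hc, if_neg hc]
  have hR : ∑ j ∈ Finset.range (w + 1),
        (if (v : ℝ) + j ≤ τ ∧ (t : ℝ) + ((w : ℝ) - j) ≤ τ then (w.choose j : ℝ) else 0)
      = ∑ j ∈ Finset.Icc l u, (cZ w j : ℝ) := by
    rw [sum_Icc_eq_sum_range w (0 : ℤ) l u _ hG0]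
    refine Finset.sum_congr rfl fun j hj => ?_
    simp only [Finset.mem_range] at hj
    have hcond : (l ≤ (j : ℤ) + 0 ∧ (j : ℤ) + 0 ≤ u) ↔
        ((v : ℝ) + j ≤ τ ∧ (t : ℝ) + ((w : ℝ) - j) ≤ τ) := by
      rw [hl, hu, Int.ceil_le, Int.le_floor, hA, hB]
      push_cast
      constructor <;> (rintro ⟨h1, h2⟩; constructor <;> linarith)
    rw [if_congr hcond rfl rfl]
    have hval : (cZ w ((j : ℤ) + 0) : ℝ) = (w.choose j : ℝ) := by
      simp [cZ]
    by_cases hc : (v : ℝ) + j ≤ τ ∧ (t : ℝ) + ((w : ℝ) - j) ≤ τ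
    · rw [if_pos hc, if_pos hc, hval]
    · rw [if_neg hc, if_neg hc]
  rw [hL, hR]
  exact window_int w t l u key
open scoped Classical

section Main

variable {ℓ d : ℕ} {C : Type*} [Fintype C] [DecidableEq C]

private def cnt (N : Fin d → Fin ℓ → C) (f : Fin d → Fin ℓ) (c : C) : ℕ :=
  (Finset.univ.filter fun e => N e (f e) = c).card

private def good (α : C → ℝ) (N : Fin d → Fin ℓ → C) (f : Fin d → Fin ℓ) : Prop :=
  ∀ c : C, (cnt N f c : ℝ) ≤ α c * d

private def WT (p : Fin ℓ → ℝ) (f : Fin d → Fin ℓ) : ℝ := ∏ e, p (f e)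

private noncomputable def GS (α : C → ℝ) (p : Fin ℓ → ℝ) (N : Fin d → Fin ℓ → C) : ℝ :=
  ∑ f : Fin d → Fin ℓ, {g : Fin d → Fin ℓ | good α N g}.indicator (WT p) f

private def shiftFam (M : Fin d → Fin ℓ → C) (a b : C) : Fin d → Fin ℓ → C :=
  fun e i => if ((∃ x, M e x = b) ∧ ¬(∃ x, M e x = a)) ∧ M e i = b then a else M e i

private lemma shift_le (hℓ : 0 < ℓ) (Λ : Fin ℓ → ℝ) (α : C → ℝ) (p : Fin ℓ → ℝ)
    (hp0 : ∀ i, 0 ≤ p i) (hpeq : ∀ i j, Λ i = Λ j → p i = p j)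
    (M : Fin d → Fin ℓ → C) (hM : ∀ e, Function.Injective (M e) ∧ ∀ i, α (M e i) = Λ i)
    (a b : C) (hab : a ≠ b) (habα : α a = α b) :
    GS α p (shiftFam M a b) ≤ GS α p M := by
  set M' := shiftFam M a b with hM'def
  set sk : (Fin d → Fin ℓ) → (Fin d → Option (Fin ℓ)) :=
    fun f e => if M e (f e) = a ∨ M e (f e) = b then none else some (f e) with hsk
  have hGS : ∀ N : Fin d → Fin ℓ → C, GS α p N =
      ∑ s : Fin d → Option (Fin ℓ), ∑ f ∈ Finset.univ.filter (fun f => sk f = s),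
        {g : Fin d → Fin ℓ | good α N g}.indicator (WT p) f := by
    intro N
    exact (Finset.sum_fiberwise Finset.univ sk _).symm
  rw [hGS M, hGS M']
  apply Finset.sum_le_sum
  intro s _
  set F := Finset.univ.filter (fun f => sk f = s) with hF
  by_cases hFne : F.Nonempty
  swap
  · rw [Finset.not_nonempty_iff_eq_empty.mp hFne]
    simp
  obtain ⟨f₀, hf₀⟩ := hFne
  have hf₀s : sk f₀ = s := (Finset.mem_filter.mp hf₀).2
  -- basic facts about s
  have fact1 : ∀ e i, s e = some i → ¬(M e i = a ∨ M e i = b) := by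
    intro e i hei hcon
    have h := congrFun hf₀s e
    rw [hei] at h
    by_cases hc : M e (f₀ e) = a ∨ M e (f₀ e) = b
    · rw [hsk] at h; simp only [if_pos hc] at h; exact nomatch h
    · rw [hsk] at h; simp only [if_neg hc] at h
      have : f₀ e = i := by injection h
      rw [← this] at hcon; exact hc hcon
  have fact1' : ∀ e i, s e = some i → f₀ e = i := by
    intro e i hei
    have h := congrFun hf₀s e
    rw [hei] at h
    by_cases hc : M e (f₀ e) = a ∨ M e (f₀ e) = b
    · rw [hsk] at h; simp only [if_pos hc] at h; exact nomatch h
    · rw [hsk] at h; simp only [if_neg hc] at h; injection h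
  have fact2 : ∀ e, s e = none → (∃ x, M e x = a) ∨ (∃ x, M e x = b) := by
    intro e he
    have h := congrFun hf₀s e
    rw [he] at h
    by_cases hc : M e (f₀ e) = a ∨ M e (f₀ e) = b
    · rcases hc with hc | hc
      · exact Or.inl ⟨f₀ e, hc⟩
      · exact Or.inr ⟨f₀ e, hc⟩
    · rw [hsk] at h; simp only [if_neg hc] at h; exact nomatch h
  -- special edge classes
  set DW := Finset.univ.filter
      (fun e => s e = none ∧ (∃ x, M e x = a) ∧ (∃ x, M e x = b)) with hDW
  set DT := Finset.univ.filter
      (fun e => s e = none ∧ (∃ x, M e x = b) ∧ ¬(∃ x, M e x = a)) with hDT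
  set DV := Finset.univ.filter
      (fun e => s e = none ∧ (∃ x, M e x = a) ∧ ¬(∃ x, M e x = b)) with hDV
  set xa : Fin d → Fin ℓ :=
    fun e => if h : ∃ x, M e x = a then h.choose else ⟨0, hℓ⟩ with hxadef
  set xb : Fin d → Fin ℓ :=
    fun e => if h : ∃ x, M e x = b then h.choose else ⟨0, hℓ⟩ with hxbdef
  have hxa : ∀ e, (∃ x, M e x = a) → M e (xa e) = a := by
    intro e h
    rw [hxadef]
    simp only [dif_pos h]
    exact h.choose_spec
  have hxb : ∀ e, (∃ x, M e x = b) → M e (xb e) = b := by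
    intro e h
    rw [hxbdef]
    simp only [dif_pos h]
    exact h.choose_spec
  set β : Finset (Fin d) → (Fin d → Fin ℓ) :=
    fun K e => (s e).elim (if e ∈ K ∨ e ∈ DV then xa e else xb e) (fun i => i) with hβ
  have hβsome : ∀ K e i, s e = some i → β K e = i := by
    intro K e i hei
    rw [hβ]
    simp only [hei, Option.elim]
  have hβnone : ∀ K e, s e = none →
      β K e = if e ∈ K ∨ e ∈ DV then xa e else xb e := by
    intro K e he
    rw [hβ]
    simp only [he, Option.elim]
  -- if e is "none" but not in K ∪ DV (with K ⊆ DW), then b is in the list of e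
  have hasBof : ∀ (K : Finset (Fin d)), K ⊆ DW → ∀ e, s e = none →
      ¬(e ∈ K ∨ e ∈ DV) → (∃ x, M e x = b) := by
    intro K hK e he hnot
    push_neg at hnot
    rcases fact2 e he with hA | hB
    · by_cases hB : ∃ x, M e x = b
      · exact hB
      · exact absurd (by
          rw [hDV]
          simp only [Finset.mem_filter, Finset.mem_univ, true_and]
          exact ⟨he, hA, hB⟩) hnot.2
    · exact hB
  -- membership of β K in the fiber
  have hβmem : ∀ K : Finset (Fin d), K ⊆ DW → β K ∈ F := by
    intro K hK
    rw [hF, Finset.mem_filter]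
    refine ⟨Finset.mem_univ _, ?_⟩
    funext e
    rcases he : s e with _ | i
    · have hbe := hβnone K e he
      rw [hsk]
      have : M e (β K e) = a ∨ M e (β K e) = b := by
        by_cases hc : e ∈ K ∨ e ∈ DV
        · rw [hbe, if_pos hc]
          left
          apply hxa
          rcases hc with hc | hc
          · have := hK hc
            rw [hDW] at this
            simp only [Finset.mem_filter] at this
            exact this.2.2.1
          · rw [hDV] at hc
            simp only [Finset.mem_filter] at hc
            exact hc.2.2.1
        · rw [hbe, if_neg hc]
          right
          exact hxb e (hasBof K hK e he hc)
      show (if M e (β K e) = a ∨ M e (β K e) = b then (none : Option (Fin ℓ))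
          else some (β K e)) = none
      rw [if_pos this]
    · have hbe := hβsome K e i he
      simp only [hsk]
      rw [hbe, if_neg (fact1 e i he)]
  -- the inverse map
  set γ : (Fin d → Fin ℓ) → Finset (Fin d) :=
    fun f => DW.filter (fun e => M e (f e) = a) with hγ
  have hγmem : ∀ f, γ f ⊆ DW := fun f => Finset.filter_subset _ _
  have hfiberval : ∀ f ∈ F, ∀ e, s e = none → M e (f e) = a ∨ M e (f e) = b := by
    intro f hf e he
    have hfs : sk f = s := (Finset.mem_filter.mp hf).2
    have h := congrFun hfs e
    rw [he, hsk] at h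
    by_cases hc : M e (f e) = a ∨ M e (f e) = b
    · exact hc
    · simp only [if_neg hc] at h; exact nomatch h
  have hfiberval' : ∀ f ∈ F, ∀ e i, s e = some i → f e = i := by
    intro f hf e i he
    have hfs : sk f = s := (Finset.mem_filter.mp hf).2
    have h := congrFun hfs e
    rw [he, hsk] at h
    by_cases hc : M e (f e) = a ∨ M e (f e) = b
    · simp only [if_pos hc] at h; exact nomatch h
    · simp only [if_neg hc] at h; injection h
  have hleft : ∀ f ∈ F, β (γ f) = f := by
    intro f hf
    funext e
    rcases he : s e with _ | i
    · have hbe := hβnone (γ f) e he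
      rcases hfiberval f hf e he with hva | hvb
      · have hA : ∃ x, M e x = a := ⟨f e, hva⟩
        have hc : e ∈ γ f ∨ e ∈ DV := by
          by_cases hB : ∃ x, M e x = b
          · left
            rw [hγ]
            simp only [Finset.mem_filter]
            refine ⟨?_, hva⟩
            rw [hDW]
            simp only [Finset.mem_filter, Finset.mem_univ, true_and]
            exact ⟨he, hA, hB⟩
          · right
            rw [hDV]
            simp only [Finset.mem_filter, Finset.mem_univ, true_and]
            exact ⟨he, hA, hB⟩
        rw [hbe, if_pos hc]
        exact (hM e).1 (by rw [hxa e hA, hva])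
      · have hB : ∃ x, M e x = b := ⟨f e, hvb⟩
        have hc : ¬(e ∈ γ f ∨ e ∈ DV) := by
          rintro (hc | hc)
          · rw [hγ] at hc
            simp only [Finset.mem_filter] at hc
            rw [hvb] at hc
            exact hab hc.2.symm
          · rw [hDV] at hc
            simp only [Finset.mem_filter] at hc
            exact hc.2.2.2 hB
        rw [hbe, if_neg hc]
        exact (hM e).1 (by rw [hxb e hB, hvb])
    · rw [hβsome (γ f) e i he, hfiberval' f hf e i he]
  have hright : ∀ K : Finset (Fin d), K ⊆ DW → γ (β K) = K := by
    intro K hK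
    ext e
    rw [hγ]
    simp only [Finset.mem_filter]
    constructor
    · rintro ⟨heDW, hval⟩
      have he : s e = none := by
        rw [hDW] at heDW
        simp only [Finset.mem_filter] at heDW
        exact heDW.2.1
      have heDV : e ∉ DV := by
        rw [hDW] at heDW
        rw [hDV]
        simp only [Finset.mem_filter] at heDW ⊢
        intro hcon
        exact hcon.2.2.2 heDW.2.2.2
      by_cases hc : e ∈ K
      · exact hc
      · exfalso
        have : β K e = xb e := by
          rw [hβnone K e he, if_neg (by tauto)]
        rw [this] at hval
        have hB : ∃ x, M e x = b := by
          rw [hDW] at heDW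
          simp only [Finset.mem_filter] at heDW
          exact heDW.2.2.2
        rw [hxb e hB] at hval
        exact hab hval.symm
    · intro hc
      have heDW := hK hc
      refine ⟨heDW, ?_⟩
      have he : s e = none := by
        rw [hDW] at heDW
        simp only [Finset.mem_filter] at heDW
        exact heDW.2.1
      rw [hβnone K e he, if_pos (Or.inl hc)]
      apply hxa
      rw [hDW] at heDW
      simp only [Finset.mem_filter] at heDW
      exact heDW.2.2.1
  -- facts about M' on slots
  have hM'some : ∀ e i, s e = some i → M' e i = M e i := by
    intro e i he
    show (if ((∃ x, M e x = b) ∧ ¬(∃ x, M e x = a)) ∧ M e i = b then a else M e i) = M e i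
    exact if_neg (fun h => fact1 e i he (Or.inr h.2))
  have hM'W : ∀ e, (∃ x, M e x = a) → ∀ i, M' e i = M e i := by
    intro e hA i
    show (if ((∃ x, M e x = b) ∧ ¬(∃ x, M e x = a)) ∧ M e i = b then a else M e i) = M e i
    exact if_neg (fun h => h.1.2 hA)
  have hM'T : ∀ e, (∃ x, M e x = b) → ¬(∃ x, M e x = a) → ∀ i, M e i = b → M' e i = a := by
    intro e hB hA i hib
    show (if ((∃ x, M e x = b) ∧ ¬(∃ x, M e x = a)) ∧ M e i = b then a else M e i) = a
    exact if_pos ⟨⟨hB, hA⟩, hib⟩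
  -- membership characterizations of DW/DT/DV
  have hmemDW : ∀ e, e ∈ DW ↔ s e = none ∧ (∃ x, M e x = a) ∧ (∃ x, M e x = b) := by
    intro e; rw [hDW]; simp only [Finset.mem_filter, Finset.mem_univ, true_and]
  have hmemDT : ∀ e, e ∈ DT ↔ s e = none ∧ (∃ x, M e x = b) ∧ ¬(∃ x, M e x = a) := by
    intro e; rw [hDT]; simp only [Finset.mem_filter, Finset.mem_univ, true_and]
  have hmemDV : ∀ e, e ∈ DV ↔ s e = none ∧ (∃ x, M e x = a) ∧ ¬(∃ x, M e x = b) := by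
    intro e; rw [hDV]; simp only [Finset.mem_filter, Finset.mem_univ, true_and]
  -- the four counting sets
  have hcntMa : ∀ K, K ⊆ DW →
      (Finset.univ.filter fun e => M e (β K e) = a) = DV ∪ K := by
    intro K hK
    ext e
    simp only [Finset.mem_filter, Finset.mem_univ, true_and, Finset.mem_union]
    rcases he : s e with _ | i
    · rw [hβnone K e he]
      by_cases hc : e ∈ K ∨ e ∈ DV
      · rw [if_pos hc]
        have hA : ∃ x, M e x = a := by
          rcases hc with hc | hc
          · exact ((hmemDW _).mp (hK hc)).2.1
          · exact ((hmemDV _).mp hc).2.1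
        simp only [hxa e hA]
        tauto
      · rw [if_neg hc]
        rw [hxb e (hasBof K hK e he hc)]
        push_neg at hc
        constructor
        · intro hba; exact absurd hba.symm hab
        · rintro (h | h)
          · exact absurd h hc.2
          · exact absurd h hc.1
    · rw [hβsome K e i he]
      constructor
      · intro hia; exact absurd (Or.inl hia) (fact1 e i he)
      · rintro (h | h)
        · rw [(hmemDV _).mp h |>.1] at he; exact nomatch he
        · rw [(hmemDW _).mp (hK h) |>.1] at he; exact nomatch he
  have hcntMb : ∀ K, K ⊆ DW →
      (Finset.univ.filter fun e => M e (β K e) = b) = DT ∪ (DW \ K) := by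
    intro K hK
    ext e
    simp only [Finset.mem_filter, Finset.mem_univ, true_and, Finset.mem_union, Finset.mem_sdiff]
    rcases he : s e with _ | i
    · rw [hβnone K e he]
      by_cases hc : e ∈ K ∨ e ∈ DV
      · rw [if_pos hc]
        have hA : ∃ x, M e x = a := by
          rcases hc with hc | hc
          · exact ((hmemDW _).mp (hK hc)).2.1
          · exact ((hmemDV _).mp hc).2.1
        rw [hxa e hA]
        constructor
        · intro h; exact absurd h hab
        · rintro (h | ⟨h1, h2⟩)
          · exact absurd hA ((hmemDT _).mp h).2.2
          · rcases hc with hc | hc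
            · exact absurd hc h2
            · exact absurd ((hmemDW _).mp h1).2.2 ((hmemDV _).mp hc).2.2
      · rw [if_neg hc]
        have hB := hasBof K hK e he hc
        rw [hxb e hB]
        push_neg at hc
        simp only [true_iff]
        by_cases hA : ∃ x, M e x = a
        · right; exact ⟨(hmemDW _).mpr ⟨he, hA, hB⟩, hc.1⟩
        · left; exact (hmemDT _).mpr ⟨he, hB, hA⟩
    · rw [hβsome K e i he]
      constructor
      · intro hib; exact absurd (Or.inr hib) (fact1 e i he)
      · rintro (h | ⟨h1, _⟩)
        · rw [(hmemDT _).mp h |>.1] at he; exact nomatch he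
        · rw [(hmemDW _).mp h1 |>.1] at he; exact nomatch he
  have hcntM'a : ∀ K, K ⊆ DW →
      (Finset.univ.filter fun e => M' e (β K e) = a) = DV ∪ K ∪ DT := by
    intro K hK
    ext e
    simp only [Finset.mem_filter, Finset.mem_univ, true_and, Finset.mem_union]
    rcases he : s e with _ | i
    · rw [hβnone K e he]
      by_cases hc : e ∈ K ∨ e ∈ DV
      · rw [if_pos hc]
        have hA : ∃ x, M e x = a := by
          rcases hc with hc | hc
          · exact ((hmemDW _).mp (hK hc)).2.1
          · exact ((hmemDV _).mp hc).2.1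
        rw [hM'W e hA, hxa e hA]
        simp only [true_iff]
        tauto
      · rw [if_neg hc]
        have hB := hasBof K hK e he hc
        push_neg at hc
        by_cases hA : ∃ x, M e x = a
        · rw [hM'W e hA, hxb e hB]
          constructor
          · intro h; exact absurd h hab.symm
          · rintro ((h | h) | h)
            · exact absurd h hc.2
            · exact absurd h hc.1
            · exact absurd hA ((hmemDT _).mp h).2.2
        · rw [hM'T e hB hA _ (hxb e hB)]
          simp only [true_iff]
          right; exact (hmemDT _).mpr ⟨he, hB, hA⟩
    · rw [hβsome K e i he, hM'some e i he]
      constructor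
      · intro hia; exact absurd (Or.inl hia) (fact1 e i he)
      · rintro ((h | h) | h)
        · rw [(hmemDV _).mp h |>.1] at he; exact nomatch he
        · rw [(hmemDW _).mp (hK h) |>.1] at he; exact nomatch he
        · rw [(hmemDT _).mp h |>.1] at he; exact nomatch he
  have hcntM'b : ∀ K, K ⊆ DW →
      (Finset.univ.filter fun e => M' e (β K e) = b) = DW \ K := by
    intro K hK
    ext e
    simp only [Finset.mem_filter, Finset.mem_univ, true_and, Finset.mem_sdiff]
    rcases he : s e with _ | i
    · rw [hβnone K e he]
      by_cases hc : e ∈ K ∨ e ∈ DV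
      · rw [if_pos hc]
        have hA : ∃ x, M e x = a := by
          rcases hc with hc | hc
          · exact ((hmemDW _).mp (hK hc)).2.1
          · exact ((hmemDV _).mp hc).2.1
        rw [hM'W e hA, hxa e hA]
        constructor
        · intro h; exact absurd h hab
        · rintro ⟨h1, h2⟩
          rcases hc with hc | hc
          · exact absurd hc h2
          · exact absurd ((hmemDW _).mp h1).2.2 ((hmemDV _).mp hc).2.2
      · rw [if_neg hc]
        have hB := hasBof K hK e he hc
        push_neg at hc
        by_cases hA : ∃ x, M e x = a
        · rw [hM'W e hA, hxb e hB]
          simp only [true_iff]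
          exact ⟨(hmemDW _).mpr ⟨he, hA, hB⟩, hc.1⟩
        · rw [hM'T e hB hA _ (hxb e hB)]
          constructor
          · intro h; exact absurd h hab
          · rintro ⟨h1, _⟩
            exact absurd ((hmemDW _).mp h1).2.1 hA
    · rw [hβsome K e i he, hM'some e i he]
      constructor
      · intro hib; exact absurd (Or.inr hib) (fact1 e i he)
      · rintro ⟨h1, _⟩
        rw [(hmemDW _).mp h1 |>.1] at he; exact nomatch he
  -- other colours: fixed count
  set Sc : C → Finset (Fin d) :=
    fun c => Finset.univ.filter (fun e => ∃ i, s e = some i ∧ M e i = c) with hSc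
  have hcntc : ∀ c, c ≠ a → c ≠ b → ∀ K, K ⊆ DW →
      (Finset.univ.filter fun e => M e (β K e) = c) = Sc c ∧
      (Finset.univ.filter fun e => M' e (β K e) = c) = Sc c := by
    intro c hca hcb K hK
    have hmain : ∀ e, (M e (β K e) = c ↔ ∃ i, s e = some i ∧ M e i = c) ∧
        (M' e (β K e) = c ↔ ∃ i, s e = some i ∧ M e i = c) := by
      intro e
      rcases he : s e with _ | i
      · rw [hβnone K e he]
        have hval : M e (if e ∈ K ∨ e ∈ DV then xa e else xb e) = a ∨
            M e (if e ∈ K ∨ e ∈ DV then xa e else xb e) = b := by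
          by_cases hc : e ∈ K ∨ e ∈ DV
          · left
            rw [if_pos hc]
            apply hxa
            rcases hc with hc | hc
            · exact ((hmemDW _).mp (hK hc)).2.1
            · exact ((hmemDV _).mp hc).2.1
          · right
            rw [if_neg hc]
            exact hxb e (hasBof K hK e he hc)
        have hno : ∀ i : Fin ℓ, ¬((none : Option (Fin ℓ)) = some i ∧ M e i = c) := by
          rintro i ⟨h1, _⟩; exact nomatch h1
        constructor
        · constructor
          · intro h
            rcases hval with h2 | h2
            · exact absurd (h.symm.trans h2) hca
            · exact absurd (h.symm.trans h2) hcb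
          · rintro ⟨i, hi⟩; exact absurd hi (hno i)
        · constructor
          · intro h
            -- compute M' value in {a, b}
            exfalso
            by_cases hc : e ∈ K ∨ e ∈ DV
            · have hA : ∃ x, M e x = a := by
                rcases hc with hc | hc
                · exact ((hmemDW _).mp (hK hc)).2.1
                · exact ((hmemDV _).mp hc).2.1
              rw [hM'W e hA] at h
              rcases hval with h2 | h2
              · exact hca (h.symm.trans h2)
              · exact hcb (h.symm.trans h2)
            · have hB := hasBof K hK e he hc
              by_cases hA : ∃ x, M e x = a
              · rw [hM'W e hA] at h
                rcases hval with h2 | h2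
                · exact hca (h.symm.trans h2)
                · exact hcb (h.symm.trans h2)
              · rw [if_neg hc] at h
                rw [hM'T e hB hA _ (hxb e hB)] at h
                exact hca h.symm
          · rintro ⟨i, hi⟩; exact absurd hi (hno i)
      · rw [hβsome K e i he, hM'some e i he]
        have hiff : M e i = c ↔ ∃ i', (some i : Option (Fin ℓ)) = some i' ∧ M e i' = c := by
          constructor
          · intro h; exact ⟨i, rfl, h⟩
          · rintro ⟨i', hi'1, hi'2⟩
            injection hi'1 with hii
            rw [hii]
            exact hi'2
        exact ⟨hiff, hiff⟩
      -- end hmain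
    constructor
    · ext e
      simp only [Finset.mem_filter, Finset.mem_univ, true_and, hSc]
      exact (hmain e).1
    · ext e
      simp only [Finset.mem_filter, Finset.mem_univ, true_and, hSc]
      exact (hmain e).2
  -- disjointness
  have hdVW : Disjoint DV DW := by
    rw [Finset.disjoint_left]
    intro e h1 h2
    exact ((hmemDV e).mp h1).2.2 ((hmemDW e).mp h2).2.2
  have hdTW : Disjoint DT DW := by
    rw [Finset.disjoint_left]
    intro e h1 h2
    exact ((hmemDT e).mp h1).2.2 ((hmemDW e).mp h2).2.1
  have hdVT : Disjoint DV DT := by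
    rw [Finset.disjoint_left]
    intro e h1 h2
    exact ((hmemDT e).mp h2).2.2 ((hmemDV e).mp h1).2.1
  set w := DW.card with hw
  set t' := DT.card with ht'
  set v := DV.card with hv
  have hcard1 : ∀ K, K ⊆ DW → (DV ∪ K).card = v + K.card := by
    intro K hK
    rw [Finset.card_union_of_disjoint (hdVW.mono_right hK)]
  have hcard2 : ∀ K, K ⊆ DW → (DT ∪ (DW \ K)).card = t' + (w - K.card) := by
    intro K hK
    rw [Finset.card_union_of_disjoint (hdTW.mono_right Finset.sdiff_subset),
      Finset.card_sdiff_of_subset hK]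
  have hcard3 : ∀ K, K ⊆ DW → (DV ∪ K ∪ DT).card = v + K.card + t' := by
    intro K hK
    rw [Finset.card_union_of_disjoint
      (Finset.disjoint_union_left.mpr ⟨hdVT, (hdTW.mono_right hK).symm⟩), hcard1 K hK]
  have hcard4 : ∀ K, K ⊆ DW → (DW \ K).card = w - K.card := fun K hK => Finset.card_sdiff_of_subset hK
  -- weight is constant on the fiber
  have hΛβ : ∀ K, K ⊆ DW → ∀ e, s e = none → Λ (β K e) = α a := by
    intro K hK e he
    rw [hβnone K e he]
    by_cases hc : e ∈ K ∨ e ∈ DV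
    · rw [if_pos hc]
      have hA : ∃ x, M e x = a := by
        rcases hc with hc | hc
        · exact ((hmemDW _).mp (hK hc)).2.1
        · exact ((hmemDV _).mp hc).2.1
      rw [← (hM e).2 (xa e), hxa e hA]
    · rw [if_neg hc]
      rw [← (hM e).2 (xb e), hxb e (hasBof K hK e he hc)]
      exact habα.symm
  have hWTconst : ∀ K, K ⊆ DW → WT p (β K) = WT p (β ∅) := by
    intro K hK
    show (∏ e, p (β K e)) = ∏ e, p (β ∅ e)
    apply Finset.prod_congr rfl
    intro e _
    rcases he : s e with _ | i
    · exact hpeq _ _ ((hΛβ K hK e he).trans (hΛβ ∅ (Finset.empty_subset _) e he).symm)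
    · rw [hβsome K e i he, hβsome ∅ e i he]
  set w₀ := WT p (β ∅) with hw₀def
  have hw₀ : 0 ≤ w₀ := by
    rw [hw₀def]
    show 0 ≤ ∏ e, p (β ∅ e)
    exact Finset.prod_nonneg fun e _ => hp0 _
  -- convert fiber sums into sums over subsets of DW
  have hsumN : ∀ N : Fin d → Fin ℓ → C,
      ∑ f ∈ F, {g : Fin d → Fin ℓ | good α N g}.indicator (WT p) f
        = ∑ K ∈ DW.powerset, (if good α N (β K) then w₀ else 0) := by
    intro N
    refine Finset.sum_nbij' (i := γ) (j := β) ?_ ?_ ?_ ?_ ?_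
    · intro f hf; exact Finset.mem_powerset.mpr (hγmem f)
    · intro K hK; exact hβmem K (Finset.mem_powerset.mp hK)
    · exact hleft
    · intro K hK; exact hright K (Finset.mem_powerset.mp hK)
    · intro f hf
      rw [Set.indicator_apply]
      simp only [Set.mem_setOf_eq]
      rw [hleft f hf]
      by_cases hg : good α N f
      · rw [if_pos hg, if_pos hg, ← hWTconst (γ f) (hγmem f), hleft f hf]
      · rw [if_neg hg, if_neg hg]
  -- characterize goodness on the fiber
  set FixedOK : Prop := ∀ c : C, c ≠ a → c ≠ b → ((Sc c).card : ℝ) ≤ α c * ↑d with hFOK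
  have hgoodM : ∀ K, K ⊆ DW → (good α M (β K) ↔ (FixedOK ∧
      (((v + K.card : ℕ) : ℝ) ≤ α a * ↑d ∧ ((t' + (w - K.card) : ℕ) : ℝ) ≤ α b * ↑d))) := by
    intro K hK
    constructor
    · intro h
      refine ⟨fun c hca hcb => ?_, ?_, ?_⟩
      · have h2 := h c
        unfold cnt at h2
        rwa [(hcntc c hca hcb K hK).1] at h2
      · have h2 := h a
        unfold cnt at h2
        rwa [hcntMa K hK, hcard1 K hK] at h2
      · have h2 := h b
        unfold cnt at h2
        rwa [hcntMb K hK, hcard2 K hK] at h2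
    · rintro ⟨h1, h2, h3⟩ c
      unfold cnt
      by_cases hca : c = a
      · subst hca; rwa [hcntMa K hK, hcard1 K hK]
      by_cases hcb : c = b
      · subst hcb; rwa [hcntMb K hK, hcard2 K hK]
      rw [(hcntc c hca hcb K hK).1]
      exact h1 c hca hcb
  have hgoodM' : ∀ K, K ⊆ DW → (good α M' (β K) ↔ (FixedOK ∧
      (((v + K.card + t' : ℕ) : ℝ) ≤ α a * ↑d ∧ ((w - K.card : ℕ) : ℝ) ≤ α b * ↑d))) := by
    intro K hK
    constructor
    · intro h
      refine ⟨fun c hca hcb => ?_, ?_, ?_⟩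
      · have h2 := h c
        unfold cnt at h2
        rwa [(hcntc c hca hcb K hK).2] at h2
      · have h2 := h a
        unfold cnt at h2
        rwa [hcntM'a K hK, hcard3 K hK] at h2
      · have h2 := h b
        unfold cnt at h2
        rwa [hcntM'b K hK, hcard4 K hK] at h2
    · rintro ⟨h1, h2, h3⟩ c
      unfold cnt
      by_cases hca : c = a
      · subst hca; rwa [hcntM'a K hK, hcard3 K hK]
      by_cases hcb : c = b
      · subst hcb; rwa [hcntM'b K hK, hcard4 K hK]
      rw [(hcntc c hca hcb K hK).2]
      exact h1 c hca hcb
  rw [hsumN M, hsumN M']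
  by_cases hfix : FixedOK
  swap
  · have hzM : ∀ K ∈ DW.powerset, (if good α M (β K) then w₀ else 0) = 0 := by
      intro K hKmem
      rw [if_neg]
      intro hg
      exact hfix ((hgoodM K (Finset.mem_powerset.mp hKmem)).mp hg).1
    have hzM' : ∀ K ∈ DW.powerset, (if good α M' (β K) then w₀ else 0) = 0 := by
      intro K hKmem
      rw [if_neg]
      intro hg
      exact hfix ((hgoodM' K (Finset.mem_powerset.mp hKmem)).mp hg).1
    rw [Finset.sum_congr rfl hzM, Finset.sum_congr rfl hzM']
  -- condition conversions
  have hcondM' : ∀ j : ℕ, j ≤ w →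
      ((((v + j + t' : ℕ) : ℝ) ≤ α a * ↑d ∧ ((w - j : ℕ) : ℝ) ≤ α b * ↑d) ↔
        ((v : ℝ) + t' + j ≤ α a * ↑d ∧ (w : ℝ) - j ≤ α a * ↑d)) := by
    intro j hj
    rw [← habα, Nat.cast_sub hj]
    push_cast
    constructor <;> (rintro ⟨h1, h2⟩; exact ⟨by linarith, by linarith⟩)
  have hcondM : ∀ j : ℕ, j ≤ w →
      ((((v + j : ℕ) : ℝ) ≤ α a * ↑d ∧ ((t' + (w - j) : ℕ) : ℝ) ≤ α b * ↑d) ↔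
        ((v : ℝ) + j ≤ α a * ↑d ∧ (t' : ℝ) + ((w : ℝ) - j) ≤ α a * ↑d)) := by
    intro j hj
    rw [← habα]
    push_cast [Nat.cast_sub hj]
    constructor <;> (rintro ⟨h1, h2⟩; exact ⟨by linarith, by linarith⟩)
  have eM' : ∑ K ∈ DW.powerset, (if good α M' (β K) then w₀ else 0)
      = ∑ j ∈ Finset.range (w + 1),
          (if (v : ℝ) + t' + j ≤ α a * ↑d ∧ (w : ℝ) - j ≤ α a * ↑d
            then (w.choose j : ℝ) else 0) * w₀ := by
    have step : ∀ K ∈ DW.powerset, (if good α M' (β K) then w₀ else 0)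
        = (fun j : ℕ => if ((v + j + t' : ℕ) : ℝ) ≤ α a * ↑d ∧ ((w - j : ℕ) : ℝ) ≤ α b * ↑d
            then w₀ else 0) K.card := by
      intro K hKmem
      have hK := Finset.mem_powerset.mp hKmem
      exact if_congr ((hgoodM' K hK).trans (and_iff_right hfix)) rfl rfl
    have e2 := Finset.sum_powerset_apply_card
      (f := fun j : ℕ => if ((v + j + t' : ℕ) : ℝ) ≤ α a * ↑d ∧ ((w - j : ℕ) : ℝ) ≤ α b * ↑d
        then w₀ else 0) (x := DW)
    rw [Finset.sum_congr rfl step, e2, ← hw]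
    refine Finset.sum_congr rfl fun j hj => ?_
    have hjw : j ≤ w := by
      have := Finset.mem_range.mp hj; omega

    rw [if_congr (hcondM' j hjw) rfl rfl]
    by_cases hc : (v : ℝ) + t' + j ≤ α a * ↑d ∧ (w : ℝ) - j ≤ α a * ↑d
    · rw [if_pos hc, if_pos hc, nsmul_eq_mul, mul_comm]
    · rw [if_neg hc, if_neg hc, smul_zero, zero_mul]
  have eM : ∑ K ∈ DW.powerset, (if good α M (β K) then w₀ else 0)
      = ∑ j ∈ Finset.range (w + 1),
          (if (v : ℝ) + j ≤ α a * ↑d ∧ (t' : ℝ) + ((w : ℝ) - j) ≤ α a * ↑d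
            then (w.choose j : ℝ) else 0) * w₀ := by
    have step : ∀ K ∈ DW.powerset, (if good α M (β K) then w₀ else 0)
        = (fun j : ℕ => if ((v + j : ℕ) : ℝ) ≤ α a * ↑d ∧ ((t' + (w - j) : ℕ) : ℝ) ≤ α b * ↑d
            then w₀ else 0) K.card := by
      intro K hKmem
      have hK := Finset.mem_powerset.mp hKmem
      exact if_congr ((hgoodM K hK).trans (and_iff_right hfix)) rfl rfl
    have e2 := Finset.sum_powerset_apply_card
      (f := fun j : ℕ => if ((v + j : ℕ) : ℝ) ≤ α a * ↑d ∧ ((t' + (w - j) : ℕ) : ℝ) ≤ α b * ↑d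
        then w₀ else 0) (x := DW)
    rw [Finset.sum_congr rfl step, e2, ← hw]
    refine Finset.sum_congr rfl fun j hj => ?_
    have hjw : j ≤ w := by
      have := Finset.mem_range.mp hj; omega

    rw [if_congr (hcondM j hjw) rfl rfl]
    by_cases hc : (v : ℝ) + j ≤ α a * ↑d ∧ (t' : ℝ) + ((w : ℝ) - j) ≤ α a * ↑d
    · rw [if_pos hc, if_pos hc, nsmul_eq_mul, mul_comm]
    · rw [if_neg hc, if_neg hc, smul_zero, zero_mul]
  rw [eM, eM', ← Finset.sum_mul, ← Finset.sum_mul]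
  exact mul_le_mul_of_nonneg_right (window_real w t' v (α a * ↑d)) hw₀


end Main

private lemma base_eq {ℓ d : ℕ} {C : Type*} [Fintype C] [DecidableEq C]
    (Λ : Fin ℓ → ℝ) (α : C → ℝ) (p : Fin ℓ → ℝ)
    (hpeq : ∀ i j, Λ i = Λ j → p i = p j)
    (M : Fin d → Fin ℓ → C) (hM : ∀ e, Function.Injective (M e) ∧ ∀ i, α (M e i) = Λ i)
    (L : Fin ℓ → C) (hL : Function.Injective L ∧ ∀ i, α (L i) = Λ i)
    (hrange : ∀ e i, M e i ∈ Set.range L) :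
    GS α p M = GS α p (fun _ : Fin d => L) := by
  classical
  have hψex : ∀ e j, ∃ x, M e x = L j := by
    intro e j
    have h1 : Finset.univ.image (M e) ⊆ Finset.univ.image L := by
      intro c hc
      simp only [Finset.mem_image, Finset.mem_univ, true_and] at hc ⊢
      obtain ⟨i, rfl⟩ := hc
      obtain ⟨j', hj'⟩ := hrange e i
      exact ⟨j', hj'⟩
    have hcard : (Finset.univ.image L).card ≤ (Finset.univ.image (M e)).card := by
      rw [Finset.card_image_of_injective _ hL.1, Finset.card_image_of_injective _ (hM e).1]
    have heq := Finset.eq_of_subset_of_card_le h1 hcard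
    have : L j ∈ Finset.univ.image (M e) := by
      rw [heq]
      exact Finset.mem_image_of_mem L (Finset.mem_univ j)
    obtain ⟨x, _, hx⟩ := Finset.mem_image.mp this
    exact ⟨x, hx⟩
  choose ψ hψ using hψex
  set Φ : (Fin d → Fin ℓ) → (Fin d → Fin ℓ) := fun f e => ψ e (f e) with hΦ
  have hψinj : ∀ e, Function.Injective (ψ e) := by
    intro e x y hxy
    apply hL.1
    rw [← hψ e x, ← hψ e y, hxy]
  have hΦinj : Function.Injective Φ := by
    intro f g h
    funext e
    exact hψinj e (congrFun h e)
  have hΦbij : Function.Bijective Φ := Finite.injective_iff_bijective.mp hΦinj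
  have hsum := Function.Bijective.sum_comp hΦbij
    (fun f => {g : Fin d → Fin ℓ | good α M g}.indicator (WT p) f)
  show (∑ f : Fin d → Fin ℓ, {g : Fin d → Fin ℓ | good α M g}.indicator (WT p) f) = _
  rw [← hsum]
  apply Finset.sum_congr rfl
  intro f _
  have hΛψ : ∀ e j, Λ (ψ e j) = Λ j := by
    intro e j
    rw [← (hM e).2 (ψ e j), hψ e j, hL.2 j]
  have hgood : good α M (Φ f) ↔ good α (fun _ : Fin d => L) f := by
    constructor <;> intro h c <;> have h2 := h c <;>
      [skip; skip] <;> (unfold cnt at h2 ⊢)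
    · have hset : (Finset.univ.filter fun e => (fun _ => L) e (f e) = c)
          = (Finset.univ.filter fun e => M e (Φ f e) = c) := by
        apply Finset.filter_congr
        intro e _
        rw [hΦ]
        simp only [hψ e (f e)]
      rwa [hset]
    · have hset : (Finset.univ.filter fun e => M e (Φ f e) = c)
          = (Finset.univ.filter fun e => (fun _ => L) e (f e) = c) := by
        apply Finset.filter_congr
        intro e _
        rw [hΦ]
        simp only [hψ e (f e)]
      rwa [hset]
  have hWTeq : WT p (Φ f) = WT p f := by
    show (∏ e, p (Φ f e)) = ∏ e, p (f e)
    apply Finset.prod_congr rfl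
    intro e _
    exact hpeq _ _ (hΛψ e (f e))
  rw [Set.indicator_apply, Set.indicator_apply]
  simp only [Set.mem_setOf_eq]
  exact if_congr hgood hWTeq rfl

private lemma GS_const_le {ℓ d : ℕ} {C : Type*} [Fintype C] [DecidableEq C]
    (hℓ : 0 < ℓ) (Λ : Fin ℓ → ℝ) (α : C → ℝ) (p : Fin ℓ → ℝ)
    (hp0 : ∀ i, 0 ≤ p i) (hpeq : ∀ i j, Λ i = Λ j → p i = p j)
    (L : Fin ℓ → C) (hL : Function.Injective L ∧ ∀ i, α (L i) = Λ i) :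
    ∀ (n : ℕ) (M : Fin d → Fin ℓ → C),
      (∀ e, Function.Injective (M e) ∧ ∀ i, α (M e i) = Λ i) →
      (∑ e, (Finset.univ.filter (fun i => M e i ∉ Set.range L)).card) = n →
      GS α p (fun _ : Fin d => L) ≤ GS α p M := by
  intro n
  induction n using Nat.strong_induction_on with
  | _ n ih =>
    intro M hM hpot
    by_cases h0 : ∀ e i, M e i ∈ Set.range L
    · exact le_of_eq (base_eq Λ α p hpeq M hM L hL h0).symm
    · push_neg at h0
      obtain ⟨e₀, i₀, hbnotin⟩ := h0
      set b := M e₀ i₀ with hbdef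
      -- find a suitable colour a
      set At := (Finset.univ.filter (fun j : Fin ℓ => Λ j = Λ i₀)).image L with hAt
      set Bt := (Finset.univ.filter (fun j : Fin ℓ => Λ j = Λ i₀)).image (M e₀) with hBt
      have hbBt : b ∈ Bt := by
        rw [hBt]
        exact Finset.mem_image_of_mem _ (Finset.mem_filter.mpr ⟨Finset.mem_univ _, rfl⟩)
      have hbAt : b ∉ At := by
        rw [hAt]
        intro hcon
        obtain ⟨j, _, hj⟩ := Finset.mem_image.mp hcon
        exact hbnotin ⟨j, hj⟩
      have hcards : At.card = Bt.card := by
        rw [hAt, hBt, Finset.card_image_of_injective _ hL.1,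
          Finset.card_image_of_injective _ (hM e₀).1]
      have hex : ∃ a ∈ At, a ∉ Bt := by
        by_contra hcon
        push_neg at hcon
        have hsub : At ⊆ Bt := hcon
        have := Finset.eq_of_subset_of_card_le hsub (le_of_eq hcards.symm)
        rw [this] at hbAt
        exact hbAt hbBt
      obtain ⟨a, haAt, haBt⟩ := hex
      obtain ⟨j₀, hj₀mem, hj₀⟩ := Finset.mem_image.mp (hAt ▸ haAt)
      have hΛj₀ : Λ j₀ = Λ i₀ := (Finset.mem_filter.mp hj₀mem).2
      have haL : a ∈ Set.range L := ⟨j₀, hj₀⟩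
      have hanotM : ¬∃ x, M e₀ x = a := by
        rintro ⟨x, hx⟩
        apply haBt
        rw [hBt]
        apply Finset.mem_image.mpr
        refine ⟨x, Finset.mem_filter.mpr ⟨Finset.mem_univ _, ?_⟩, hx⟩
        -- Λ x = Λ i₀
        have h1 : α (M e₀ x) = Λ x := (hM e₀).2 x
        have h2 : α a = Λ j₀ := by rw [← hj₀]; exact hL.2 j₀
        rw [hx] at h1
        rw [← h1, h2, hΛj₀]
      have hab : a ≠ b := by
        intro hcon
        rw [hcon] at haL
        exact hbnotin haL
      have habα : α a = α b := by
        have h2 : α a = Λ j₀ := by rw [← hj₀]; exact hL.2 j₀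
        have h3 : α b = Λ i₀ := (hM e₀).2 i₀
        rw [h2, h3, hΛj₀]
      set M' := shiftFam M a b with hM'
      -- M' is still a Λ-family
      have hM'fam : ∀ e, Function.Injective (M' e) ∧ ∀ i, α (M' e i) = Λ i := by
        intro e
        constructor
        · intro x y hxy
          by_cases hc1 : ((∃ x, M e x = b) ∧ ¬(∃ x, M e x = a)) ∧ M e x = b <;>
            by_cases hc2 : ((∃ x, M e x = b) ∧ ¬(∃ x, M e x = a)) ∧ M e y = b <;>
            rw [hM'] at hxy <;>
            unfold shiftFam at hxy
          · rw [if_pos hc1, if_pos hc2] at hxy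
            exact (hM e).1 (hc1.2.trans hc2.2.symm)
          · rw [if_pos hc1, if_neg hc2] at hxy
            exact absurd ⟨y, hxy.symm⟩ hc1.1.2
          · rw [if_neg hc1, if_pos hc2] at hxy
            exact absurd ⟨x, hxy⟩ hc2.1.2
          · rw [if_neg hc1, if_neg hc2] at hxy
            exact (hM e).1 hxy
        · intro i
          rw [hM']
          unfold shiftFam
          by_cases hc : ((∃ x, M e x = b) ∧ ¬(∃ x, M e x = a)) ∧ M e i = b
          · rw [if_pos hc, habα, ← hc.2]
            exact (hM e).2 i
          · rw [if_neg hc]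
            exact (hM e).2 i
      -- potential strictly decreases
      have hsub : ∀ e, (Finset.univ.filter (fun i => M' e i ∉ Set.range L))
          ⊆ (Finset.univ.filter (fun i => M e i ∉ Set.range L)) := by
        intro e i hi
        simp only [Finset.mem_filter, Finset.mem_univ, true_and] at hi ⊢
        intro hcon
        apply hi
        rw [hM']
        unfold shiftFam
        by_cases hc : ((∃ x, M e x = b) ∧ ¬(∃ x, M e x = a)) ∧ M e i = b
        · rw [if_pos hc]; exact haL
        · rw [if_neg hc]; exact hcon
      have hstrict : (Finset.univ.filter (fun i => M' e₀ i ∉ Set.range L)).card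
          < (Finset.univ.filter (fun i => M e₀ i ∉ Set.range L)).card := by
        apply Finset.card_lt_card
        rw [Finset.ssubset_iff_of_subset (hsub e₀)]
        refine ⟨i₀, ?_, ?_⟩
        · simp only [Finset.mem_filter, Finset.mem_univ, true_and]
          exact hbnotin
        · simp only [Finset.mem_filter, Finset.mem_univ, true_and, not_not]
          rw [hM']
          unfold shiftFam
          rw [if_pos ⟨⟨⟨i₀, rfl⟩, hanotM⟩, rfl⟩]
          exact haL
      have hpot' : (∑ e, (Finset.univ.filter (fun i => M' e i ∉ Set.range L)).card) < n := by
        rw [← hpot]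
        exact Finset.sum_lt_sum (fun e _ => Finset.card_le_card (hsub e))
          ⟨e₀, Finset.mem_univ _, hstrict⟩
      calc GS α p (fun _ : Fin d => L)
          ≤ GS α p M' := ih _ hpot' M' hM'fam rfl
        _ ≤ GS α p M := shift_le hℓ Λ α p hp0 hpeq M hM a b hab habα


/-- Among all `Λ`-families of lists on the edges incident with a fixed
vertex of degree `d`, the probability (under independent choices, where the `i`-th colour
of a list is drawn with probability `pᵢ`) that some colour `c` is chosen more than
`α(c)·d` times is maximised when all the lists are equal. -/
theorem prob_majority_violation_le_uniform_lists
    (ℓ d : ℕ) (hℓ : 0 < ℓ) (hd : 0 < d)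
    (C : Type*) [Fintype C] [DecidableEq C]
    (Λ : Fin ℓ → ℝ) (hΛ : ∀ i, Λ i ∈ Set.Ioo (0 : ℝ) 1)
    (α : C → ℝ) (hα : ∀ c, α c ∈ Set.Ioo (0 : ℝ) 1)
    (p : Fin ℓ → ℝ) (hp0 : ∀ i, 0 ≤ p i) (hp1 : ∑ i, p i = 1)
    (hpΛ : ∀ i, p i < Λ i) (hpeq : ∀ i j, Λ i = Λ j → p i = p j)
    (Lfam : Fin d → Fin ℓ → C)
    (hfam : ∀ e, Function.Injective (Lfam e) ∧ ∀ i, α (Lfam e i) = Λ i)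
    (L : Fin ℓ → C) (hL : Function.Injective L ∧ ∀ i, α (L i) = Λ i) :
    ∑ f : Fin d → Fin ℓ,
        Set.indicator
          {f : Fin d → Fin ℓ | ∃ c : C,
            α c * d < ((Finset.univ.filter fun e => Lfam e (f e) = c).card : ℝ)}
          (fun f => ∏ e, p (f e)) f ≤
      ∑ f : Fin d → Fin ℓ,
        Set.indicator
          {f : Fin d → Fin ℓ | ∃ c : C,
            α c * d < ((Finset.univ.filter fun e => L (f e) = c).card : ℝ)}
          (fun f => ∏ e, p (f e)) f := by
  classical
  have hBad : ∀ (N : Fin d → Fin ℓ → C) (f : Fin d → Fin ℓ),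
      Set.indicator
          {f : Fin d → Fin ℓ | ∃ c : C,
            α c * d < ((Finset.univ.filter fun e => N e (f e) = c).card : ℝ)}
          (fun f => ∏ e, p (f e)) f
        = (∏ e, p (f e)) - {g : Fin d → Fin ℓ | good α N g}.indicator (WT p) f := by
    intro N f
    rw [Set.indicator_apply, Set.indicator_apply]
    simp only [Set.mem_setOf_eq]
    by_cases h : good α N f
    · have hnb : ¬∃ c : C,
          α c * d < ((Finset.univ.filter fun e => N e (f e) = c).card : ℝ) := by
        push_neg
        intro c
        exact h c
      rw [if_neg hnb, if_pos h]
      show (0 : ℝ) = (∏ e, p (f e)) - ∏ e, p (f e)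
      rw [sub_self]
    · have hb : ∃ c : C,
          α c * d < ((Finset.univ.filter fun e => N e (f e) = c).card : ℝ) := by
        by_contra hnb
        push_neg at hnb
        exact h (fun c => hnb c)
      rw [if_pos hb, if_neg h, sub_zero]
  have hsplit : ∀ N : Fin d → Fin ℓ → C,
      (∑ f : Fin d → Fin ℓ,
        Set.indicator
          {f : Fin d → Fin ℓ | ∃ c : C,
            α c * d < ((Finset.univ.filter fun e => N e (f e) = c).card : ℝ)}
          (fun f => ∏ e, p (f e)) f)
        = (∑ f : Fin d → Fin ℓ, ∏ e, p (f e)) - GS α p N := by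
    intro N
    rw [show GS α p N =
        ∑ f : Fin d → Fin ℓ, {g : Fin d → Fin ℓ | good α N g}.indicator (WT p) f from rfl,
      ← Finset.sum_sub_distrib]
    exact Finset.sum_congr rfl (fun f _ => hBad N f)
  have hGSle : GS α p (fun _ : Fin d => L) ≤ GS α p Lfam :=
    GS_const_le hℓ Λ α p hp0 hpeq L hL
      (∑ e, (Finset.univ.filter (fun i => Lfam e i ∉ Set.range L)).card) Lfam hfam rfl
  have key : (∑ f : Fin d → Fin ℓ, ∏ e, p (f e)) - GS α p Lfam
      ≤ (∑ f : Fin d → Fin ℓ, ∏ e, p (f e)) - GS α p (fun _ : Fin d => L) := by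
    linarith
  rw [hsplit Lfam]
  exact key.trans_eq (hsplit (fun _ : Fin d => L)).symm
end
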